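/- arXiv:0912.0223 — 9 statements merged into one kernel-verified Lean document; each statement's English description precedes it below -/
import Mathlib

section
/- Let k ≥ 1 and let x, y ∈ E with ‖x‖ ≠ ‖y‖ (so in particular x ≠ y). Suppose y* ∈ E satisfies ‖y*‖ = ‖y‖, y* ≠ y, and y* lies on the line through x and y (i.e. y* = x + t • (y − x) for some real t). Then |‖x‖² − ‖y‖²| / ‖x − y‖² = ‖x − y*‖ / ‖x − y‖. (Geometric interpretation of the two dimensional Poisson kernel: ω(x,y) = l/q, where q = |x−y| and l = |x−y*| with y* the second intersection of the line xy with the sphere of radius ‖y‖ centered at the origin.) -/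
open MeasureTheory RealInnerProductSpace

/-- Geometric interpretation of the two-dimensional Poisson kernel:
`ω(x,y) = |‖x‖² − ‖y‖²| / ‖x − y‖² = l/q`, where `q = ‖x − y‖` and `l = ‖x − y*‖`,
with `y*` the second intersection of the line through `x` and `y` with the sphere
of radius `‖y‖` centered at the origin. -/
theorem poisson_kernel_geometric_interpretation
    (k : ℕ) (hk : 1 ≤ k) (x y ystar : EuclideanSpace ℝ (Fin (k + 1)))
    (hxy : ‖x‖ ≠ ‖y‖) (hys : ‖ystar‖ = ‖y‖) (hne : ystar ≠ y)
    (hline : ∃ t : ℝ, ystar = x + t • (y - x)) :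
    |‖x‖ ^ 2 - ‖y‖ ^ 2| / ‖x - y‖ ^ 2 = ‖x - ystar‖ / ‖x - y‖ := by
  obtain ⟨t, ht⟩ := hline
  have hxyne : x ≠ y := fun h => hxy (by rw [h])
  have hd : y - x ≠ 0 := sub_ne_zero.mpr (Ne.symm hxyne)
  have hq : (0:ℝ) < ‖y - x‖ := norm_pos_iff.mpr hd
  set a : ℝ := (inner ℝ x (y - x) : ℝ) with ha
  set q : ℝ := ‖y - x‖ ^ 2 with hqdef
  have hqpos : (0:ℝ) < q := by positivity
  have expand : ∀ s : ℝ, ‖x + s • (y - x)‖ ^ 2 = ‖x‖ ^ 2 + 2 * (s * a) + s ^ 2 * q := by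
    intro s
    rw [norm_add_sq_real, real_inner_smul_right, norm_smul, mul_pow, Real.norm_eq_abs, sq_abs, ← ha, ← hqdef]
  have e1 : ‖x‖ ^ 2 + 2 * (t * a) + t ^ 2 * q = ‖y‖ ^ 2 := by
    rw [← expand t, ← ht, hys]
  have e2 : ‖x‖ ^ 2 + 2 * (1 * a) + 1 ^ 2 * q = ‖y‖ ^ 2 := by
    rw [← expand 1]
    norm_num
  have htne : t ≠ 1 := by
    intro h
    apply hne
    rw [ht, h, one_smul]
    abel
  have hfac : (t - 1) * (2 * a + (t + 1) * q) = 0 := by nlinarith [e1, e2]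
  have h2a : 2 * a = -((t + 1) * q) := by
    rcases mul_eq_zero.mp hfac with h | h
    · exact absurd (sub_eq_zero.mp h) htne
    · linarith
  have hkey : ‖x‖ ^ 2 - ‖y‖ ^ 2 = t * q := by nlinarith [e1, h2a]
  have hnorm : ‖x - ystar‖ = |t| * ‖y - x‖ := by
    rw [ht]
    have : x - (x + t • (y - x)) = (-t) • (y - x) := by
      rw [neg_smul]; abel
    rw [this, norm_smul]
    simp
  have hxyq : ‖x - y‖ = ‖y - x‖ := norm_sub_rev x y
  rw [hnorm, hxyq, hkey, abs_mul, abs_of_pos hqpos]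
  rw [hqdef]
  field_simp
end

section
/- Let k ≥ 1, let x, y ∈ E with y ≠ 0, let c ∈ ℝ with c ≠ 1, and set T = c • y (a point on the line through the origin and y, T ≠ y). If ‖x − T‖ = ‖T − y‖ and x ≠ y, then |‖x‖² − ‖y‖²| / ‖x − y‖² = ‖T‖ / ‖T − y‖. In other words, ω(·, y) is constant, with value ‖T‖/‖T−y‖, on the sphere centered at T of radius ‖T − y‖ (which is tangent to the sphere of radius ‖y‖ at the point y), punctured at y. -/
open MeasureTheory

open scoped RealInnerProductSpace

/-- `ω(·, y)` is constant, with value `‖T‖ / ‖T − y‖`, on the sphere centered at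
`T = c • y` (a point on the line `Oy`, `T ≠ y`) of radius `‖T − y‖`, punctured at `y`. -/
theorem omega_constant_on_tangent_sphere
    (k : ℕ) (hk : 1 ≤ k) (x y : EuclideanSpace ℝ (Fin (k + 1))) (hy : y ≠ 0)
    (c : ℝ) (hc : c ≠ 1)
    (hsphere : ‖x - c • y‖ = ‖c • y - y‖) (hxy : x ≠ y) :
    |‖x‖ ^ 2 - ‖y‖ ^ 2| / ‖x - y‖ ^ 2 = ‖c • y‖ / ‖c • y - y‖ := by
  have hb : (0:ℝ) < ‖y‖ := norm_pos_iff.mpr hy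
  set a := (inner ℝ x y : ℝ) with ha
  have hT : c • y - y = (c - 1) • y := by rw [sub_smul, one_smul]
  have hc1 : c - 1 ≠ 0 := sub_ne_zero.mpr hc
  have hsq : ‖x - c • y‖ ^ 2 = ‖c • y - y‖ ^ 2 := by rw [hsphere]
  have e1 : ‖x - c • y‖ ^ 2 = ‖x‖ ^ 2 - 2 * (c * a) + c ^ 2 * ‖y‖ ^ 2 := by
    rw [norm_sub_sq_real, real_inner_smul_right, norm_smul, Real.norm_eq_abs,
      mul_pow, sq_abs]
  have e2 : ‖c • y - y‖ ^ 2 = (c - 1) ^ 2 * ‖y‖ ^ 2 := by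
    rw [hT, norm_smul, mul_pow]
    simp [Real.norm_eq_abs, sq_abs]
  have key1 : ‖x‖ ^ 2 - ‖y‖ ^ 2 = 2 * c * (a - ‖y‖ ^ 2) := by
    have := hsq
    rw [e1, e2] at this
    nlinarith [this]
  have e3 : ‖x - y‖ ^ 2 = ‖x‖ ^ 2 - 2 * a + ‖y‖ ^ 2 := by
    rw [norm_sub_sq_real]
  have key2 : ‖x - y‖ ^ 2 = 2 * ((c - 1) * (a - ‖y‖ ^ 2)) := by
    rw [e3]; nlinarith [key1]
  have hpos : (0:ℝ) < ‖x - y‖ ^ 2 :=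
    pow_pos (norm_sub_pos_iff.mpr hxy) 2
  have hcab : 0 < (c - 1) * (a - ‖y‖ ^ 2) := by linarith [key2 ▸ hpos]
  have hab : a - ‖y‖ ^ 2 ≠ 0 := by
    intro h; rw [h, mul_zero] at hcab; exact lt_irrefl 0 hcab
  have habs : |c - 1| * |a - ‖y‖ ^ 2| = (c - 1) * (a - ‖y‖ ^ 2) := by
    rw [← abs_mul, abs_of_pos hcab]
  have hnum : |‖x‖ ^ 2 - ‖y‖ ^ 2| = 2 * |c| * |a - ‖y‖ ^ 2| := by
    rw [key1, abs_mul, abs_mul]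
    norm_num
  have hNy : ‖c • y‖ = |c| * ‖y‖ := norm_smul c y
  have hNT : ‖c • y - y‖ = |c - 1| * ‖y‖ := by rw [hT, norm_smul]; rfl
  rw [hnum, key2, hNy, hNT, ← habs]
  have habne : |a - ‖y‖ ^ 2| ≠ 0 := abs_ne_zero.mpr hab
  have hc1ne : |c - 1| ≠ 0 := abs_ne_zero.mpr hc1
  field_simp
end

section
/- (Sphere exchange rule.) Let k ≥ 1, let r, R > 0, let x, y ∈ E with ‖x‖ = r and ‖y‖ = R, and let g : ℝ → ℝ be continuous on the interval [|R − r|, R + r]. Then R^k · ∫_{x₁ ∈ S^k(r)} g(‖x₁ − y‖) dμH[k](x₁) = r^k · ∫_{y₁ ∈ S^k(R)} g(‖x − y₁‖) dμH[k](y₁). -/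
open MeasureTheory
open scoped RealInnerProductSpace NNReal ENNReal Pointwise

/-- Change-of-variables measure lemma: pushing forward the Hausdorff measure restricted to the
sphere of radius `r` under `v ↦ c • T v` (with `T` a linear isometry equivalence and `c = R/r`)
gives a scalar multiple of the Hausdorff measure restricted to the sphere of radius `R`. -/
theorem sphere_map_haus
    (k : ℕ) (r R : ℝ) (hr : 0 < r) (hR : 0 < R)
    (T : EuclideanSpace ℝ (Fin (k + 1)) ≃ₗᵢ[ℝ] EuclideanSpace ℝ (Fin (k + 1))) :
    Measure.map (fun v => (R / r) • T v)
        (μH[k].restrict (Metric.sphere (0 : EuclideanSpace ℝ (Fin (k + 1))) r))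
      = ((‖(R / r : ℝ)⁻¹‖₊ ^ (k : ℝ) : ℝ≥0) : ℝ≥0∞) •
          μH[k].restrict (Metric.sphere (0 : EuclideanSpace ℝ (Fin (k + 1))) R) := by
  set c : ℝ := R / r with hc
  have hcpos : 0 < c := div_pos hR hr
  have hφcont : Continuous fun v : EuclideanSpace ℝ (Fin (k + 1)) => c • T v :=
    (continuous_const_smul c).comp T.continuous
  refine Measure.ext fun A hA => ?_
  rw [Measure.map_apply hφcont.measurable hA,
    Measure.restrict_apply (hφcont.measurable hA), Measure.smul_apply,
    Measure.restrict_apply hA]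
  have hsph : (fun v => c • T v) ⁻¹' A ∩ Metric.sphere 0 r
      = (fun v => c • T v) ⁻¹' (A ∩ Metric.sphere 0 R) := by
    ext v
    simp only [Set.mem_inter_iff, Set.mem_preimage, mem_sphere_zero_iff_norm]
    have hn : ‖c • T v‖ = c * ‖v‖ := by
      rw [norm_smul, T.norm_map, Real.norm_eq_abs, abs_of_pos hcpos]
    constructor
    · rintro ⟨hAv, hv⟩
      refine ⟨hAv, ?_⟩
      rw [hn, hv, hc]; field_simp
    · rintro ⟨hAv, hv⟩
      refine ⟨hAv, ?_⟩
      rw [hn] at hv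
      have : c * ‖v‖ = c * r := by rw [hv, hc]; field_simp
      exact mul_left_cancel₀ hcpos.ne' this
  rw [hsph]
  have hpre : (fun v => c • T v) ⁻¹' (A ∩ Metric.sphere 0 R)
      = ⇑T ⁻¹' (c⁻¹ • (A ∩ Metric.sphere 0 R)) := by
    ext v
    simp only [Set.mem_preimage]
    rw [Set.mem_inv_smul_set_iff₀ hcpos.ne']
  rw [hpre]
  have hiso : μH[(k : ℝ)] (⇑T ⁻¹' (c⁻¹ • (A ∩ Metric.sphere 0 R)))
      = μH[(k : ℝ)] (c⁻¹ • (A ∩ Metric.sphere 0 R)) := by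
    rw [T.isometry.hausdorffMeasure_preimage (Or.inr T.surjective),
      T.surjective.range_eq, Set.inter_univ]
  rw [hiso, Measure.hausdorffMeasure_smul₀ (by positivity : (0:ℝ) ≤ (k:ℝ))
    (inv_ne_zero hcpos.ne') (A ∩ Metric.sphere 0 R), ENNReal.smul_def, smul_eq_mul]

/-- Sphere exchange rule:
`R^k ∫_{S^k(r)} g(‖x₁ − y‖) = r^k ∫_{S^k(R)} g(‖x − y₁‖)` for `‖x‖ = r`, `‖y‖ = R`. -/
theorem sphere_exchange_rule
    (k : ℕ) (hk : 1 ≤ k) (r R : ℝ) (hr : 0 < r) (hR : 0 < R)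
    (x y : EuclideanSpace ℝ (Fin (k + 1))) (hx : ‖x‖ = r) (hy : ‖y‖ = R)
    (g : ℝ → ℝ) (hg : ContinuousOn g (Set.Icc |R - r| (R + r))) :
    R ^ k * ∫ x₁ in Metric.sphere (0 : EuclideanSpace ℝ (Fin (k + 1))) r,
        g ‖x₁ - y‖ ∂μH[k]
      = r ^ k * ∫ y₁ in Metric.sphere (0 : EuclideanSpace ℝ (Fin (k + 1))) R,
        g ‖x - y₁‖ ∂μH[k] := by
  set c : ℝ := R / r with hc
  have hcpos : 0 < c := div_pos hR hr
  have hcr : c * r = R := by rw [hc]; field_simp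
  have hnorm : ‖y‖ = ‖c • x‖ := by
    rw [norm_smul, Real.norm_eq_abs, abs_of_pos hcpos, hx, hcr, hy]
  set T : EuclideanSpace ℝ (Fin (k + 1)) ≃ₗᵢ[ℝ] EuclideanSpace ℝ (Fin (k + 1)) := Submodule.reflection (ℝ ∙ (y - c • x))ᗮ with hT
  have hTy : T y = c • x := Submodule.reflection_sub hnorm
  have hTT : ∀ v : EuclideanSpace ℝ (Fin (k + 1)), T (T v) = v := fun v => Submodule.reflection_reflection _ v
  have hTx : T x = c⁻¹ • y := by
    have h1 : T (c • x) = y := by rw [← hTy, hTT]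
    have h2 : c • T x = y := by rw [← h1, T.map_smul]
    rw [← h2, smul_smul, inv_mul_cancel₀ hcpos.ne', one_smul]
  -- pointwise identity on the sphere of radius r
  have hkey : ∀ v : EuclideanSpace ℝ (Fin (k + 1)), ‖v‖ = r → ‖x - c • T v‖ = ‖v - y‖ := by
    intro v hv
    have hinner : ⟪x, c • T v⟫ = ⟪v, y⟫ := by
      have h1 : ⟪x, T v⟫ = ⟪T x, v⟫ := by
        conv_rhs => rw [← hTT v]
        rw [T.inner_map_map]
      rw [real_inner_smul_right, h1, hTx, real_inner_smul_left, ← mul_assoc,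
        mul_inv_cancel₀ hcpos.ne', one_mul, real_inner_comm]
    have hcn : ‖c • T v‖ = R := by
      rw [norm_smul, T.norm_map, Real.norm_eq_abs, abs_of_pos hcpos, hv, hcr]
    have hsq : ‖x - c • T v‖ ^ 2 = ‖v - y‖ ^ 2 := by
      rw [norm_sub_sq_real, norm_sub_sq_real, hinner, hx, hv, hcn, hy]
    rw [← Real.sqrt_sq (norm_nonneg (x - c • T v)), ← Real.sqrt_sq (norm_nonneg (v - y)), hsq]
  -- the map and its measure behavior
  have hmap := sphere_map_haus k r R hr hR T
  set κ : ℝ≥0∞ := ((‖(c : ℝ)⁻¹‖₊ ^ (k : ℝ) : ℝ≥0) : ℝ≥0∞) with hκ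
  have hκtoReal : κ.toReal = (r / R) ^ k := by
    rw [hκ, ENNReal.coe_toReal, NNReal.coe_rpow, coe_nnnorm, Real.norm_eq_abs,
      abs_of_pos (inv_pos.mpr hcpos), Real.rpow_natCast]
    rw [hc, inv_div]
  have hφcont : Continuous fun v : EuclideanSpace ℝ (Fin (k + 1)) => c • T v := (continuous_const_smul c).comp T.continuous
  -- measurability of the integrand on the sphere of radius R
  have hmapsTo : Set.MapsTo (fun w : EuclideanSpace ℝ (Fin (k + 1)) => ‖x - w‖) (Metric.sphere (0 : EuclideanSpace ℝ (Fin (k + 1))) R)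
      (Set.Icc |R - r| (R + r)) := by
    intro w hw
    rw [mem_sphere_zero_iff_norm] at hw
    constructor
    · calc |R - r| = |r - R| := abs_sub_comm _ _
        _ = |‖x‖ - ‖w‖| := by rw [hx, hw]
        _ ≤ ‖x - w‖ := abs_norm_sub_norm_le _ _
    · calc ‖x - w‖ ≤ ‖x‖ + ‖w‖ := norm_sub_le _ _
        _ = R + r := by rw [hx, hw]; ring
  have hcontOn : ContinuousOn (fun w : EuclideanSpace ℝ (Fin (k + 1)) => g ‖x - w‖) (Metric.sphere (0 : EuclideanSpace ℝ (Fin (k + 1))) R) :=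
    hg.comp ((continuous_const.sub continuous_id).norm).continuousOn hmapsTo
  have hmeasSph : MeasurableSet (Metric.sphere (0 : EuclideanSpace ℝ (Fin (k + 1))) R) :=
    Metric.isClosed_sphere.measurableSet
  have haesm : AEStronglyMeasurable (fun w : EuclideanSpace ℝ (Fin (k + 1)) => g ‖x - w‖)
      (μH[k].restrict (Metric.sphere (0 : EuclideanSpace ℝ (Fin (k + 1))) R)) :=
    hcontOn.aestronglyMeasurable hmeasSph
  have haesm' : AEStronglyMeasurable (fun w : EuclideanSpace ℝ (Fin (k + 1)) => g ‖x - w‖)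
      (Measure.map (fun v => c • T v) (μH[k].restrict (Metric.sphere (0 : EuclideanSpace ℝ (Fin (k + 1))) r))) := by
    rw [hmap]
    exact haesm.mono_ac Measure.smul_absolutelyContinuous
  -- the chain of integral identities
  have h1 : ∫ v in Metric.sphere (0 : EuclideanSpace ℝ (Fin (k + 1))) r, g ‖v - y‖ ∂μH[k]
      = ∫ v in Metric.sphere (0 : EuclideanSpace ℝ (Fin (k + 1))) r, g ‖x - c • T v‖ ∂μH[k] := by
    refine setIntegral_congr_fun Metric.isClosed_sphere.measurableSet fun v hv => ?_
    rw [mem_sphere_zero_iff_norm] at hv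
    rw [hkey v hv]
  have h2 : ∫ v in Metric.sphere (0 : EuclideanSpace ℝ (Fin (k + 1))) r, g ‖x - c • T v‖ ∂μH[k]
      = ∫ w, g ‖x - w‖ ∂(Measure.map (fun v => c • T v)
          (μH[k].restrict (Metric.sphere (0 : EuclideanSpace ℝ (Fin (k + 1))) r))) :=
    (integral_map hφcont.measurable.aemeasurable haesm').symm
  have h3 : ∫ w, g ‖x - w‖ ∂(Measure.map (fun v => c • T v)
        (μH[k].restrict (Metric.sphere (0 : EuclideanSpace ℝ (Fin (k + 1))) r)))
      = κ.toReal * ∫ w in Metric.sphere (0 : EuclideanSpace ℝ (Fin (k + 1))) R, g ‖x - w‖ ∂μH[k] := by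
    rw [hmap, integral_smul_measure, smul_eq_mul]
  rw [h1, h2, h3, hκtoReal]
  have hR0 : (R : ℝ) ≠ 0 := hR.ne'
  field_simp [div_pow]
  rw [← mul_pow, show R * (r / R) = r by field_simp]; ring
end

section
/- Let k ≥ 1, R > 0, and x ∈ E with ‖x‖ ≠ R. If α, β ∈ ℂ satisfy α + β = 2k, then ∫_{y ∈ S^k(R)} (‖x − y‖ : ℂ)^{−α} dμH[k](y) = (|R² − ‖x‖²| : ℂ)^{(β−α)/2} · ∫_{y ∈ S^k(R)} (‖x − y‖ : ℂ)^{−β} dμH[k](y), where all powers are complex powers (Complex.cpow) of positive real bases. -/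
open MeasureTheory

open MeasureTheory Metric Set
open scoped RealInnerProductSpace ENNReal NNReal

noncomputable section
namespace NPR

variable {F : Type*} [NormedAddCommGroup F] [InnerProductSpace ℝ F]

/-- Inversion centered at `x` with (signed) power `p`. -/
def J (p : ℝ) (x : F) (y : F) : F := x + (p * (‖y - x‖ ^ 2)⁻¹) • (y - x)

lemma J_sub_x (p : ℝ) (x y : F) : J p x y - x = (p * (‖y - x‖ ^ 2)⁻¹) • (y - x) := by
  simp [J]

lemma J_x (p : ℝ) (x : F) : J p x x = x := by simp [J]

lemma norm_J_sub_x (p : ℝ) (x : F) {y : F} (hy : y ≠ x) :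
    ‖J p x y - x‖ = |p| / ‖y - x‖ := by
  have h : ‖y - x‖ ≠ 0 := by
    simpa [sub_eq_zero] using hy
  rw [J_sub_x, norm_smul, Real.norm_eq_abs, abs_mul, abs_inv, abs_pow, abs_norm]
  field_simp

lemma J_ne_x {p : ℝ} (hp : p ≠ 0) (x : F) {y : F} (hy : y ≠ x) : J p x y ≠ x := by
  intro h
  have h0 : ‖y - x‖ ≠ 0 := by simpa [sub_eq_zero] using hy
  have := norm_J_sub_x p x hy
  rw [h, sub_self, norm_zero] at this
  have : |p| / ‖y - x‖ ≠ 0 := by positivity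
  exact this (norm_J_sub_x p x hy ▸ by rw [h, sub_self, norm_zero])

lemma J_J {p : ℝ} (hp : p ≠ 0) (x : F) {y : F} (hy : y ≠ x) : J p x (J p x y) = y := by
  have h0 : ‖y - x‖ ≠ 0 := by simpa [sub_eq_zero] using hy
  have h1 : J p x (J p x y) - x = (p * (‖J p x y - x‖ ^ 2)⁻¹) • (J p x y - x) := J_sub_x ..
  have h2 : ‖J p x y - x‖ = |p| / ‖y - x‖ := norm_J_sub_x p x hy
  have : J p x (J p x y) - x = y - x := by
    rw [h1, h2, J_sub_x, smul_smul]
    have : p * (( |p| / ‖y - x‖) ^ 2)⁻¹ * (p * (‖y - x‖ ^ 2)⁻¹) = 1 := by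
      rw [div_pow, sq_abs]
      field_simp
    rw [this, one_smul]
  exact sub_left_injective this

lemma aux_inv_norm (u v : F) (hu : ‖u‖ ≠ 0) (hv : ‖v‖ ≠ 0) :
    ‖(‖u‖ ^ 2)⁻¹ • u - (‖v‖ ^ 2)⁻¹ • v‖ = ‖u - v‖ / (‖u‖ * ‖v‖) := by
  have hsq : ‖(‖u‖ ^ 2)⁻¹ • u - (‖v‖ ^ 2)⁻¹ • v‖ ^ 2 = (‖u - v‖ / (‖u‖ * ‖v‖)) ^ 2 := by
    rw [norm_sub_sq_real ((‖u‖ ^ 2)⁻¹ • u) ((‖v‖ ^ 2)⁻¹ • v), div_pow,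
      norm_sub_sq_real u v, norm_smul, norm_smul, real_inner_smul_left, real_inner_smul_right]
    simp only [Real.norm_eq_abs, abs_inv, abs_pow, abs_norm, mul_pow]
    field_simp
    ring
  have h1 : (0:ℝ) ≤ ‖(‖u‖ ^ 2)⁻¹ • u - (‖v‖ ^ 2)⁻¹ • v‖ := norm_nonneg _
  have h2 : (0:ℝ) ≤ ‖u - v‖ / (‖u‖ * ‖v‖) := by positivity
  nlinarith [hsq, h1, h2]

lemma dist_J {p : ℝ} (x : F) {y z : F} (hy : y ≠ x) (hz : z ≠ x) :
    ‖J p x y - J p x z‖ = |p| * ‖y - z‖ / (‖y - x‖ * ‖z - x‖) := by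
  have hu : ‖y - x‖ ≠ 0 := by simpa [sub_eq_zero] using hy
  have hv : ‖z - x‖ ≠ 0 := by simpa [sub_eq_zero] using hz
  have key := aux_inv_norm (y - x) (z - x) hu hv
  have hyz : J p x y - J p x z
      = p • ((‖y - x‖ ^ 2)⁻¹ • (y - x) - (‖z - x‖ ^ 2)⁻¹ • (z - x)) := by
    simp only [J]
    module
  rw [hyz, norm_smul, Real.norm_eq_abs, key]
  rw [show y - z = (y - x) - (z - x) by abel]
  ring

lemma norm_J_mem_sphere {R : ℝ} (hR : 0 ≤ R) (x : F) {y : F} (hy : ‖y‖ = R) (hxy : y ≠ x) :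
    ‖J (‖x‖ ^ 2 - R ^ 2) x y‖ = R := by
  have hq : ‖y - x‖ ^ 2 ≠ 0 := by
    have : ‖y - x‖ ≠ 0 := by simpa [sub_eq_zero] using hxy
    positivity
  have hqe : ‖y - x‖ ^ 2 = R ^ 2 - 2 * (inner ℝ y x : ℝ) + ‖x‖ ^ 2 := by
    rw [norm_sub_sq_real, hy]
  have hsq : ‖J (‖x‖ ^ 2 - R ^ 2) x y‖ ^ 2 = R ^ 2 := by
    have hJ : J (‖x‖ ^ 2 - R ^ 2) x y
        = x + ((‖x‖ ^ 2 - R ^ 2) * (‖y - x‖ ^ 2)⁻¹) • (y - x) := rfl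
    rw [hJ, norm_add_sq_real, norm_smul, real_inner_smul_right, inner_sub_right,
      real_inner_self_eq_norm_sq, real_inner_comm y x]
    simp only [Real.norm_eq_abs, mul_pow, sq_abs]
    rw [hqe] at hq ⊢
    field_simp
    ring
  have h1 : (0:ℝ) ≤ ‖J (‖x‖ ^ 2 - R ^ 2) x y‖ := norm_nonneg _
  nlinarith [hsq, h1, hR]


lemma lipschitzOnWith_J {p : ℝ} (x : F) {t : Set F} {m : ℝ} (hm : 0 < m)
    (ht : ∀ y ∈ t, y ≠ x ∧ m ≤ ‖y - x‖) :
    LipschitzOnWith (Real.toNNReal ( |p| / m ^ 2)) (J p x) t := by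
  rw [lipschitzOnWith_iff_dist_le_mul]
  intro y hy z hz
  obtain ⟨hy1, hy2⟩ := ht y hy
  obtain ⟨hz1, hz2⟩ := ht z hz
  rw [dist_eq_norm, dist_eq_norm, dist_J x hy1 hz1,
    Real.coe_toNNReal _ (by positivity)]
  have h1 : |p| * ‖y - z‖ / (‖y - x‖ * ‖z - x‖) ≤ |p| * ‖y - z‖ / (m * m) := by
    apply div_le_div_of_nonneg_left (by positivity) (by positivity)
    exact mul_le_mul hy2 hz2 hm.le (le_trans hm.le hy2)
  calc |p| * ‖y - z‖ / (‖y - x‖ * ‖z - x‖) ≤ |p| * ‖y - z‖ / (m * m) := h1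
    _ = |p| / m ^ 2 * ‖y - z‖ := by ring

lemma preimage_J_eq_image {p : ℝ} (hp : p ≠ 0) (x : F) {t : Set F} (hxt : x ∉ t) :
    J p x ⁻¹' t = J p x '' t := by
  ext w
  constructor
  · intro hw
    have hwx : w ≠ x := by
      rintro rfl
      rw [Set.mem_preimage, J_x] at hw
      exact hxt hw
    exact ⟨J p x w, hw, J_J hp x hwx⟩
  · rintro ⟨y, hy, rfl⟩
    have hyx : y ≠ x := by rintro rfl; exact hxt hy
    rw [Set.mem_preimage, J_J hp x hyx]
    exact hy

lemma preimage_J_preimage_J {p : ℝ} (hp : p ≠ 0) (x : F) {t : Set F} (hxt : x ∉ t) :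
    J p x ⁻¹' (J p x ⁻¹' t) = t := by
  ext w
  by_cases hwx : w = x
  · subst hwx
    simp [Set.mem_preimage, J_x, hxt]
  · simp only [Set.mem_preimage, J_J hp x hwx]

lemma aux1 {q A : ℝ} (hq : q ≠ 0) (hA : A ≠ 0) : q / (q / A) ^ 2 = A ^ 2 / q := by
  rw [div_pow, div_div_eq_mul_div, pow_two q, mul_div_mul_left _ _ hq]

lemma aux2 {q A B : ℝ} (hq : q ≠ 0) (hA : A ≠ 0) (hB : B ≠ 0) : B / A * (q / B) = q / A := by
  field_simp

lemma aux3 {q A B : ℝ} (hq : q ≠ 0) (hA : A ≠ 0) (hB : B ≠ 0) : q / A * (B / q) = B / A := by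
  field_simp

section Measure
variable [MeasurableSpace F] [BorelSpace F] [SecondCountableTopology F]

lemma measurable_J (p : ℝ) (x : F) : Measurable (J p x) := by
  have h1 : Measurable fun y : F => ‖y - x‖ ^ 2 :=
    ((continuous_id.sub continuous_const).norm.pow 2).measurable
  have h2 : Measurable fun y : F => p * (‖y - x‖ ^ 2)⁻¹ := (h1.inv).const_mul p
  exact measurable_const.add (h2.smul ((continuous_id.sub continuous_const).measurable))

/-- The two-sided comparison on one small piece. -/
lemma piece (k : ℕ) {p : ℝ} (hp : p ≠ 0) (x : F) {t : Set F} (htm : MeasurableSet t)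
    {a δ : ℝ} (hδ : 0 < δ) (hδa : δ < a)
    (ht : ∀ y ∈ t, y ≠ x ∧ a - δ ≤ ‖y - x‖ ∧ ‖y - x‖ ≤ a + δ) :
    μH[k] (J p x ⁻¹' t)
        ≤ ENNReal.ofReal (((a + δ) ^ 2 / (a - δ) ^ 2) ^ k)
          * ∫⁻ y in t, ENNReal.ofReal (( |p| / ‖y - x‖ ^ 2) ^ k) ∂μH[k]
      ∧ (∫⁻ y in t, ENNReal.ofReal (( |p| / ‖y - x‖ ^ 2) ^ k) ∂μH[k])
        ≤ ENNReal.ofReal (((a + δ) ^ 2 / (a - δ) ^ 2) ^ k) * μH[k] (J p x ⁻¹' t) := by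
  have hm : 0 < a - δ := by linarith
  have hM : 0 < a + δ := by linarith
  have hpa : 0 < |p| := abs_pos.mpr hp
  have hxt : x ∉ t := fun hx => (ht x hx).1 rfl
  -- A1
  have hA1 : μH[k] (J p x ⁻¹' t) ≤ ENNReal.ofReal (( |p| / (a - δ) ^ 2) ^ k) * μH[k] t := by
    rw [preimage_J_eq_image hp x hxt]
    have hL := lipschitzOnWith_J (p := p) x hm (fun y hy => ⟨(ht y hy).1, (ht y hy).2.1⟩)
    have := hL.hausdorffMeasure_image_le (d := (k : ℝ)) (Nat.cast_nonneg k)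
    rwa [ENNReal.rpow_natCast,
      show ((Real.toNNReal ( |p| / (a - δ) ^ 2) : ℝ≥0∞)) = ENNReal.ofReal ( |p| / (a - δ) ^ 2) from rfl,
      ← ENNReal.ofReal_pow (show (0:ℝ) ≤ |p| / (a - δ) ^ 2 by positivity)] at this
  -- A2
  have hA2 : μH[k] t ≤ ENNReal.ofReal (((a + δ) ^ 2 / |p|) ^ k) * μH[k] (J p x ⁻¹' t) := by
    have hxt' : x ∉ J p x ⁻¹' t := by
      simp only [Set.mem_preimage, J_x]; exact hxt
    have htt : J p x '' (J p x ⁻¹' t) = t := by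
      rw [← preimage_J_eq_image hp x hxt', preimage_J_preimage_J hp x hxt]
    have hpt : ∀ w ∈ J p x ⁻¹' t, w ≠ x ∧ |p| / (a + δ) ≤ ‖w - x‖ := by
      intro w hw
      have hwx : w ≠ x := fun h => hxt' (h ▸ hw)
      have hJw : J p x w ≠ x := (ht _ hw).1
      have h1 : ‖J p x w - x‖ = |p| / ‖w - x‖ := norm_J_sub_x p x hwx
      have h2 : ‖J p x w - x‖ ≤ a + δ := (ht _ hw).2.2
      refine ⟨hwx, ?_⟩
      rw [h1] at h2
      have hwpos : 0 < ‖w - x‖ := by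
        simpa [norm_pos_iff, sub_eq_zero] using hwx
      rw [div_le_iff₀ hwpos] at h2
      rw [div_le_iff₀ hM]
      nlinarith
    have hL := lipschitzOnWith_J (p := p) x (m := |p| / (a + δ)) (by positivity) hpt
    have hEq : |p| / ( |p| / (a + δ)) ^ 2 = (a + δ) ^ 2 / |p| :=
      aux1 hpa.ne' hM.ne'
    rw [hEq] at hL
    have := hL.hausdorffMeasure_image_le (d := (k : ℝ)) (Nat.cast_nonneg k)
    rw [htt] at this
    rwa [ENNReal.rpow_natCast,
      show ((Real.toNNReal ((a + δ) ^ 2 / |p|) : ℝ≥0∞)) = ENNReal.ofReal ((a + δ) ^ 2 / |p|) from rfl,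
      ← ENNReal.ofReal_pow (show (0:ℝ) ≤ (a + δ) ^ 2 / |p| by positivity)] at this
  -- B bounds on the density
  have hB1 : (∫⁻ y in t, ENNReal.ofReal (( |p| / ‖y - x‖ ^ 2) ^ k) ∂μH[k])
      ≤ ENNReal.ofReal (( |p| / (a - δ) ^ 2) ^ k) * μH[k] t := by
    rw [← setLIntegral_const t _]
    apply setLIntegral_mono' htm
    intro y hy
    apply ENNReal.ofReal_le_ofReal
    apply pow_le_pow_left₀ (by positivity)
    apply div_le_div_of_nonneg_left hpa.le (pow_pos hm 2)
    have := (ht y hy).2.1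
    nlinarith
  have hB2 : ENNReal.ofReal (( |p| / (a + δ) ^ 2) ^ k) * μH[k] t
      ≤ ∫⁻ y in t, ENNReal.ofReal (( |p| / ‖y - x‖ ^ 2) ^ k) ∂μH[k] := by
    rw [← setLIntegral_const t _]
    apply setLIntegral_mono' htm
    intro y hy
    apply ENNReal.ofReal_le_ofReal
    apply pow_le_pow_left₀ (by positivity)
    have h1 := (ht y hy).2.2
    have h2 := (ht y hy).2.1
    apply div_le_div_of_nonneg_left hpa.le (show (0:ℝ) < ‖y - x‖ ^ 2 by nlinarith)
    nlinarith
  constructor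
  · calc μH[k] (J p x ⁻¹' t) ≤ ENNReal.ofReal (( |p| / (a - δ) ^ 2) ^ k) * μH[k] t := hA1
      _ = ENNReal.ofReal (((a + δ) ^ 2 / (a - δ) ^ 2) ^ k)
          * (ENNReal.ofReal (( |p| / (a + δ) ^ 2) ^ k) * μH[k] t) := by
          rw [← mul_assoc, ← ENNReal.ofReal_mul (by positivity), ← mul_pow,
            aux2 hpa.ne' (pow_ne_zero 2 hm.ne') (pow_ne_zero 2 hM.ne')]
      _ ≤ _ := by
          exact mul_le_mul_right hB2 _
  · calc (∫⁻ y in t, ENNReal.ofReal (( |p| / ‖y - x‖ ^ 2) ^ k) ∂μH[k])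
        ≤ ENNReal.ofReal (( |p| / (a - δ) ^ 2) ^ k) * μH[k] t := hB1
      _ ≤ ENNReal.ofReal (( |p| / (a - δ) ^ 2) ^ k)
          * (ENNReal.ofReal (((a + δ) ^ 2 / |p|) ^ k) * μH[k] (J p x ⁻¹' t)) :=
          mul_le_mul_right hA2 _
      _ = ENNReal.ofReal (((a + δ) ^ 2 / (a - δ) ^ 2) ^ k) * μH[k] (J p x ⁻¹' t) := by
          rw [← mul_assoc, ← ENNReal.ofReal_mul (by positivity), ← mul_pow,
            aux3 hpa.ne' (pow_ne_zero 2 hm.ne') (pow_ne_zero 2 hM.ne')]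


lemma const_mono (k : ℕ) {a D0 δ : ℝ} (hδ : 0 < δ) (hδD : δ < D0) (haD : D0 ≤ a) :
    ((a + δ) ^ 2 / (a - δ) ^ 2) ^ k ≤ ((D0 + δ) ^ 2 / (D0 - δ) ^ 2) ^ k := by
  have h1 : 0 < a - δ := by linarith
  have h2 : 0 < D0 - δ := by linarith
  apply pow_le_pow_left₀ (by positivity)
  rw [div_le_div_iff₀ (by positivity) (by positivity)]
  have base : (a + δ) * (D0 - δ) ≤ (D0 + δ) * (a - δ) := by nlinarith
  nlinarith [mul_nonneg (by linarith : (0:ℝ) ≤ a + δ) h2.le,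
    mul_nonneg (by linarith : (0:ℝ) ≤ D0 + δ) h1.le]

variable [Nontrivial F]

lemma key (k : ℕ) {R : ℝ} (hR : 0 < R) {x : F} (hx : ‖x‖ ≠ R)
    {t : Set F} (htm : MeasurableSet t) (hts : t ⊆ Metric.sphere (0 : F) R) :
    μH[k] (J (‖x‖ ^ 2 - R ^ 2) x ⁻¹' t)
      = ∫⁻ y in t, ENNReal.ofReal ((|‖x‖ ^ 2 - R ^ 2| / ‖y - x‖ ^ 2) ^ k) ∂μH[k] := by
  set p : ℝ := ‖x‖ ^ 2 - R ^ 2 with hpdef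
  have hp : p ≠ 0 := by
    intro h
    have h2 : (‖x‖ - R) * (‖x‖ + R) = 0 := by rw [hpdef] at h; nlinarith
    rcases mul_eq_zero.1 h2 with h3 | h3
    · exact hx (by linarith)
    · have := norm_nonneg x; linarith
  set D0 : ℝ := |R - ‖x‖| with hD0def
  have hD0 : 0 < D0 := abs_pos.mpr (sub_ne_zero.mpr (Ne.symm hx))
  have hsd : ∀ y ∈ Metric.sphere (0 : F) R, D0 ≤ ‖y - x‖ := by
    intro y hy
    have h1 : ‖y‖ = R := by simpa using hy
    calc D0 = |‖y‖ - ‖x‖| := by rw [h1]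
      _ ≤ ‖y - x‖ := abs_norm_sub_norm_le y x
  set Y := ∫⁻ y in t, ENNReal.ofReal ((|p| / ‖y - x‖ ^ 2) ^ k) ∂μH[(k:ℝ)] with hYdef
  set X := μH[(k:ℝ)] (J p x ⁻¹' t) with hXdef
  have main : ∀ δ : ℝ, 0 < δ → δ < D0 →
      X ≤ ENNReal.ofReal (((D0 + δ) ^ 2 / (D0 - δ) ^ 2) ^ k) * Y
        ∧ Y ≤ ENNReal.ofReal (((D0 + δ) ^ 2 / (D0 - δ) ^ 2) ^ k) * X := by
    intro δ hδ hδD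
    haveI : Nonempty ↥(Metric.sphere (0 : F) R) :=
      (NormedSpace.sphere_nonempty.mpr hR.le).to_subtype
    set u : ℕ → F := fun n => ((TopologicalSpace.denseSeq ↥(Metric.sphere (0 : F) R) n : F))
      with hudef
    have hu_mem : ∀ n, u n ∈ Metric.sphere (0 : F) R := fun n =>
      (TopologicalSpace.denseSeq ↥(Metric.sphere (0 : F) R) n).2
    set B : ℕ → Set F := fun n => t ∩ Metric.closedBall (u n) δ with hBdef
    have hB_meas : ∀ n, MeasurableSet (B n) := fun n =>
      htm.inter measurableSet_closedBall
    have hcover : ∀ y ∈ t, ∃ n, y ∈ B n := by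
      intro y hy
      have hyS : y ∈ Metric.sphere (0 : F) R := hts hy
      obtain ⟨n, hn⟩ := (TopologicalSpace.denseRange_denseSeq
        ↥(Metric.sphere (0 : F) R)).exists_dist_lt (⟨y, hyS⟩ : ↥(Metric.sphere (0 : F) R)) hδ
      refine ⟨n, hy, ?_⟩
      rw [Metric.mem_closedBall]
      have : dist y (u n) < δ := by
        rw [hudef]
        simpa [Subtype.dist_eq, dist_comm] using hn
      linarith
    set A : ℕ → Set F := disjointed B with hAdef
    have hA_meas : ∀ n, MeasurableSet (A n) := MeasurableSet.disjointed hB_meas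
    have hA_disj : Pairwise (Function.onFun Disjoint A) := disjoint_disjointed B
    have hA_sub : ∀ n, A n ⊆ B n := disjointed_subset B
    have ht_eq : t = ⋃ n, A n := by
      rw [hAdef, iUnion_disjointed]
      apply Set.Subset.antisymm
      · intro y hy
        obtain ⟨n, hn⟩ := hcover y hy
        exact Set.mem_iUnion.mpr ⟨n, hn⟩
      · exact Set.iUnion_subset fun n => Set.inter_subset_left
    -- per-piece hypotheses
    have hpiece : ∀ n,
        μH[(k:ℝ)] (J p x ⁻¹' A n)
            ≤ ENNReal.ofReal (((D0 + δ) ^ 2 / (D0 - δ) ^ 2) ^ k)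
              * ∫⁻ y in A n, ENNReal.ofReal ((|p| / ‖y - x‖ ^ 2) ^ k) ∂μH[(k:ℝ)]
          ∧ (∫⁻ y in A n, ENNReal.ofReal ((|p| / ‖y - x‖ ^ 2) ^ k) ∂μH[(k:ℝ)])
            ≤ ENNReal.ofReal (((D0 + δ) ^ 2 / (D0 - δ) ^ 2) ^ k)
              * μH[(k:ℝ)] (J p x ⁻¹' A n) := by
      intro n
      set a : ℝ := ‖u n - x‖ with hadef
      have haD : D0 ≤ a := hsd (u n) (hu_mem n)
      have hδa : δ < a := lt_of_lt_of_le hδD haD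
      have hcond : ∀ y ∈ A n, y ≠ x ∧ a - δ ≤ ‖y - x‖ ∧ ‖y - x‖ ≤ a + δ := by
        intro y hy
        have hyB := hA_sub n hy
        have hyt : y ∈ t := hyB.1
        have hyS := hts hyt
        have hyn : ‖y‖ = R := by simpa using hyS
        have hyx : y ≠ x := by
          intro h; exact hx (by rw [← h, hyn])
        have hyu : ‖y - u n‖ ≤ δ := by
          have := hyB.2
          rwa [Metric.mem_closedBall, dist_eq_norm] at this
        constructor
        · exact hyx
        constructor
        · have h1 : a ≤ ‖y - u n‖ + ‖y - x‖ := by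
            calc a = ‖(u n - y) + (y - x)‖ := by rw [hadef]; congr 1; abel
              _ ≤ ‖u n - y‖ + ‖y - x‖ := norm_add_le _ _
              _ = ‖y - u n‖ + ‖y - x‖ := by rw [norm_sub_rev]
          linarith
        · have h1 : ‖y - x‖ ≤ ‖y - u n‖ + ‖u n - x‖ := by
            calc ‖y - x‖ = ‖(y - u n) + (u n - x)‖ := by congr 1; abel
              _ ≤ _ := norm_add_le _ _
          rw [← hadef] at h1
          linarith
      obtain ⟨h1, h2⟩ := piece k hp x (hA_meas n) hδ hδa hcond
      have hc : ENNReal.ofReal (((a + δ) ^ 2 / (a - δ) ^ 2) ^ k)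
          ≤ ENNReal.ofReal (((D0 + δ) ^ 2 / (D0 - δ) ^ 2) ^ k) :=
        ENNReal.ofReal_le_ofReal (const_mono k hδ hδD haD)
      exact ⟨h1.trans (mul_le_mul_left hc _), h2.trans (mul_le_mul_left hc _)⟩
    have hXsum : X = ∑' n, μH[(k:ℝ)] (J p x ⁻¹' A n) := by
      rw [hXdef, ht_eq, Set.preimage_iUnion]
      exact measure_iUnion
        (fun i j hij => (hA_disj hij).preimage _)
        (fun n => measurable_J p x (hA_meas n))
    have hYsum : Y = ∑' n, ∫⁻ y in A n, ENNReal.ofReal ((|p| / ‖y - x‖ ^ 2) ^ k) ∂μH[(k:ℝ)] := by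
      rw [hYdef, ht_eq]
      exact lintegral_iUnion hA_meas hA_disj _
    constructor
    · rw [hXsum, hYsum, ← ENNReal.tsum_mul_left]
      exact ENNReal.tsum_le_tsum fun n => (hpiece n).1
    · rw [hXsum, hYsum, ← ENNReal.tsum_mul_left]
      exact ENNReal.tsum_le_tsum fun n => (hpiece n).2
  -- limit argument
  have tendC : Filter.Tendsto
      (fun δ : ℝ => ENNReal.ofReal (((D0 + δ) ^ 2 / (D0 - δ) ^ 2) ^ k))
      (nhdsWithin 0 (Set.Ioi 0)) (nhds 1) := by
    have hcont : ContinuousAt (fun δ : ℝ => ((D0 + δ) ^ 2 / (D0 - δ) ^ 2) ^ k) 0 := by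
      apply ContinuousAt.pow
      apply ContinuousAt.div
      · fun_prop
      · fun_prop
      · simp [hD0.ne']
    have hval : ((D0 + 0) ^ 2 / (D0 - 0) ^ 2) ^ k = 1 := by
      rw [add_zero, sub_zero, div_self (by positivity), one_pow]
    have h1 : Filter.Tendsto (fun δ : ℝ => ((D0 + δ) ^ 2 / (D0 - δ) ^ 2) ^ k)
        (nhdsWithin 0 (Set.Ioi 0)) (nhds 1) := by
      have := hcont.continuousWithinAt (s := Set.Ioi (0:ℝ))
      rw [ContinuousWithinAt, hval] at this
      exact this
    have := ENNReal.tendsto_ofReal h1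
    simpa using this
  have hev : ∀ᶠ δ in nhdsWithin (0:ℝ) (Set.Ioi 0), δ ∈ Set.Ioo 0 D0 :=
    Filter.eventually_of_mem (Ioo_mem_nhdsGT_of_mem ⟨le_refl 0, hD0⟩) (fun δ hδ => hδ)
  have hXY : X ≤ Y := by
    have h := ENNReal.Tendsto.mul_const (b := Y) tendC (Or.inl one_ne_zero)
    rw [one_mul] at h
    refine ge_of_tendsto h ?_
    filter_upwards [hev] with δ hδ
    exact (main δ hδ.1 hδ.2).1
  have hYX : Y ≤ X := by
    have h := ENNReal.Tendsto.mul_const (b := X) tendC (Or.inl one_ne_zero)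
    rw [one_mul] at h
    refine ge_of_tendsto h ?_
    filter_upwards [hev] with δ hδ
    exact (main δ hδ.1 hδ.2).2
  exact le_antisymm hXY hYX


lemma p_ne_zero {R : ℝ} (hR : 0 < R) {x : F} (hx : ‖x‖ ≠ R) : ‖x‖ ^ 2 - R ^ 2 ≠ 0 := by
  intro h
  have h2 : (‖x‖ - R) * (‖x‖ + R) = 0 := by nlinarith
  rcases mul_eq_zero.1 h2 with h3 | h3
  · exact hx (by linarith)
  · have := norm_nonneg x; linarith

lemma x_notMem_sphere {R : ℝ} {x : F} (hx : ‖x‖ ≠ R) : x ∉ Metric.sphere (0 : F) R := by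
  intro h
  exact hx (by simpa using h)

lemma preimage_J_sphere {R : ℝ} (hR : 0 < R) {x : F} (hx : ‖x‖ ≠ R) :
    J (‖x‖ ^ 2 - R ^ 2) x ⁻¹' (Metric.sphere (0 : F) R) = Metric.sphere (0 : F) R := by
  have hp := p_ne_zero hR hx
  ext y
  simp only [Set.mem_preimage, mem_sphere_iff_norm, sub_zero]
  constructor
  · intro h
    by_cases hyx : y = x
    · subst hyx
      rw [J_x] at h
      exact absurd h hx
    · have hJx : J (‖x‖ ^ 2 - R ^ 2) x y ≠ x := J_ne_x hp x hyx
      have := norm_J_mem_sphere hR.le x h hJx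
      rwa [J_J hp x hyx] at this
  · intro h
    have hyx : y ≠ x := by intro hh; exact hx (by rw [← hh, h])
    exact norm_J_mem_sphere hR.le x h hyx

lemma map_J_eq (k : ℕ) {R : ℝ} (hR : 0 < R) {x : F} (hx : ‖x‖ ≠ R) :
    Measure.map (J (‖x‖ ^ 2 - R ^ 2) x) (μH[k].restrict (Metric.sphere (0 : F) R))
      = (μH[k].restrict (Metric.sphere (0 : F) R)).withDensity
          (fun y => ENNReal.ofReal ((|‖x‖ ^ 2 - R ^ 2| / ‖y - x‖ ^ 2) ^ k)) := by
  ext s hs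
  rw [Measure.map_apply (measurable_J _ _) hs,
    Measure.restrict_apply (measurable_J _ _ hs),
    withDensity_apply _ hs, Measure.restrict_restrict hs]
  have hset : J (‖x‖ ^ 2 - R ^ 2) x ⁻¹' s ∩ Metric.sphere (0 : F) R
      = J (‖x‖ ^ 2 - R ^ 2) x ⁻¹' (s ∩ Metric.sphere (0 : F) R) := by
    rw [Set.preimage_inter, preimage_J_sphere hR hx]
  rw [hset]
  exact key k hR hx (hs.inter Metric.isClosed_sphere.measurableSet) Set.inter_subset_right

end Measure

lemma cpow_aux (k : ℕ) {α β : ℂ} (hab : α + β = 2 * (k : ℂ)) {pr r : ℝ}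
    (hp : 0 < pr) (hr : 0 < r) :
    ((pr / r ^ 2) ^ k : ℝ) • (((pr / r : ℝ) : ℂ)) ^ (-α)
      = ((pr : ℝ) : ℂ) ^ ((β - α) / 2) * ((r : ℝ) : ℂ) ^ (-β) := by
  have hexp : ∀ (a : ℝ), 0 < a → ∀ w : ℂ, ((a : ℂ)) ^ w
      = Complex.exp ((Real.log a : ℂ) * w) := by
    intro a ha w
    rw [Complex.cpow_def_of_ne_zero (by exact_mod_cast ha.ne'), Complex.ofReal_log ha.le]
  have hnat : ∀ (a : ℝ), 0 < a → ((a : ℂ)) ^ (k : ℕ)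
      = Complex.exp ((k : ℂ) * (Real.log a : ℂ)) := by
    intro a ha
    have h1 : (a : ℂ) = Complex.exp ((Real.log a : ℂ)) := by
      rw [← Complex.ofReal_exp, Real.exp_log ha]
    rw [h1, ← Complex.exp_nat_mul]
  rw [Complex.real_smul, Complex.ofReal_pow, hnat _ (by positivity),
    hexp _ (by positivity), hexp _ hp, hexp _ hr, ← Complex.exp_add, ← Complex.exp_add]
  congr 1
  rw [Real.log_div hp.ne' (by positivity), Real.log_div hp.ne' hr.ne', Real.log_pow]
  push_cast
  linear_combination ((Real.log r : ℂ) - (Real.log pr : ℂ) / 2) * hab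

end NPR

open NPR

/-- If `α + β = 2k`, then `∫_{S^k(R)} ‖x−y‖^{−α} = |R² − ‖x‖²|^{(β−α)/2} ∫_{S^k(R)} ‖x−y‖^{−β}`
(complex powers). -/
theorem newtonian_poisson_relation
    (k : ℕ) (hk : 1 ≤ k) (R : ℝ) (hR : 0 < R)
    (x : EuclideanSpace ℝ (Fin (k + 1))) (hx : ‖x‖ ≠ R)
    (α β : ℂ) (hab : α + β = 2 * (k : ℂ)) :
    ∫ y in Metric.sphere (0 : EuclideanSpace ℝ (Fin (k + 1))) R,
        ((‖x - y‖ : ℝ) : ℂ) ^ (-α) ∂μH[k]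
      = ((|R ^ 2 - ‖x‖ ^ 2| : ℝ) : ℂ) ^ ((β - α) / 2)
        * ∫ y in Metric.sphere (0 : EuclideanSpace ℝ (Fin (k + 1))) R,
            ((‖x - y‖ : ℝ) : ℂ) ^ (-β) ∂μH[k] := by
    classical
  haveI : Nontrivial (EuclideanSpace ℝ (Fin (k + 1))) :=
    ⟨⟨EuclideanSpace.single 0 1, 0, by
      intro h
      have := congrArg (fun v => v 0) h
      simp [EuclideanSpace.single_apply] at this⟩⟩
  set S : Set (EuclideanSpace ℝ (Fin (k + 1))) :=
    Metric.sphere (0 : EuclideanSpace ℝ (Fin (k + 1))) R with hSdef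
  have hp : ‖x‖ ^ 2 - R ^ 2 ≠ 0 := p_ne_zero hR hx
  have hpa : 0 < |‖x‖ ^ 2 - R ^ 2| := abs_pos.mpr hp
  have hxS : x ∉ S := x_notMem_sphere hx
  have hSm : MeasurableSet S := Metric.isClosed_sphere.measurableSet
  have hyx : ∀ y ∈ S, y ≠ x := fun y hy h => hxS (h ▸ hy)
  have hdist : ∀ y ∈ S, 0 < ‖y - x‖ := fun y hy => by
    rw [norm_pos_iff, sub_ne_zero]; exact hyx y hy
  -- measurability of the two integrands
  have hfm : ∀ γ : ℂ, Measurable (fun y : EuclideanSpace ℝ (Fin (k + 1)) => ((‖x - y‖ : ℝ) : ℂ) ^ (-γ)) := by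
    intro γ
    have heq : (fun y : EuclideanSpace ℝ (Fin (k + 1)) => ((‖x - y‖ : ℝ) : ℂ) ^ (-γ))
        = fun y : EuclideanSpace ℝ (Fin (k + 1)) => if y = x then ((0 : ℝ) : ℂ) ^ (-γ)
            else Complex.exp (Complex.log ((‖x - y‖ : ℝ) : ℂ) * (-γ)) := by
      funext y
      by_cases h : y = x
      · rw [if_pos h, h, sub_self, norm_zero]
      · rw [if_neg h, Complex.cpow_def_of_ne_zero]
        have : ‖x - y‖ ≠ 0 := by
          rw [norm_ne_zero_iff, sub_ne_zero]
          exact fun hh => h hh.symm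
        exact_mod_cast this
    rw [heq]
    apply Measurable.ite (measurableSet_eq)
    · exact measurable_const
    · exact Complex.measurable_exp.comp
        (((Complex.measurable_ofReal.comp
          ((measurable_const.sub measurable_id).norm)).clog).mul_const (-γ))
  -- change of variables via the inversion J
  have hJm : Measurable (J (‖x‖ ^ 2 - R ^ 2) x) := measurable_J _ _
  have step1 : ∫ y in S, ((‖x - y‖ : ℝ) : ℂ) ^ (-α) ∂μH[k]
      = ∫ y in S,
          ((‖x - J (‖x‖ ^ 2 - R ^ 2) x (J (‖x‖ ^ 2 - R ^ 2) x y)‖ : ℝ) : ℂ) ^ (-α) ∂μH[k] := by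
    apply setIntegral_congr_fun hSm
    intro y hy
    simp only [J_J hp x (hyx y hy)]
  have step2 : ∫ y in S,
          ((‖x - J (‖x‖ ^ 2 - R ^ 2) x (J (‖x‖ ^ 2 - R ^ 2) x y)‖ : ℝ) : ℂ) ^ (-α) ∂μH[k]
      = ∫ z, ((‖x - J (‖x‖ ^ 2 - R ^ 2) x z‖ : ℝ) : ℂ) ^ (-α)
          ∂(Measure.map (J (‖x‖ ^ 2 - R ^ 2) x) (μH[k].restrict S)) := by
    refine (integral_map (f := fun z => ((‖x - J (‖x‖ ^ 2 - R ^ 2) x z‖ : ℝ) : ℂ) ^ (-α))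
      hJm.aemeasurable ?_).symm
    exact ((hfm α).comp hJm).aestronglyMeasurable
  have step3 : (Measure.map (J (‖x‖ ^ 2 - R ^ 2) x) (μH[k].restrict S))
      = (μH[k].restrict S).withDensity
          (fun y => ((Real.toNNReal ((|‖x‖ ^ 2 - R ^ 2| / ‖y - x‖ ^ 2) ^ k) : ℝ≥0) : ℝ≥0∞)) :=
    map_J_eq k hR hx
  have hDm : Measurable (fun y : EuclideanSpace ℝ (Fin (k + 1)) => Real.toNNReal ((|‖x‖ ^ 2 - R ^ 2| / ‖y - x‖ ^ 2) ^ k)) := by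
    apply Measurable.real_toNNReal
    apply Measurable.pow_const
    exact (((measurable_id.sub measurable_const).norm.pow_const 2).inv).const_mul _
  have step4 : ∫ z, ((‖x - J (‖x‖ ^ 2 - R ^ 2) x z‖ : ℝ) : ℂ) ^ (-α)
          ∂((μH[k].restrict S).withDensity
            (fun y => ((Real.toNNReal ((|‖x‖ ^ 2 - R ^ 2| / ‖y - x‖ ^ 2) ^ k) : ℝ≥0) : ℝ≥0∞)))
      = ∫ y in S, (Real.toNNReal ((|‖x‖ ^ 2 - R ^ 2| / ‖y - x‖ ^ 2) ^ k))
          • ((‖x - J (‖x‖ ^ 2 - R ^ 2) x y‖ : ℝ) : ℂ) ^ (-α) ∂μH[k] :=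
    integral_withDensity_eq_integral_smul hDm _
  have step5 : ∫ y in S, (Real.toNNReal ((|‖x‖ ^ 2 - R ^ 2| / ‖y - x‖ ^ 2) ^ k))
          • ((‖x - J (‖x‖ ^ 2 - R ^ 2) x y‖ : ℝ) : ℂ) ^ (-α) ∂μH[k]
      = ∫ y in S, ((|R ^ 2 - ‖x‖ ^ 2| : ℝ) : ℂ) ^ ((β - α) / 2)
          * ((‖x - y‖ : ℝ) : ℂ) ^ (-β) ∂μH[k] := by
    apply setIntegral_congr_fun hSm
    intro y hy
    beta_reduce
    have hr : 0 < ‖y - x‖ := hdist y hy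
    have h1 : ‖x - J (‖x‖ ^ 2 - R ^ 2) x y‖ = |‖x‖ ^ 2 - R ^ 2| / ‖y - x‖ := by
      rw [norm_sub_rev, norm_J_sub_x _ x (hyx y hy)]
    have h2 : (Real.toNNReal ((|‖x‖ ^ 2 - R ^ 2| / ‖y - x‖ ^ 2) ^ k))
          • ((‖x - J (‖x‖ ^ 2 - R ^ 2) x y‖ : ℝ) : ℂ) ^ (-α)
        = ((|‖x‖ ^ 2 - R ^ 2| / ‖y - x‖ ^ 2) ^ k : ℝ)
          • (((|‖x‖ ^ 2 - R ^ 2| / ‖y - x‖ : ℝ) : ℂ)) ^ (-α) := by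
      rw [h1, NNReal.smul_def, Real.coe_toNNReal _ (by positivity)]
    rw [h2, cpow_aux k hab hpa hr, abs_sub_comm, norm_sub_rev]
  rw [step1, step2, step3, step4, step5]
  rw [← smul_eq_mul, ← integral_smul]
  apply setIntegral_congr_fun hSm
  intro y hy
  beta_reduce
  rw [smul_eq_mul]
end
end

section
/- Let p ∈ ℂ and let a, b ∈ ℝ with a > b > 0. Then ∫_{θ ∈ [0, 2π]} ((a − b·sin θ : ℝ) : ℂ)^{−p} dθ = ((a² − b² : ℝ) : ℂ)^{1/2 − p} · ∫_{θ ∈ [0, 2π]} ((a − b·sin θ : ℝ) : ℂ)^{p − 1} dθ, where powers are complex powers (Complex.cpow) of positive real bases (note a − b·sin θ ≥ a − b > 0). -/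
open MeasureTheory Real

private lemma cpow_eq_exp (x : ℝ) (hx : 0 < x) (s : ℂ) :
    ((x : ℝ) : ℂ) ^ s = Complex.exp ((Real.log x : ℂ) * s) := by
  rw [Complex.cpow_def_of_ne_zero (by exact_mod_cast hx.ne' : (x:ℂ) ≠ 0),
    Complex.ofReal_log hx.le]

private lemma ofReal_eq_exp (x : ℝ) (hx : 0 < x) :
    ((x : ℝ) : ℂ) = Complex.exp ((Real.log x : ℂ)) := by
  rw [← Complex.ofReal_exp, Real.exp_log hx]

private lemma lemSin (r θ : ℝ) (hden : 1 - r*Real.sin θ ≠ 0) (hQ : (1:ℝ)+r^2-2*r*Real.sin θ ≠ 0) :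
    Real.sin (θ + π - 2*Real.arctan (r*Real.cos θ/(1-r*Real.sin θ)))
      = (2*r-(1+r^2)*Real.sin θ)/(1+r^2-2*r*Real.sin θ) := by
  set S := Real.sin θ with hS
  set C := Real.cos θ with hC
  set u := r*C/(1-r*S) with hu
  have pyth : S^2 + C^2 = 1 := Real.sin_sq_add_cos_sq θ
  have h1 : θ + π - 2*Real.arctan u = (θ - 2*Real.arctan u) + π := by ring
  rw [h1, Real.sin_add_pi, Real.sin_sub, Real.sin_two_mul, Real.cos_two_mul,
    Real.sin_arctan, Real.cos_arctan]
  have h2 : (0:ℝ) < 1 + u^2 := by positivity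
  have h3 : Real.sqrt (1+u^2) ^ 2 = 1 + u^2 := Real.sq_sqrt h2.le
  have h4 : Real.sqrt (1+u^2) ≠ 0 := by positivity
  have e1 : (2:ℝ) * (u / Real.sqrt (1+u^2)) * (1/Real.sqrt (1+u^2)) = 2*u/(1+u^2) := by
    rw [← h3]; field_simp; rw [h3, h3]
  have e2 : (2:ℝ) * (1/Real.sqrt (1+u^2))^2 - 1 = (1-u^2)/(1+u^2) := by
    rw [div_pow, one_pow, h3]; field_simp; ring
  rw [e1, e2]
  have e3 : 1 + (r*C/(1-r*S))^2 = (1+r^2-2*r*S)/(1-r*S)^2 := by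
    field_simp; linear_combination r^2*pyth
  rw [hu, e3]
  field_simp
  rw [← hS, ← hC]
  linear_combination ((2*r - r^2*S)/(1+r^2-2*r*S)) * pyth

private lemma lemB (a b c S : ℝ) (hb : b ≠ 0) (hb2 : b^2 = a^2 - c^2) (hac : a - c ≠ 0)
    (habS : a - b*S ≠ 0) :
    a - b*((2*((a-c)/b)-(1+((a-c)/b)^2)*S)/((2*(a-c)*(a-b*S))/b^2)) = c^2/(a-b*S) := by
  field_simp
  ring_nf
  linear_combination (-2*(a-c) + b*S) * hb2

private lemma lemKey (a b c S : ℝ) (hb : b ≠ 0) (hb2 : b^2 = a^2 - c^2) :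
    (1 - ((a-c)/b)^2)*(a - b*S) = c*(1 + ((a-c)/b)^2 - 2*((a-c)/b)*S) := by
  field_simp
  linear_combination (a - b*S - c) * hb2

private lemma lemD (a b c r S C : ℝ) (hden : 1 - r*S ≠ 0) (hQ : (1:ℝ) + r^2 - 2*r*S ≠ 0)
    (pyth : S^2 + C^2 = 1) (habS : a - b*S ≠ 0)
    (key : (1-r^2)*(a-b*S) = c*(1+r^2-2*r*S)) :
    1 - 2*(1/(1 + (r*C/(1-r*S))^2) * ((r^2 - r*S)/(1-r*S)^2)) = c/(a - b*S) := by
  have e1 : 1 + (r*C/(1-r*S))^2 = (1+r^2-2*r*S)/(1-r*S)^2 := by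
    field_simp
    linear_combination r^2*pyth
  rw [e1]
  field_simp
  rw [eq_div_iff (by rw [mul_comm]; exact habS)]
  linear_combination key

/-- For `p ∈ ℂ` and `a > b > 0`,
`∫₀^{2π} (a − b sin θ)^{−p} dθ = (a² − b²)^{1/2 − p} ∫₀^{2π} (a − b sin θ)^{p−1} dθ`. -/
theorem one_dimensional_poisson_identity
    (p : ℂ) (a b : ℝ) (hab : b < a) (hb : 0 < b) :
    ∫ θ in Set.Icc (0 : ℝ) (2 * π),
        ((a - b * Real.sin θ : ℝ) : ℂ) ^ (-p)
      = ((a ^ 2 - b ^ 2 : ℝ) : ℂ) ^ ((1 : ℂ) / 2 - p)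
        * ∫ θ in Set.Icc (0 : ℝ) (2 * π),
            ((a - b * Real.sin θ : ℝ) : ℂ) ^ (p - 1) := by
  have hb0 : b ≠ 0 := ne_of_gt hb
  have ha : 0 < a := hb.trans hab
  have hd2 : (0:ℝ) < a^2 - b^2 := by nlinarith
  set c : ℝ := Real.sqrt (a^2 - b^2) with hcdef
  have hc0 : 0 < c := Real.sqrt_pos.2 hd2
  have hc2 : c^2 = a^2 - b^2 := Real.sq_sqrt hd2.le
  have hca : c < a := by
    have h1 : c < Real.sqrt (a^2) := Real.sqrt_lt_sqrt hd2.le (by nlinarith)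
    rwa [Real.sqrt_sq ha.le] at h1
  have hb2 : b^2 = a^2 - c^2 := by rw [hc2]; ring
  have hac : (0:ℝ) < a - c := by linarith
  set r : ℝ := (a - c)/b with hrdef
  have hr0 : 0 < r := div_pos hac hb
  have hr1 : r < 1 := by rw [hrdef, div_lt_one hb]; nlinarith
  clear_value c r
  have hpos : ∀ θ : ℝ, 0 < a - b * Real.sin θ := fun θ => by
    nlinarith [mul_nonneg hb.le (sub_nonneg.2 (Real.sin_le_one θ))]
  have hden : ∀ θ : ℝ, 0 < 1 - r * Real.sin θ := fun θ => by
    nlinarith [mul_nonneg hr0.le (sub_nonneg.2 (Real.sin_le_one θ))]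
  have hQpos : ∀ θ : ℝ, 0 < 1 + r^2 - 2*r*Real.sin θ := fun θ => by
    nlinarith [sq_nonneg (1-r), mul_nonneg hr0.le (sub_nonneg.2 (Real.sin_le_one θ))]
  -- the substitution map
  set Ψ : ℝ → ℝ := fun θ => θ + π - 2 * Real.arctan (r * Real.cos θ / (1 - r * Real.sin θ))
    with hΨdef
  have hΨd : ∀ θ : ℝ, HasDerivAt Ψ (c / (a - b * Real.sin θ)) θ := by
    intro θ
    have h1 : HasDerivAt (fun t : ℝ => r * Real.cos t) (r * (-Real.sin θ)) θ :=
      (Real.hasDerivAt_cos θ).const_mul r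
    have h2 : HasDerivAt (fun t : ℝ => 1 - r * Real.sin t) (-(r * Real.cos θ)) θ := by
      simpa using ((Real.hasDerivAt_sin θ).const_mul r).const_sub 1
    have h3 := h1.div h2 (hden θ).ne'
    have hnum : (r^2 - r*Real.sin θ)
        = r * -Real.sin θ * (1 - r*Real.sin θ) - r*Real.cos θ * -(r*Real.cos θ) := by
      linear_combination (-(r^2)) * Real.sin_sq_add_cos_sq θ
    have h3' : HasDerivAt (fun t : ℝ => r * Real.cos t / (1 - r * Real.sin t))
        ((r^2 - r*Real.sin θ)/(1 - r*Real.sin θ)^2) θ := by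
      rw [hnum]; exact h3
    have h4 := h3'.arctan
    have h5 := ((hasDerivAt_id θ).add_const π).sub (h4.const_mul 2)
    refine h5.congr_deriv (Eq.symm ?_)
    rw [eq_comm]
    have key : (1-r^2)*(a-b*Real.sin θ) = c*(1+r^2-2*r*Real.sin θ) := by
      rw [hrdef]; exact lemKey a b c _ hb0 hb2
    exact lemD a b c r (Real.sin θ) (Real.cos θ) (hden θ).ne' (hQpos θ).ne'
      (Real.sin_sq_add_cos_sq θ) (hpos θ).ne' key
  have hval : ∀ θ : ℝ, a - b * Real.sin (Ψ θ) = c^2/(a - b*Real.sin θ) := by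
    intro θ
    have hQe : (1:ℝ)+r^2-2*r*Real.sin θ = 2*(a-c)*(a-b*Real.sin θ)/b^2 := by
      rw [hrdef]
      field_simp
      linear_combination hb2
    rw [hΨdef]
    simp only
    rw [lemSin r θ (hden θ).ne' (hQpos θ).ne', hQe, hrdef]
    exact lemB a b c _ hb0 hb2 hac.ne' (hpos θ).ne'
  -- move to interval integrals
  have h2π : (0:ℝ) ≤ 2*π := by positivity
  have hIcc : ∀ (f : ℝ → ℂ), (∫ θ in Set.Icc (0:ℝ) (2*π), f θ) = ∫ θ in (0:ℝ)..(2*π), f θ := by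
    intro f
    rw [intervalIntegral.integral_of_le h2π, MeasureTheory.integral_Icc_eq_integral_Ioc]
  rw [hIcc, hIcc]
  have hgdef : ∀ (s : ℂ) (u : ℝ), ((a - b*Real.sin u : ℝ) : ℂ) ^ s
      = Complex.exp ((Real.log (a - b*Real.sin u) : ℂ) * s) :=
    fun s u => cpow_eq_exp _ (hpos u) s
  simp only [hgdef]
  set g : ℝ → ℂ := fun u => Complex.exp ((Real.log (a - b*Real.sin u) : ℂ) * (p-1)) with hgd
  set h : ℝ → ℂ := fun u => Complex.exp ((Real.log (a - b*Real.sin u) : ℂ) * (-p)) with hhd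
  set K : ℂ := Complex.exp ((Real.log (a^2 - b^2) : ℂ) * (p - 1/2)) with hKd
  have hgcont : Continuous g := by
    apply Complex.continuous_exp.comp
    apply Continuous.mul _ continuous_const
    exact Complex.continuous_ofReal.comp
      ((continuous_const.sub (continuous_const.mul Real.continuous_sin)).log
        (fun u => (hpos u).ne'))
  have hper : Function.Periodic g (2*π) := by
    intro x
    simp only [hgd, Real.sin_add_two_pi]
  have hΨ2π : Ψ (2*π) = Ψ 0 + 2*π := by
    simp only [hΨdef, Real.sin_two_pi, Real.cos_two_pi, Real.sin_zero, Real.cos_zero]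
    ring
  have hf'cont : Continuous (fun θ : ℝ => c / (a - b * Real.sin θ)) :=
    continuous_const.div (continuous_const.sub (continuous_const.mul Real.continuous_sin))
      (fun x => (hpos x).ne')
  have key1 : (∫ θ in (0:ℝ)..(2*π), g θ)
      = ∫ θ in (0:ℝ)..(2*π), (c/(a - b*Real.sin θ)) • g (Ψ θ) := by
    have step1 : (∫ θ in (0:ℝ)..(2*π), g θ) = ∫ θ in (Ψ 0)..(Ψ 0 + 2*π), g θ := by
      have := hper.intervalIntegral_add_eq 0 (Ψ 0)
      rw [zero_add] at this
      exact this
    rw [step1, ← hΨ2π]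
    exact (intervalIntegral.integral_comp_smul_deriv (fun x _ => hΨd x)
      hf'cont.continuousOn hgcont).symm
  have hpoint : ∀ θ : ℝ, (c/(a - b*Real.sin θ)) • g (Ψ θ) = K * h θ := by
    intro θ
    have hL : (0:ℝ) < a - b*Real.sin θ := hpos θ
    have hgΨ : g (Ψ θ) = Complex.exp
        (((Real.log (a^2-b^2) : ℂ) - (Real.log (a - b*Real.sin θ) : ℂ)) * (p-1)) := by
      rw [hgd]
      simp only
      rw [hval θ]
      congr 2
      rw [Real.log_div (pow_pos hc0 2).ne' hL.ne', hc2]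
      push_cast
      ring
    have hsm : ((c/(a - b*Real.sin θ) : ℝ) : ℂ)
        = Complex.exp (((Real.log c : ℝ) : ℂ) - ((Real.log (a - b*Real.sin θ) : ℝ) : ℂ)) := by
      rw [ofReal_eq_exp _ (div_pos hc0 hL), Real.log_div hc0.ne' hL.ne']
      push_cast
      ring_nf
    have hMc : ((Real.log c : ℝ) : ℂ) = ((Real.log (a^2-b^2) : ℝ) : ℂ) / 2 := by
      rw [← hc2, show c^2 = c^2 from rfl, Real.log_pow]
      push_cast
      ring
    rw [hgΨ, Complex.real_smul, hsm, ← Complex.exp_add, hKd, hhd]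
    simp only
    rw [← Complex.exp_add]
    congr 1
    linear_combination hMc
  rw [key1]
  simp only [hpoint]
  rw [intervalIntegral.integral_const_mul]
  rw [cpow_eq_exp _ hd2, ← mul_assoc, ← Complex.exp_add]
  rw [show (Real.log (a^2-b^2) : ℂ) * ((1:ℂ)/2 - p) + (Real.log (a^2-b^2) : ℂ) * (p - 1/2)
      = 0 by ring, Complex.exp_zero, one_mul]
end

section
/- Let k ≥ 1 and for y ∈ E with y ≠ 0 define ω_y : E → ℝ by ω_y(x) = (‖y‖² − ‖x‖²)/‖x − y‖². Then: (i) if k = 1, for every y ≠ 0 the function ω_y is harmonic on the open ball {x : ‖x‖ < ‖y‖}; (ii) if k ≥ 2, then for a point x ∈ E one has Δ(ω_y^k)(x) = 0 for every y with ‖y‖ > ‖x‖ if and only if x = 0 (here Δ is the Laplacian in the variable x and ω_y^k is the k-th power). -/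
set_option maxHeartbeats 1000000


open MeasureTheory

/-- The Laplacian of `f : ℝ^n → ℝ` at `x`: the sum of the pure second directional
derivatives of `f` at `x` along the standard orthonormal basis vectors. -/
noncomputable def euclideanLaplacian {n : ℕ}
    (f : EuclideanSpace ℝ (Fin n) → ℝ) (x : EuclideanSpace ℝ (Fin n)) : ℝ :=
  ∑ i : Fin n, iteratedFDeriv ℝ 2 f x
    ![EuclideanSpace.single i (1 : ℝ), EuclideanSpace.single i (1 : ℝ)]

section Aux
variable {F : Type*} [NormedAddCommGroup F] [InnerProductSpace ℝ F]

lemma hasFDerivAt_nsq (z : F) :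
    HasFDerivAt (fun w : F => ‖w‖^2) ((2:ℝ) • (innerSL ℝ z : F →L[ℝ] ℝ)) z := by
  have := (hasFDerivAt_id z).norm_sq
  refine this.congr_fderiv ?_; ext h; simp

lemma hasFDerivAt_u (y z : F) :
    HasFDerivAt (fun w : F => ‖y‖^2 - ‖w‖^2) ((-2:ℝ) • (innerSL ℝ z : F →L[ℝ] ℝ)) z := by
  have := (hasFDerivAt_const (‖y‖^2) z).sub (hasFDerivAt_nsq z)
  refine this.congr_fderiv ?_; ext h; simp

lemma hasFDerivAt_v (y z : F) :
    HasFDerivAt (fun w : F => ‖w - y‖^2) ((2:ℝ) • (innerSL ℝ (z - y) : F →L[ℝ] ℝ)) z := by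
  have := ((hasFDerivAt_id z).sub_const y).norm_sq
  refine this.congr_fderiv ?_; ext h; simp

lemma hasFDerivAt_vinv (y z : F) (hz : (‖z - y‖^2 : ℝ) ≠ 0) :
    HasFDerivAt (fun w : F => (‖w - y‖^2)⁻¹)
      ((-((‖z - y‖^2)^2)⁻¹) • ((2:ℝ) • (innerSL ℝ (z - y) : F →L[ℝ] ℝ))) z :=
  (hasDerivAt_inv hz).comp_hasFDerivAt z (hasFDerivAt_v y z)

/-- explicit first derivative of `z ↦ ((‖y‖²-‖z‖²)/‖z-y‖²)^k` -/
noncomputable def Dmap (k : ℕ) (y z : F) : F →L[ℝ] ℝ :=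
  ((-2 : ℝ) * ((k:ℝ) * ((‖y‖^2 - ‖z‖^2) * (‖z-y‖^2)⁻¹)^(k-1)) * (‖z-y‖^2)⁻¹) •
      (innerSL ℝ z : F →L[ℝ] ℝ)
    + ((-2 : ℝ) * ((k:ℝ) * ((‖y‖^2 - ‖z‖^2) * (‖z-y‖^2)⁻¹)^(k-1)) * (‖y‖^2 - ‖z‖^2)
        * ((‖z-y‖^2)⁻¹ * (‖z-y‖^2)⁻¹)) • (innerSL ℝ (z - y) : F →L[ℝ] ℝ)

lemma hasFDerivAt_qmul (y z : F) (hz : (‖z - y‖^2 : ℝ) ≠ 0) :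
    HasFDerivAt (fun w : F => (‖y‖^2 - ‖w‖^2) * (‖w - y‖^2)⁻¹)
      ((‖y‖^2 - ‖z‖^2) • ((-((‖z - y‖^2)^2)⁻¹) • ((2:ℝ) • (innerSL ℝ (z - y) : F →L[ℝ] ℝ)))
        + (‖z - y‖^2)⁻¹ • ((-2:ℝ) • (innerSL ℝ z : F →L[ℝ] ℝ))) z :=
  (hasFDerivAt_u y z).mul (hasFDerivAt_vinv y z hz)

lemma hasFDerivAt_f (k : ℕ) (y z : F) (hz : (‖z - y‖^2 : ℝ) ≠ 0) :
    HasFDerivAt (fun w : F => ((‖y‖^2 - ‖w‖^2) / ‖w - y‖^2)^k) (Dmap k y z) z := by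
  have h := (hasDerivAt_pow k ((‖y‖^2 - ‖z‖^2) * (‖z - y‖^2)⁻¹)).comp_hasFDerivAt z
    (hasFDerivAt_qmul y z hz)
  have hfun : (fun w : F => ((‖y‖^2 - ‖w‖^2) / ‖w - y‖^2)^k)
      = (fun t : ℝ => t ^ k) ∘ (fun w : F => (‖y‖^2 - ‖w‖^2) * (‖w - y‖^2)⁻¹) := by
    funext w; simp [div_eq_mul_inv, Function.comp]
  rw [hfun]
  refine h.congr_fderiv ?_
  ext h'
  simp only [Dmap, ContinuousLinearMap.add_apply, ContinuousLinearMap.smul_apply,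
    innerSL_apply_apply, smul_eq_mul]
  field_simp
  ring

lemma vne {z y : F} (hz : z ≠ y) : (‖z - y‖^2 : ℝ) ≠ 0 :=
  pow_ne_zero 2 (norm_ne_zero_iff.mpr (sub_ne_zero.mpr hz))

end Aux

lemma lap_eq (k n : ℕ) (y x : EuclideanSpace ℝ (Fin n)) (hxy : x ≠ y) :
    euclideanLaplacian (fun z => ((‖y‖^2 - ‖z‖^2) / ‖z - y‖^2)^k) x =
      (4*(k:ℝ)*((k-1:ℕ):ℝ)*((‖y‖^2-‖x‖^2) * (‖x-y‖^2)⁻¹)^(k-1-1)*((‖x-y‖^2)⁻¹*(‖x-y‖^2)⁻¹)) * ‖x‖^2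
      + (8*(k:ℝ)*((‖y‖^2-‖x‖^2) * (‖x-y‖^2)⁻¹)^(k-1)*((‖x-y‖^2)⁻¹*(‖x-y‖^2)⁻¹)
         + 8*(k:ℝ)*((k-1:ℕ):ℝ)*((‖y‖^2-‖x‖^2) * (‖x-y‖^2)⁻¹)^(k-1-1)*(‖y‖^2-‖x‖^2)
             *((‖x-y‖^2)⁻¹*(‖x-y‖^2)⁻¹*(‖x-y‖^2)⁻¹))
          * (inner ℝ x (x - y) : ℝ)
      + (8*(k:ℝ)*((‖y‖^2-‖x‖^2) * (‖x-y‖^2)⁻¹)^(k-1)*(‖y‖^2-‖x‖^2)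
             *((‖x-y‖^2)⁻¹*(‖x-y‖^2)⁻¹*(‖x-y‖^2)⁻¹)
         + 4*(k:ℝ)*((k-1:ℕ):ℝ)*((‖y‖^2-‖x‖^2) * (‖x-y‖^2)⁻¹)^(k-1-1)*(‖y‖^2-‖x‖^2)^2
             *((‖x-y‖^2)⁻¹*(‖x-y‖^2)⁻¹*(‖x-y‖^2)⁻¹*(‖x-y‖^2)⁻¹))
          * ‖x-y‖^2
      + (n:ℝ)*(-2*(k:ℝ)*((‖y‖^2-‖x‖^2) * (‖x-y‖^2)⁻¹)^(k-1)*(‖x-y‖^2)⁻¹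
          - 2*(k:ℝ)*((‖y‖^2-‖x‖^2) * (‖x-y‖^2)⁻¹)^(k-1)*(‖y‖^2-‖x‖^2)
              *((‖x-y‖^2)⁻¹*(‖x-y‖^2)⁻¹)) := by
  have hvy : (‖x - y‖^2 : ℝ) ≠ 0 := vne hxy
  -- second derivative of `Dmap` at `x`
  have hq := hasFDerivAt_qmul y x hvy
  have hp := (hasDerivAt_pow (k-1) ((‖y‖^2 - ‖x‖^2) * (‖x - y‖^2)⁻¹)).comp_hasFDerivAt x hq
  have hc := (hp.const_mul (k:ℝ)).const_mul (-2:ℝ)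
  have hw := hasFDerivAt_vinv y x hvy
  have hu := hasFDerivAt_u y x
  have hA := hc.mul hw
  have hB := (hc.mul hu).mul (hw.mul hw)
  have hin1 : HasFDerivAt (fun z : EuclideanSpace ℝ (Fin n) => (innerSL ℝ z : _ →L[ℝ] ℝ))
      (innerSL ℝ : _ →L[ℝ] _) x := (innerSL ℝ : _ →L[ℝ] _).hasFDerivAt
  have hin2 := ((innerSL ℝ : EuclideanSpace ℝ (Fin n) →L[ℝ] _).hasFDerivAt
      (x := x - y)).comp x ((hasFDerivAt_id x).sub_const y)
  have hD := (hA.smul hin1).add (hB.smul hin2)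
  have hEq : fderiv ℝ (fun w : EuclideanSpace ℝ (Fin n) => ((‖y‖^2 - ‖w‖^2) / ‖w - y‖^2)^k)
      =ᶠ[nhds x] (fun z => Dmap k y z) := by
    filter_upwards [isOpen_ne.mem_nhds hxy] with z hz
    exact (hasFDerivAt_f k y z (vne hz)).fderiv
  have hD2 : HasFDerivAt
      (fderiv ℝ (fun w : EuclideanSpace ℝ (Fin n) => ((‖y‖^2 - ‖w‖^2) / ‖w - y‖^2)^k)) _ x :=
    hD.congr_of_eventuallyEq hEq
  have hterm : ∀ i : Fin n,
      iteratedFDeriv ℝ 2 (fun z : EuclideanSpace ℝ (Fin n) => ((‖y‖^2 - ‖z‖^2) / ‖z - y‖^2)^k) x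
        ![EuclideanSpace.single i (1:ℝ), EuclideanSpace.single i (1:ℝ)]
      = (4*(k:ℝ)*((k-1:ℕ):ℝ)*((‖y‖^2-‖x‖^2) * (‖x-y‖^2)⁻¹)^(k-1-1)*((‖x-y‖^2)⁻¹*(‖x-y‖^2)⁻¹))
          * (x i * x i)
        + (8*(k:ℝ)*((‖y‖^2-‖x‖^2) * (‖x-y‖^2)⁻¹)^(k-1)*((‖x-y‖^2)⁻¹*(‖x-y‖^2)⁻¹)
           + 8*(k:ℝ)*((k-1:ℕ):ℝ)*((‖y‖^2-‖x‖^2) * (‖x-y‖^2)⁻¹)^(k-1-1)*(‖y‖^2-‖x‖^2)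
               *((‖x-y‖^2)⁻¹*(‖x-y‖^2)⁻¹*(‖x-y‖^2)⁻¹))
            * (x i * (x i - y i))
        + (8*(k:ℝ)*((‖y‖^2-‖x‖^2) * (‖x-y‖^2)⁻¹)^(k-1)*(‖y‖^2-‖x‖^2)
               *((‖x-y‖^2)⁻¹*(‖x-y‖^2)⁻¹*(‖x-y‖^2)⁻¹)
           + 4*(k:ℝ)*((k-1:ℕ):ℝ)*((‖y‖^2-‖x‖^2) * (‖x-y‖^2)⁻¹)^(k-1-1)*(‖y‖^2-‖x‖^2)^2
               *((‖x-y‖^2)⁻¹*(‖x-y‖^2)⁻¹*(‖x-y‖^2)⁻¹*(‖x-y‖^2)⁻¹))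
            * ((x i - y i) * (x i - y i))
        + (-2*(k:ℝ)*((‖y‖^2-‖x‖^2) * (‖x-y‖^2)⁻¹)^(k-1)*(‖x-y‖^2)⁻¹
            - 2*(k:ℝ)*((‖y‖^2-‖x‖^2) * (‖x-y‖^2)⁻¹)^(k-1)*(‖y‖^2-‖x‖^2)
                *((‖x-y‖^2)⁻¹*(‖x-y‖^2)⁻¹)) := by
    intro i
    rw [iteratedFDeriv_two_apply, hD2.fderiv]
    simp only [Matrix.cons_val_zero, Matrix.cons_val_one, Matrix.head_cons,
      ContinuousLinearMap.add_apply, ContinuousLinearMap.smul_apply,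
      ContinuousLinearMap.smulRight_apply, ContinuousLinearMap.coe_comp',
      Function.comp_apply, ContinuousLinearMap.coe_id', id_eq, innerSL_apply_apply,
      smul_eq_mul, EuclideanSpace.inner_single_right, conj_trivial, mul_one,
      PiLp.sub_apply]
    have hises : ∀ a b : EuclideanSpace ℝ (Fin n), (innerSL ℝ a) b = (inner ℝ a b : ℝ) :=
      fun a b => rfl
    simp only [hises, EuclideanSpace.inner_single_right, conj_trivial, PiLp.sub_apply,
      EuclideanSpace.single_apply, if_pos, ite_true, eq_self_iff_true,
      real_inner_self_eq_norm_sq, mul_one, one_mul, Pi.mul_apply]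
    rw [show ((‖x-y‖^2:ℝ)^2)⁻¹ = (‖x-y‖^2)⁻¹*(‖x-y‖^2)⁻¹ by rw [sq]; exact mul_inv _ _]
    ring
  have hN : ∑ i, x i * x i = ‖x‖^2 := by
    rw [EuclideanSpace.norm_eq, Real.sq_sqrt (by positivity)]; simp [sq]
  have hP : ∑ i, x i * (x i - y i) = (inner ℝ x (x - y) : ℝ) := by
    simp [PiLp.inner_apply, RCLike.inner_apply, mul_comm]
  have hV : ∑ i, (x i - y i) * (x i - y i) = ‖x-y‖^2 := by
    rw [EuclideanSpace.norm_eq, Real.sq_sqrt (by positivity)]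
    simp [sq]
  unfold euclideanLaplacian
  rw [Finset.sum_congr rfl (fun i _ => hterm i), Finset.sum_add_distrib,
    Finset.sum_add_distrib, Finset.sum_add_distrib,
    ← Finset.mul_sum, ← Finset.mul_sum, ← Finset.mul_sum, Finset.sum_const,
    Finset.card_univ, Fintype.card_fin, hN, hP, hV, nsmul_eq_mul]
  try ring



lemma inner_rel {n : ℕ} (x y : EuclideanSpace ℝ (Fin n)) :
    (inner ℝ x (x - y) : ℝ) = (‖x-y‖^2 - (‖y‖^2 - ‖x‖^2))/2 := by
  have h1 : (‖x - y‖:ℝ)^2 = ‖x‖^2 - 2*inner ℝ x y + ‖y‖^2 := norm_sub_sq_real x y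
  have h2 : (inner ℝ x (x - y) : ℝ) = ‖x‖^2 - inner ℝ x y := by
    rw [inner_sub_right, real_inner_self_eq_norm_sq]
  linarith

lemma ne_of_norm_lt {n : ℕ} {x y : EuclideanSpace ℝ (Fin n)} (h : ‖x‖ < ‖y‖) : x ≠ y := by
  rintro rfl; exact lt_irrefl _ h

/-- the k = 1, n = 2 case: harmonicity -/
lemma lap_one {y x : EuclideanSpace ℝ (Fin 2)} (hxy : ‖x‖ < ‖y‖) :
    euclideanLaplacian (fun z : EuclideanSpace ℝ (Fin 2) =>
      ((‖y‖^2 - ‖z‖^2) / ‖z - y‖^2)^1) x = 0 := by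
  have hne := ne_of_norm_lt hxy
  have hv : (‖x - y‖^2 : ℝ) ≠ 0 := vne hne
  rw [lap_eq 1 2 y x hne, inner_rel x y]
  norm_num
  field_simp
  ring

/-- the k ≥ 2, n = k+1 case: factored Laplacian -/
lemma lap_fact (k : ℕ) (hk : 2 ≤ k) (y x : EuclideanSpace ℝ (Fin (k+1)))
    (hxy : ‖x‖ < ‖y‖) :
    euclideanLaplacian (fun z : EuclideanSpace ℝ (Fin (k+1)) =>
      ((‖y‖^2 - ‖z‖^2) / ‖z - y‖^2)^k) x =
      4*(k:ℝ)*((k:ℝ)-1)*((‖y‖^2-‖x‖^2) * (‖x-y‖^2)⁻¹)^(k-2)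
        * ((‖y‖^2-‖x‖^2) * (inner ℝ x (x - y):ℝ) + ‖x‖^2 * ‖x-y‖^2) * ((‖x-y‖^2)⁻¹)^3 := by
  have hne := ne_of_norm_lt hxy
  have hv : (‖x - y‖^2 : ℝ) ≠ 0 := vne hne
  rw [lap_eq k (k+1) y x hne]
  rw [show ((k-1:ℕ):ℝ) = (k:ℝ)-1 from by
    rw [Nat.cast_sub (by omega)]; norm_num]
  rw [show k-1-1 = k-2 from by omega, show k-1 = (k-2)+1 from by omega, pow_succ]
  rw [inner_rel x y]
  push_cast
  rw [pow_succ _ (k-2)]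
  generalize ((‖y‖ ^ 1 * ‖y‖ - ‖x‖ ^ 2) * (‖x - y‖ ^ 2)⁻¹) ^ (k - 2) = P
  field_simp
  ring


/-- (i) For `k = 1`, `ω_y(x) = (‖y‖² − ‖x‖²)/‖x − y‖²` is harmonic in `x` on the ball
`‖x‖ < ‖y‖`; (ii) for `k ≥ 2`, `Δ(ω_y^k)(x) = 0` for every `y` with `‖y‖ > ‖x‖`
if and only if `x = 0`. -/
theorem omega_power_harmonicity
    (k : ℕ) (hk : 1 ≤ k) :
    (k = 1 → ∀ y : EuclideanSpace ℝ (Fin (k + 1)), y ≠ 0 →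
      ContDiffOn ℝ 2
          (fun x : EuclideanSpace ℝ (Fin (k + 1)) => (‖y‖ ^ 2 - ‖x‖ ^ 2) / ‖x - y‖ ^ 2)
          (Metric.ball (0 : EuclideanSpace ℝ (Fin (k + 1))) ‖y‖)
        ∧ ∀ x ∈ Metric.ball (0 : EuclideanSpace ℝ (Fin (k + 1))) ‖y‖,
            euclideanLaplacian
              (fun x : EuclideanSpace ℝ (Fin (k + 1)) =>
                (‖y‖ ^ 2 - ‖x‖ ^ 2) / ‖x - y‖ ^ 2) x = 0)
    ∧ (2 ≤ k → ∀ x : EuclideanSpace ℝ (Fin (k + 1)),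
        ((∀ y : EuclideanSpace ℝ (Fin (k + 1)), ‖x‖ < ‖y‖ →
          euclideanLaplacian
            (fun x : EuclideanSpace ℝ (Fin (k + 1)) =>
              ((‖y‖ ^ 2 - ‖x‖ ^ 2) / ‖x - y‖ ^ 2) ^ k) x = 0) ↔ x = 0)) := by
  constructor
  · rintro rfl y hy
    constructor
    · apply ContDiffOn.div
      · exact (contDiff_const.sub (contDiff_norm_sq ℝ)).contDiffOn
      · exact (ContDiff.norm_sq ℝ (contDiff_id.sub contDiff_const)).contDiffOn
      · intro x hx
        exact vne (ne_of_norm_lt (mem_ball_zero_iff.mp hx))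
    · intro x hx
      have hfun : (fun x : EuclideanSpace ℝ (Fin (1+1)) => (‖y‖^2 - ‖x‖^2) / ‖x - y‖^2)
          = (fun x : EuclideanSpace ℝ (Fin (1+1)) => ((‖y‖^2 - ‖x‖^2) / ‖x - y‖^2)^1) := by
        funext z; rw [pow_one]
      rw [hfun]
      exact lap_one (mem_ball_zero_iff.mp hx)
  · intro hk2 x
    constructor
    · intro hall
      by_contra hx0
      have hNpos : (0:ℝ) < ‖x‖^2 := pow_pos (norm_pos_iff.mpr hx0) 2
      have hyx : ‖x‖ < ‖(2:ℝ) • x‖ := by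
        rw [norm_smul]
        simp only [Real.norm_ofNat]
        nlinarith [norm_pos_iff.mpr hx0]
      have h0 := hall ((2:ℝ) • x) hyx
      rw [lap_fact k hk2 _ x hyx] at h0
      have hy2 : ‖(2:ℝ) • x‖^2 = 4*‖x‖^2 := by
        rw [norm_smul]; simp only [Real.norm_ofNat]; ring
      have hxy2 : x - (2:ℝ) • x = -x := by rw [two_smul]; abel
      rw [hxy2, norm_neg, inner_neg_right, real_inner_self_eq_norm_sq, hy2] at h0
      have hq3 : (4*‖x‖^2 - ‖x‖^2) * (‖x‖^2)⁻¹ = 3 := by field_simp; ring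
      rw [hq3] at h0
      have hflip : 4*(k:ℝ)*((k:ℝ)-1)*(3:ℝ)^(k-2)
            * ((4*‖x‖^2 - ‖x‖^2) * -(‖x‖^2) + ‖x‖^2 * ‖x‖^2) * ((‖x‖^2)⁻¹)^3
          = -(4*(k:ℝ)*((k:ℝ)-1)*(3:ℝ)^(k-2) * (2*(‖x‖^2)^2) * ((‖x‖^2)⁻¹)^3) := by
        ring
      rw [hflip, neg_eq_zero] at h0
      have hK : (2:ℝ) ≤ (k:ℝ) := by exact_mod_cast hk2
      have hpos : (0:ℝ) < 4*(k:ℝ)*((k:ℝ)-1)*(3:ℝ)^(k-2) * (2*(‖x‖^2)^2) * ((‖x‖^2)⁻¹)^3 :=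
        mul_pos (mul_pos (mul_pos (mul_pos (by linarith : (0:ℝ) < 4*(k:ℝ))
          (by linarith : (0:ℝ) < (k:ℝ)-1)) (pow_pos (by norm_num) (k-2)))
          (by positivity)) (pow_pos (inv_pos.mpr hNpos) 3)
      exact absurd h0 (ne_of_gt hpos)
    · rintro rfl y hy
      rw [lap_fact k hk2 y 0 hy]
      simp
end

section
/- Let k ≥ 1, R > 0, and x ∈ E with ‖x‖ ≠ R. Let α ∈ ℝ and set s = 1 if α ≥ 2k and s = −1 if α < 2k. Then |S^k(R)| / (|R − s·‖x‖|^k · |R + s·‖x‖|^{α−k}) ≤ ∫_{y ∈ S^k(R)} ‖x − y‖^{−α} dμH[k](y) ≤ |S^k(R)| / (|R + s·‖x‖|^k · |R − s·‖x‖|^{α−k}), where all powers of positive reals are Real.rpow and |S^k(R)| = (μH[k] (S^k(R))).toReal. -/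
open MeasureTheory Metric Set Filter
open scoped ENNReal NNReal Topology

section geom
variable {E : Type*} [NormedAddCommGroup E] [InnerProductSpace ℝ E]

noncomputable def invMap (x : E) (m : ℝ) (y : E) : E := x + (m / ‖y - x‖ ^ 2) • (y - x)

lemma key_norm (a b : E) (ha : a ≠ 0) (hb : b ≠ 0) :
    ‖(‖a‖ ^ 2)⁻¹ • a - (‖b‖ ^ 2)⁻¹ • b‖ = ‖a - b‖ / (‖a‖ * ‖b‖) := by
  have ha' : (0:ℝ) < ‖a‖ := norm_pos_iff.2 ha
  have hb' : (0:ℝ) < ‖b‖ := norm_pos_iff.2 hb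
  have h1 : ‖(‖a‖ ^ 2)⁻¹ • a - (‖b‖ ^ 2)⁻¹ • b‖ ^ 2 = (‖a - b‖ / (‖a‖ * ‖b‖)) ^ 2 := by
    rw [div_pow, @norm_sub_sq_real, @norm_sub_sq_real, norm_smul, norm_smul,
      real_inner_smul_left, real_inner_smul_right, mul_pow, mul_pow]
    simp only [norm_inv, norm_pow, Real.norm_eq_abs, abs_norm, real_inner_self_eq_norm_sq]
    field_simp
    ring
  exact (pow_left_inj₀ (norm_nonneg _) (by positivity) two_ne_zero).mp h1

lemma norm_invMap_sub (x : E) (m : ℝ) {y z : E} (hy : y ≠ x) (hz : z ≠ x) :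
    ‖invMap x m y - invMap x m z‖ = |m| * ‖y - z‖ / (‖y - x‖ * ‖z - x‖) := by
  have hy' : y - x ≠ 0 := sub_ne_zero.2 hy
  have hz' : z - x ≠ 0 := sub_ne_zero.2 hz
  have heq : invMap x m y - invMap x m z
      = m • ((‖y - x‖ ^ 2)⁻¹ • (y - x) - (‖z - x‖ ^ 2)⁻¹ • (z - x)) := by
    simp only [invMap, smul_sub, smul_smul, div_eq_mul_inv]
    abel_nf
  rw [heq, norm_smul, key_norm _ _ hy' hz', Real.norm_eq_abs]
  have h2 : y - x - (z - x) = y - z := by abel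
  rw [h2, mul_div_assoc]

lemma norm_center_invMap (x : E) (m : ℝ) {y : E} (hy : y ≠ x) :
    ‖x - invMap x m y‖ = |m| / ‖y - x‖ := by
  have hy' : (0:ℝ) < ‖y - x‖ := norm_pos_iff.2 (sub_ne_zero.2 hy)
  have heq : x - invMap x m y = (-(m / ‖y - x‖ ^ 2)) • (y - x) := by
    simp [invMap]
  rw [heq, norm_smul, Real.norm_eq_abs, abs_neg, abs_div, abs_pow, abs_norm]
  field_simp

lemma invMap_sub_center (x : E) (m : ℝ) (y : E) :
    invMap x m y - x = (m / ‖y - x‖ ^ 2) • (y - x) := by simp [invMap]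

lemma invMap_invol (x : E) {m : ℝ} (hm : m ≠ 0) {y : E} (hy : y ≠ x) :
    invMap x m (invMap x m y) = y := by
  have hy' : (0:ℝ) < ‖y - x‖ := norm_pos_iff.2 (sub_ne_zero.2 hy)
  have h1 : ‖invMap x m y - x‖ ^ 2 = m ^ 2 / ‖y - x‖ ^ 2 := by
    rw [invMap_sub_center, norm_smul, Real.norm_eq_abs, mul_pow, sq_abs, div_pow]
    field_simp
  rw [invMap, h1, invMap_sub_center, smul_smul]
  have h2 : m / (m ^ 2 / ‖y - x‖ ^ 2) * (m / ‖y - x‖ ^ 2) = 1 := by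
    field_simp
  rw [h2, one_smul]
  abel

lemma invMap_norm_eq {R : ℝ} (hR : 0 ≤ R) (x : E) {y : E} (hy : ‖y‖ = R) (hxy : y ≠ x) :
    ‖invMap x (‖x‖ ^ 2 - R ^ 2) y‖ = R := by
  have h0 : y - x ≠ 0 := sub_ne_zero.2 hxy
  have hq' : ‖y - x‖ ^ 2 = R ^ 2 - 2 * inner ℝ x y + ‖x‖ ^ 2 := by
    rw [@norm_sub_sq_real, hy, real_inner_comm]
  have hqpos : (0:ℝ) < R ^ 2 - 2 * inner ℝ x y + ‖x‖ ^ 2 :=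
    hq' ▸ pow_pos (norm_pos_iff.2 h0) 2
  have h2 : ‖invMap x (‖x‖ ^ 2 - R ^ 2) y‖ ^ 2 = R ^ 2 := by
    rw [invMap, @norm_add_sq_real, real_inner_smul_right, norm_smul, Real.norm_eq_abs,
      mul_pow, sq_abs, inner_sub_right, real_inner_self_eq_norm_sq, hq']
    set c : ℝ := (inner ℝ x y : ℝ)
    set t2 : ℝ := ‖x‖ ^ 2
    have hqne : R ^ 2 - 2 * c + t2 ≠ 0 := ne_of_gt hqpos
    field_simp
    ring
  exact (pow_left_inj₀ (norm_nonneg _) hR two_ne_zero).mp h2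

variable [MeasurableSpace E] [BorelSpace E]

lemma measurable_invMap (x : E) (m : ℝ) : Measurable (invMap x m) := by
  unfold invMap
  fun_prop

lemma lip_piece (k : ℕ) (x : E) (m : ℝ) (A : Set E) (a : ℝ) (ha : 0 < a)
    (hlow : ∀ y ∈ A, a ≤ ‖x - y‖) :
    μH[k] (invMap x m '' A) ≤ ENNReal.ofReal ((|m| / a ^ 2) ^ k) * μH[k] A := by
  have hne : ∀ y ∈ A, y ≠ x := by
    intro y hy h
    have := hlow y hy
    rw [h, sub_self, norm_zero] at this
    linarith
  have hOn : LipschitzOnWith (Real.toNNReal (|m| / a ^ 2)) (invMap x m) A := by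
    rw [lipschitzOnWith_iff_dist_le_mul]
    intro y hy z hz
    rw [dist_eq_norm, dist_eq_norm, norm_invMap_sub x m (hne y hy) (hne z hz),
      Real.coe_toNNReal _ (by positivity)]
    have h1 : a ≤ ‖y - x‖ := by rw [norm_sub_rev]; exact hlow y hy
    have h2 : a ≤ ‖z - x‖ := by rw [norm_sub_rev]; exact hlow z hz
    have key : |m| * ‖y - z‖ / (‖y - x‖ * ‖z - x‖) ≤ |m| * ‖y - z‖ / (a * a) :=
      div_le_div_of_nonneg_left (by positivity) (by positivity)
        (mul_le_mul h1 h2 ha.le (ha.le.trans h1))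
    have h3 : |m| * ‖y - z‖ / (a * a) = |m| / a ^ 2 * ‖y - z‖ := by ring
    linarith [key, h3.ge]
  have h := hOn.hausdorffMeasure_image_le (d := (k : ℝ)) (Nat.cast_nonneg k)
  have hcast : ((Real.toNNReal (|m| / a ^ 2) : ℝ≥0∞)) ^ (k : ℝ)
      = ENNReal.ofReal ((|m| / a ^ 2) ^ k) := by
    rw [ENNReal.rpow_natCast]
    rw [show ((Real.toNNReal (|m| / a ^ 2) : ℝ≥0∞)) = ENNReal.ofReal (|m| / a ^ 2) from rfl,
      ← ENNReal.ofReal_pow (by positivity)]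
  rw [hcast] at h
  exact h

end geom

lemma exists_index {d c r : ℝ} (hd : 0 < d) (hc : 1 < c) (hr : d ≤ r) :
    ∃ i : ℕ, d * c ^ i ≤ r ∧ r < d * c ^ (i + 1) := by
  have h1 : 1 ≤ r / d := (one_le_div hd).2 hr
  obtain ⟨n, hn1, hn2⟩ := exists_nat_pow_near h1 hc
  have hdr : d * (r / d) = r := by field_simp
  refine ⟨n, ?_, ?_⟩
  · have := mul_le_mul_of_nonneg_left hn1 hd.le
    rwa [hdr] at this
  · have := mul_lt_mul_of_pos_left hn2 hd
    rwa [hdr] at this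

lemma le_of_forall_ofReal_pow (X Y : ℝ≥0∞) (n : ℕ)
    (h : ∀ c : ℝ, 1 < c → X ≤ ENNReal.ofReal (c ^ n) * Y) : X ≤ Y := by
  have htend : Tendsto (fun j : ℕ => ENNReal.ofReal ((1 + 1 / (j + 1 : ℝ)) ^ n) * Y)
      atTop (𝓝 (1 * Y)) := by
    apply ENNReal.Tendsto.mul_const ?_ (Or.inl one_ne_zero)
    have h0 : Tendsto (fun j : ℕ => 1 + 1 / (j + 1 : ℝ)) atTop (𝓝 1) := by
      have := tendsto_one_div_add_atTop_nhds_zero_nat (𝕜 := ℝ)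
      have h1 := tendsto_const_nhds (x := (1:ℝ)) (f := atTop (α := ℕ)) |>.add this
      simpa using h1
    have h2 : Tendsto (fun j : ℕ => (1 + 1 / (j + 1 : ℝ)) ^ n) atTop (𝓝 1) := by
      simpa using h0.pow n
    have h3 := ENNReal.tendsto_ofReal h2
    simpa using h3
  rw [one_mul] at htend
  refine ge_of_tendsto htend (Eventually.of_forall fun j => ?_)
  have : (0:ℝ) < 1 / (j + 1 : ℝ) := by positivity
  exact h _ (by linarith)

lemma aux1 {M u : ℝ} (hM : M ≠ 0) (hu : u ≠ 0) : M / (M / u) ^ 2 = u ^ 2 / M := by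
  field_simp

lemma aux2 {M a c' : ℝ} (hM : M ≠ 0) (ha : a ≠ 0) (k : ℕ) :
    (M / a ^ 2) ^ k * (c' * a) ^ (2 * k) = c' ^ (2 * k) * M ^ k := by
  have h : M / a ^ 2 * (c' * a) ^ 2 = c' ^ 2 * M := by
    field_simp
  rw [pow_mul (c' * a), pow_mul c', ← mul_pow, ← mul_pow, h]

lemma main_eq {E : Type*} [NormedAddCommGroup E] [InnerProductSpace ℝ E]
    [MeasurableSpace E] [BorelSpace E]
    (k : ℕ) (R : ℝ) (hR : 0 < R) (x : E) (hx : ‖x‖ ≠ R) :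
    ENNReal.ofReal (|‖x‖ ^ 2 - R ^ 2| ^ k)
        * ∫⁻ y in sphere (0 : E) R, (ENNReal.ofReal (‖x - y‖ ^ (2 * k)))⁻¹ ∂μH[k]
      = μH[k] (sphere (0 : E) R) := by
  set S := sphere (0 : E) R with hS
  set m := ‖x‖ ^ 2 - R ^ 2 with hmdef
  set g : E → ℝ≥0∞ := fun y => (ENNReal.ofReal (‖x - y‖ ^ (2 * k)))⁻¹ with hg
  set I := ∫⁻ y in S, g y ∂μH[k] with hI
  have hgmeas : Measurable g := by
    rw [hg]; fun_prop
  have hm0 : m ≠ 0 := by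
    intro h
    exact hx ((pow_left_inj₀ (norm_nonneg x) hR.le two_ne_zero).mp (by linarith [sub_eq_zero.1 h]))
  have hmabs : (0:ℝ) < |m| := abs_pos.2 hm0
  set d := |‖x‖ - R| with hddef
  have hd : 0 < d := abs_pos.2 (sub_ne_zero.2 hx)
  set D := ‖x‖ + R with hDdef
  have hD : 0 < D := by positivity
  have hSmeas : MeasurableSet S := isClosed_sphere.measurableSet
  have hyS : ∀ y ∈ S, ‖y‖ = R := fun y hy => mem_sphere_zero_iff_norm.1 hy
  have hne : ∀ y ∈ S, y ≠ x := fun y hy h => hx (by rw [← hyS y hy, h])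
  have hlow : ∀ y ∈ S, d ≤ ‖x - y‖ := by
    intro y hy
    have := abs_norm_sub_norm_le x y
    rwa [hyS y hy] at this
  have hι : ∀ y ∈ S, invMap x m y ∈ S := fun y hy =>
    mem_sphere_zero_iff_norm.2 (invMap_norm_eq hR.le x (hyS y hy) (hne y hy))
  have hinvol : ∀ y ∈ S, invMap x m (invMap x m y) = y := fun y hy =>
    invMap_invol x hm0 (hne y hy)
  have huinv : ∀ y ∈ S, ‖x - invMap x m y‖ = |m| / ‖x - y‖ := fun y hy => by
    rw [norm_center_invMap x m (hne y hy), norm_sub_rev]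
  have key : ∀ c : ℝ, 1 < c →
      ENNReal.ofReal (|m| ^ k) * I ≤ ENNReal.ofReal (c ^ (2 * k)) * μH[k] S
      ∧ μH[k] S ≤ ENNReal.ofReal (c ^ (2 * k)) * (ENNReal.ofReal (|m| ^ k) * I) := by
    intro c hc
    have hc0 : 0 < c := lt_trans one_pos hc
    set A : ℕ → Set E := fun i =>
      S ∩ (fun y => ‖x - y‖) ⁻¹' Ico (d * c ^ i) (d * c ^ (i + 1)) with hA
    set B : ℕ → Set E := fun i => S ∩ invMap x m ⁻¹' A i with hB
    have hmemA : ∀ {y : E} {i : ℕ}, y ∈ A i →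
        y ∈ S ∧ d * c ^ i ≤ ‖x - y‖ ∧ ‖x - y‖ < d * c ^ (i + 1) := by
      intro y i hy
      exact ⟨hy.1, hy.2.1, hy.2.2⟩
    have hnormmeas : Measurable (fun y : E => ‖x - y‖) := by fun_prop
    have hmA : ∀ i, MeasurableSet (A i) := fun i =>
      hSmeas.inter (hnormmeas measurableSet_Ico)
    have hmB : ∀ i, MeasurableSet (B i) := fun i =>
      hSmeas.inter ((measurable_invMap x m) (hmA i))
    have hAS : ∀ i, A i ⊆ S := fun i => inter_subset_left
    have hBS : ∀ i, B i ⊆ S := fun i => inter_subset_left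
    have hBA : ∀ i, B i = invMap x m '' A i := by
      intro i
      ext z
      constructor
      · rintro ⟨hzS, hzA⟩
        exact ⟨invMap x m z, hzA, hinvol z hzS⟩
      · rintro ⟨w, hw, rfl⟩
        have hwS : w ∈ S := hAS i hw
        refine ⟨hι w hwS, ?_⟩
        show invMap x m (invMap x m w) ∈ A i
        rw [hinvol w hwS]; exact hw
    have hAB : ∀ i, A i = invMap x m '' B i := by
      intro i
      ext w
      constructor
      · intro hw
        have hwS : w ∈ S := hAS i hw
        refine ⟨invMap x m w, ⟨hι w hwS, ?_⟩, hinvol w hwS⟩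
        show invMap x m (invMap x m w) ∈ A i
        rw [hinvol w hwS]; exact hw
      · rintro ⟨z, ⟨hzS, hzA⟩, rfl⟩
        exact hzA
    have hdisjA : Pairwise (Function.onFun Disjoint A) := by
      have key2 : ∀ i j : ℕ, i < j → Disjoint (A i) (A j) := by
        intro i j hij
        rw [Set.disjoint_left]
        intro y hy1 hy2
        have h1 := (hmemA hy1).2.2
        have h2 := (hmemA hy2).2.1
        have h3 : d * c ^ (i + 1) ≤ d * c ^ j :=
          mul_le_mul_of_nonneg_left (pow_le_pow_right₀ hc.le hij) hd.le
        linarith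
      intro i j hij
      rcases hij.lt_or_gt with h | h
      · exact key2 i j h
      · exact (key2 j i h).symm
    have hdisjB : Pairwise (Function.onFun Disjoint B) := fun i j hij =>
      ((hdisjA hij).preimage (invMap x m)).mono inter_subset_right inter_subset_right
    have hcovA : ⋃ i, A i = S := by
      apply Subset.antisymm (iUnion_subset fun i => hAS i)
      intro y hy
      obtain ⟨i, h1, h2⟩ := exists_index hd hc (hlow y hy)
      exact mem_iUnion.2 ⟨i, hy, mem_Ico.2 ⟨h1, h2⟩⟩
    have hcovB : ⋃ i, B i = S := by
      apply Subset.antisymm (iUnion_subset fun i => hBS i)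
      intro y hy
      have h7 : invMap x m y ∈ ⋃ i, A i := hcovA ▸ hι y hy
      obtain ⟨i, hi⟩ := mem_iUnion.1 h7
      exact mem_iUnion.2 ⟨i, hy, hi⟩
    have hsumB : μH[k] S = ∑' i, μH[k] (B i) := by
      rw [← hcovB, measure_iUnion hdisjB hmB]
    have hsumI : I = ∑' i, ∫⁻ y in A i, g y ∂μH[k] := by
      rw [hI, ← hcovA, lintegral_iUnion hmA hdisjA]
    -- per piece bounds
    have pieceU : ∀ i, ENNReal.ofReal (|m| ^ k) * ∫⁻ y in A i, g y ∂μH[k]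
        ≤ ENNReal.ofReal (c ^ (2 * k)) * μH[k] (B i) := by
      intro i
      set a := d * c ^ i with hadef
      have ha : 0 < a := by positivity
      have hca : d * c ^ (i + 1) = c * a := by rw [hadef]; ring
      have h3 : ENNReal.ofReal (a ^ (2 * k)) * ∫⁻ y in A i, g y ∂μH[k] ≤ μH[k] (A i) := by
        rw [← lintegral_const_mul _ hgmeas]
        calc ∫⁻ y in A i, ENNReal.ofReal (a ^ (2 * k)) * g y ∂μH[k]
            ≤ ∫⁻ _ in A i, 1 ∂μH[k] := by
              apply setLIntegral_mono' (hmA i)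
              intro y hy
              have hu : a ≤ ‖x - y‖ := (hmemA hy).2.1
              have hupos : (0:ℝ) < ‖x - y‖ := lt_of_lt_of_le ha hu
              have hne0 : ENNReal.ofReal (‖x - y‖ ^ (2 * k)) ≠ 0 :=
                (ENNReal.ofReal_pos.2 (by positivity)).ne'
              calc ENNReal.ofReal (a ^ (2 * k)) * g y
                  ≤ ENNReal.ofReal (‖x - y‖ ^ (2 * k)) * g y :=
                    mul_le_mul_left (ENNReal.ofReal_le_ofReal
                      (pow_le_pow_left₀ ha.le hu _)) _
                _ = 1 := ENNReal.mul_inv_cancel hne0 ENNReal.ofReal_ne_top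
          _ = μH[k] (A i) := setLIntegral_one _
      have h2 : μH[k] (A i) ≤ ENNReal.ofReal ((c * a) ^ (2 * k) / |m| ^ k) * μH[k] (B i) := by
        rw [hAB i]
        have hlowB : ∀ y ∈ B i, |m| / (c * a) ≤ ‖x - y‖ := by
          rintro y ⟨hyS', hyA⟩
          have h5 : ‖x - invMap x m y‖ < c * a := by
            have := (hmemA hyA).2.2
            rwa [hca] at this
          have h5' : (0:ℝ) < ‖x - invMap x m y‖ := lt_of_lt_of_le ha (hmemA hyA).2.1
          have h6 : ‖x - y‖ = |m| / ‖x - invMap x m y‖ := by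
            conv_lhs => rw [← hinvol y hyS']
            rw [huinv _ (hι y hyS')]
          rw [h6]
          exact div_le_div_of_nonneg_left hmabs.le h5' h5.le
        have hlp := lip_piece k x m (B i) (|m| / (c * a)) (by positivity) hlowB
        have hconst : (|m| / (|m| / (c * a)) ^ 2) ^ k = (c * a) ^ (2 * k) / |m| ^ k := by
          have h8 : |m| / (|m| / (c * a)) ^ 2 = (c * a) ^ 2 / |m| := aux1 hmabs.ne' (by positivity)
          rw [h8, div_pow, ← pow_mul, mul_comm 2 k, pow_mul, ← pow_mul, mul_comm k 2]
        rw [hconst] at hlp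
        exact hlp
      calc ENNReal.ofReal (|m| ^ k) * ∫⁻ y in A i, g y ∂μH[k]
          = ENNReal.ofReal (|m| ^ k / a ^ (2 * k))
              * (ENNReal.ofReal (a ^ (2 * k)) * ∫⁻ y in A i, g y ∂μH[k]) := by
            rw [← mul_assoc, ← ENNReal.ofReal_mul (by positivity)]
            congr 2
            field_simp
        _ ≤ ENNReal.ofReal (|m| ^ k / a ^ (2 * k)) * μH[k] (A i) := mul_le_mul_right h3 _
        _ ≤ ENNReal.ofReal (|m| ^ k / a ^ (2 * k))
              * (ENNReal.ofReal ((c * a) ^ (2 * k) / |m| ^ k) * μH[k] (B i)) :=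
            mul_le_mul_right h2 _
        _ = ENNReal.ofReal (c ^ (2 * k)) * μH[k] (B i) := by
            rw [← mul_assoc, ← ENNReal.ofReal_mul (by positivity)]
            congr 2
            rw [mul_pow]
            field_simp
            ring
    have pieceL : ∀ i, μH[k] (B i) ≤ ENNReal.ofReal (c ^ (2 * k))
        * (ENNReal.ofReal (|m| ^ k) * ∫⁻ y in A i, g y ∂μH[k]) := by
      intro i
      set a := d * c ^ i with hadef
      have ha : 0 < a := by positivity
      have hca : d * c ^ (i + 1) = c * a := by rw [hadef]; ring
      have h1 : μH[k] (B i) ≤ ENNReal.ofReal ((|m| / a ^ 2) ^ k) * μH[k] (A i) := by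
        rw [hBA i]
        exact lip_piece k x m (A i) a ha (fun y hy => (hmemA hy).2.1)
      have h4 : μH[k] (A i) ≤ ENNReal.ofReal ((c * a) ^ (2 * k)) * ∫⁻ y in A i, g y ∂μH[k] := by
        rw [← lintegral_const_mul _ hgmeas]
        calc μH[k] (A i) = ∫⁻ _ in A i, 1 ∂μH[k] := (setLIntegral_one _).symm
          _ ≤ ∫⁻ y in A i, ENNReal.ofReal ((c * a) ^ (2 * k)) * g y ∂μH[k] := by
              apply setLIntegral_mono' (hmA i)
              intro y hy
              have hu : a ≤ ‖x - y‖ := (hmemA hy).2.1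
              have hu2 : ‖x - y‖ < c * a := hca ▸ (hmemA hy).2.2
              have hupos : (0:ℝ) < ‖x - y‖ := lt_of_lt_of_le ha hu
              have hne0 : ENNReal.ofReal (‖x - y‖ ^ (2 * k)) ≠ 0 :=
                (ENNReal.ofReal_pos.2 (by positivity)).ne'
              calc (1:ℝ≥0∞)
                  = ENNReal.ofReal (‖x - y‖ ^ (2 * k))
                      * (ENNReal.ofReal (‖x - y‖ ^ (2 * k)))⁻¹ :=
                    (ENNReal.mul_inv_cancel hne0 ENNReal.ofReal_ne_top).symm
                _ ≤ ENNReal.ofReal ((c * a) ^ (2 * k)) * g y :=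
                    mul_le_mul_left (ENNReal.ofReal_le_ofReal
                      (pow_le_pow_left₀ (norm_nonneg _) hu2.le _)) _
      calc μH[k] (B i) ≤ ENNReal.ofReal ((|m| / a ^ 2) ^ k) * μH[k] (A i) := h1
        _ ≤ ENNReal.ofReal ((|m| / a ^ 2) ^ k)
              * (ENNReal.ofReal ((c * a) ^ (2 * k)) * ∫⁻ y in A i, g y ∂μH[k]) :=
            mul_le_mul_right h4 _
        _ = ENNReal.ofReal ((|m| / a ^ 2) ^ k * (c * a) ^ (2 * k))
              * ∫⁻ y in A i, g y ∂μH[k] := by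
            rw [← mul_assoc, ← ENNReal.ofReal_mul (by positivity)]
        _ = ENNReal.ofReal (c ^ (2 * k) * |m| ^ k) * ∫⁻ y in A i, g y ∂μH[k] := by
            rw [aux2 hmabs.ne' ha.ne' k]
        _ = ENNReal.ofReal (c ^ (2 * k))
              * (ENNReal.ofReal (|m| ^ k) * ∫⁻ y in A i, g y ∂μH[k]) := by
            rw [ENNReal.ofReal_mul (by positivity), mul_assoc]
    constructor
    · calc ENNReal.ofReal (|m| ^ k) * I
          = ∑' i, ENNReal.ofReal (|m| ^ k) * ∫⁻ y in A i, g y ∂μH[k] := by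
            rw [hsumI, ENNReal.tsum_mul_left]
        _ ≤ ∑' i, ENNReal.ofReal (c ^ (2 * k)) * μH[k] (B i) := ENNReal.tsum_le_tsum pieceU
        _ = ENNReal.ofReal (c ^ (2 * k)) * μH[k] S := by
            rw [ENNReal.tsum_mul_left, ← hsumB]
    · calc μH[k] S = ∑' i, μH[k] (B i) := hsumB
        _ ≤ ∑' i, ENNReal.ofReal (c ^ (2 * k))
              * (ENNReal.ofReal (|m| ^ k) * ∫⁻ y in A i, g y ∂μH[k]) :=
            ENNReal.tsum_le_tsum pieceL
        _ = ENNReal.ofReal (c ^ (2 * k)) * (ENNReal.ofReal (|m| ^ k) * I) := by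
            rw [hsumI, ENNReal.tsum_mul_left, ENNReal.tsum_mul_left]
  apply le_antisymm
  · exact le_of_forall_ofReal_pow _ _ (2 * k) (fun c hc => (key c hc).1)
  · exact le_of_forall_ofReal_pow _ _ (2 * k) (fun c hc => (key c hc).2)

lemma aux4 {p q : ℝ} (hp : 0 < p) (hq : 0 < q) (k : ℕ) (α : ℝ) :
    q ^ (2 * (k : ℝ) - α) * (((p * q) ^ k : ℝ))⁻¹ = (p ^ (k : ℝ) * q ^ (α - (k : ℝ)))⁻¹ := by
  have hpq : ((p * q) ^ k : ℝ) = p ^ (k : ℝ) * q ^ (k : ℝ) := by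
    rw [← Real.rpow_natCast (p * q) k, Real.mul_rpow hp.le hq.le]
  have hqq : q ^ (2 * (k : ℝ) - α) * (q ^ (k : ℝ))⁻¹ = (q ^ (α - (k : ℝ)))⁻¹ := by
    rw [← Real.rpow_neg hq.le, ← Real.rpow_add hq, ← Real.rpow_neg hq.le]
    congr 1
    ring
  rw [hpq, mul_inv, mul_inv, ← hqq]
  ring

/-- Sharper bounds for `∫_{S^k(R)} ‖x − y‖^{−α}`:
`|S^k(R)| / (|R − s‖x‖|^k |R + s‖x‖|^{α−k}) ≤ ∫ ≤ |S^k(R)| / (|R + s‖x‖|^k |R − s‖x‖|^{α−k})`,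
where `s = 1` if `α ≥ 2k` and `s = −1` if `α < 2k`. -/
theorem distance_power_integral_bounds
    (k : ℕ) (hk : 1 ≤ k) (R : ℝ) (hR : 0 < R)
    (x : EuclideanSpace ℝ (Fin (k + 1))) (hx : ‖x‖ ≠ R) (α : ℝ) :
    (μH[k] (Metric.sphere (0 : EuclideanSpace ℝ (Fin (k + 1))) R)).toReal
        / (|R - (if 2 * (k : ℝ) ≤ α then (1 : ℝ) else -1) * ‖x‖| ^ (k : ℝ)
            * |R + (if 2 * (k : ℝ) ≤ α then (1 : ℝ) else -1) * ‖x‖| ^ (α - k))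
      ≤ ∫ y in Metric.sphere (0 : EuclideanSpace ℝ (Fin (k + 1))) R,
          ‖x - y‖ ^ (-α) ∂μH[k]
    ∧ ∫ y in Metric.sphere (0 : EuclideanSpace ℝ (Fin (k + 1))) R,
          ‖x - y‖ ^ (-α) ∂μH[k]
      ≤ (μH[k] (Metric.sphere (0 : EuclideanSpace ℝ (Fin (k + 1))) R)).toReal
        / (|R + (if 2 * (k : ℝ) ≤ α then (1 : ℝ) else -1) * ‖x‖| ^ (k : ℝ)
            * |R - (if 2 * (k : ℝ) ≤ α then (1 : ℝ) else -1) * ‖x‖| ^ (α - k)) := by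
  classical
  set S := sphere (0 : EuclideanSpace ℝ (Fin (k + 1))) R with hSdef
  have hSmeas : MeasurableSet S := isClosed_sphere.measurableSet
  set m := ‖x‖ ^ 2 - R ^ 2 with hm
  set d := |‖x‖ - R| with hd'
  set D := ‖x‖ + R with hD'
  have hd : 0 < d := abs_pos.2 (sub_ne_zero.2 hx)
  have hD : 0 < D := by positivity
  have hm0 : m ≠ 0 := fun h =>
    hx ((pow_left_inj₀ (norm_nonneg x) hR.le two_ne_zero).mp (sub_eq_zero.1 h))
  have hmabs : 0 < |m| := abs_pos.2 hm0
  have hdD : |m| = d * D := by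
    rw [hm, hd', hD', show ‖x‖ ^ 2 - R ^ 2 = (‖x‖ - R) * (‖x‖ + R) from by ring, abs_mul,
      abs_of_pos (by positivity : (0:ℝ) < ‖x‖ + R)]
  set g : EuclideanSpace ℝ (Fin (k + 1)) → ℝ≥0∞ :=
    fun y => (ENNReal.ofReal (‖x - y‖ ^ (2 * k)))⁻¹ with hg
  have hgmeas : Measurable g := by rw [hg]; fun_prop
  set I := ∫⁻ y in S, g y ∂μH[k] with hI
  have hEQ : ENNReal.ofReal (|m| ^ k) * I = μH[k] S := main_eq k R hR x hx
  set J := ∫⁻ y in S, ENNReal.ofReal (‖x - y‖ ^ (-α)) ∂μH[k] with hJ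
  have hJint : (∫ y in S, ‖x - y‖ ^ (-α) ∂μH[k]) = J.toReal := by
    rw [hJ]
    exact integral_eq_lintegral_of_nonneg_ae
      (ae_of_all _ fun y => Real.rpow_nonneg (norm_nonneg _) _)
      (Measurable.aestronglyMeasurable (by fun_prop))
  set e := 2 * (k : ℝ) - α with he
  set Cu := (if 2 * (k : ℝ) ≤ α then d else D) ^ e with hCu
  set Cl := (if 2 * (k : ℝ) ≤ α then D else d) ^ e with hCl
  have hCu0 : 0 < Cu := by rw [hCu]; split_ifs <;> positivity
  have hCl0 : 0 < Cl := by rw [hCl]; split_ifs <;> positivity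
  have hlowS : ∀ y ∈ S, d ≤ ‖x - y‖ := by
    intro y hy
    have h1 := abs_norm_sub_norm_le x y
    rwa [mem_sphere_zero_iff_norm.1 hy] at h1
  have hupS : ∀ y ∈ S, ‖x - y‖ ≤ D := by
    intro y hy
    have h1 := norm_sub_le x y
    rwa [mem_sphere_zero_iff_norm.1 hy] at h1
  have hiden : ∀ y ∈ S, ENNReal.ofReal (‖x - y‖ ^ (-α))
      = ENNReal.ofReal (‖x - y‖ ^ e) * g y := by
    intro y hy
    have hu0 : (0:ℝ) < ‖x - y‖ := lt_of_lt_of_le hd (hlowS y hy)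
    rw [hg]
    show ENNReal.ofReal (‖x - y‖ ^ (-α))
        = ENNReal.ofReal (‖x - y‖ ^ e) * (ENNReal.ofReal (‖x - y‖ ^ (2 * k)))⁻¹
    rw [← ENNReal.ofReal_inv_of_pos (pow_pos hu0 _),
      ← ENNReal.ofReal_mul (Real.rpow_nonneg hu0.le _)]
    congr 1
    rw [← Real.rpow_natCast ‖x - y‖ (2 * k), ← Real.rpow_neg hu0.le, ← Real.rpow_add hu0]
    congr 1
    rw [he]
    push_cast
    ring
  have hptU : ∀ y ∈ S, ENNReal.ofReal (‖x - y‖ ^ (-α)) ≤ ENNReal.ofReal Cu * g y := by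
    intro y hy
    have hu0 : (0:ℝ) < ‖x - y‖ := lt_of_lt_of_le hd (hlowS y hy)
    rw [hiden y hy]
    apply mul_le_mul_left
    apply ENNReal.ofReal_le_ofReal
    rw [hCu]
    by_cases hcase : 2 * (k : ℝ) ≤ α
    · rw [if_pos hcase]
      exact Real.rpow_le_rpow_of_nonpos hd (hlowS y hy) (by rw [he]; linarith)
    · rw [if_neg hcase]
      exact Real.rpow_le_rpow hu0.le (hupS y hy) (by rw [he]; linarith [not_le.1 hcase])
  have hptL : ∀ y ∈ S, ENNReal.ofReal Cl * g y ≤ ENNReal.ofReal (‖x - y‖ ^ (-α)) := by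
    intro y hy
    have hu0 : (0:ℝ) < ‖x - y‖ := lt_of_lt_of_le hd (hlowS y hy)
    rw [hiden y hy]
    apply mul_le_mul_left
    apply ENNReal.ofReal_le_ofReal
    rw [hCl]
    by_cases hcase : 2 * (k : ℝ) ≤ α
    · rw [if_pos hcase]
      exact Real.rpow_le_rpow_of_nonpos hu0 (hupS y hy) (by rw [he]; linarith)
    · rw [if_neg hcase]
      exact Real.rpow_le_rpow hd.le (hlowS y hy) (by rw [he]; linarith [not_le.1 hcase])
  have hJup : J ≤ ENNReal.ofReal Cu * I := by
    rw [hJ, hI, ← lintegral_const_mul _ hgmeas]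
    exact setLIntegral_mono' hSmeas hptU
  have hJlo : ENNReal.ofReal Cl * I ≤ J := by
    rw [hJ, hI, ← lintegral_const_mul _ hgmeas]
    exact setLIntegral_mono' hSmeas hptL
  rw [hJint]
  by_cases htop : μH[k] S = ⊤
  · have hItop : I = ⊤ := by
      by_contra h
      rw [htop] at hEQ
      exact ENNReal.mul_ne_top ENNReal.ofReal_ne_top h hEQ
    have hClne : ENNReal.ofReal Cl ≠ 0 := (ENNReal.ofReal_pos.2 hCl0).ne'
    have hJtop : J = ⊤ := by
      have h1 : ENNReal.ofReal Cl * I = ⊤ := by rw [hItop, ENNReal.mul_top hClne]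
      exact top_le_iff.1 (h1 ▸ hJlo)
    rw [hJtop, htop]
    simp only [ENNReal.toReal_top, zero_div]
    exact ⟨le_refl 0, le_refl 0⟩
  · have hIfin : I ≠ ⊤ := by
      intro h
      rw [h, ENNReal.mul_top (ENNReal.ofReal_pos.2 (by positivity)).ne'] at hEQ
      exact htop hEQ.symm
    have hJfin : J ≠ ⊤ :=
      ne_top_of_le_ne_top (ENNReal.mul_ne_top ENNReal.ofReal_ne_top hIfin) hJup
    have hIreal : |m| ^ k * I.toReal = (μH[k] S).toReal := by
      rw [← hEQ, ENNReal.toReal_mul, ENNReal.toReal_ofReal (by positivity)]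
    have hUreal : J.toReal ≤ Cu * I.toReal := by
      have h1 := ENNReal.toReal_mono (ENNReal.mul_ne_top ENNReal.ofReal_ne_top hIfin) hJup
      rwa [ENNReal.toReal_mul, ENNReal.toReal_ofReal hCu0.le] at h1
    have hLreal : Cl * I.toReal ≤ J.toReal := by
      have h1 := ENNReal.toReal_mono hJfin hJlo
      rwa [ENNReal.toReal_mul, ENNReal.toReal_ofReal hCl0.le] at h1
    have hIex : I.toReal = (μH[k] S).toReal / |m| ^ k := by
      rw [eq_div_iff (by positivity : (|m| ^ k : ℝ) ≠ 0)]
      linarith [hIreal]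
    by_cases hcase : 2 * (k : ℝ) ≤ α
    · simp only [if_pos hcase, one_mul]
      have hb1 : |R - ‖x‖| = d := by rw [hd', abs_sub_comm]
      have hb2 : |R + ‖x‖| = D := by
        rw [show R + ‖x‖ = ‖x‖ + R from add_comm _ _, hD']
        exact abs_of_pos hD
      rw [hb1, hb2]
      constructor
      · calc (μH[k] S).toReal / (d ^ (k : ℝ) * D ^ (α - (k : ℝ)))
            = Cl * I.toReal := by
              rw [hIex, hCl, if_pos hcase, he, hdD, div_eq_mul_inv, div_eq_mul_inv,
                ← aux4 hd hD k α]
              ring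
          _ ≤ J.toReal := hLreal
      · calc J.toReal ≤ Cu * I.toReal := hUreal
          _ = (μH[k] S).toReal / (D ^ (k : ℝ) * d ^ (α - (k : ℝ))) := by
              rw [hIex, hCu, if_pos hcase, he, hdD, div_eq_mul_inv, div_eq_mul_inv,
                mul_comm d D, ← aux4 hD hd k α]
              ring
    · simp only [if_neg hcase]
      have hb1 : |R - -1 * ‖x‖| = D := by
        rw [show R - -1 * ‖x‖ = ‖x‖ + R from by ring, hD']
        exact abs_of_pos hD
      have hb2 : |R + -1 * ‖x‖| = d := by
        rw [show R + -1 * ‖x‖ = R - ‖x‖ from by ring, hd', abs_sub_comm]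
      rw [hb1, hb2]
      constructor
      · calc (μH[k] S).toReal / (D ^ (k : ℝ) * d ^ (α - (k : ℝ)))
            = Cl * I.toReal := by
              rw [hIex, hCl, if_neg hcase, he, hdD, div_eq_mul_inv, div_eq_mul_inv,
                mul_comm d D, ← aux4 hD hd k α]
              ring
          _ ≤ J.toReal := hLreal
      · calc J.toReal ≤ Cu * I.toReal := hUreal
          _ = (μH[k] S).toReal / (d ^ (k : ℝ) * D ^ (α - (k : ℝ))) := by
              rw [hIex, hCu, if_neg hcase, he, hdD, div_eq_mul_inv, div_eq_mul_inv,
                ← aux4 hd hD k α]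
              ring
end

section
/- (One Radius Theorem, real case.) Fix ρ > 0 and an integer k ≥ 1. Let μ, ν ∈ ℝ with μ ≠ ν, μ ≤ k²/(4ρ²) and ν ≤ k²/(4ρ²). Let φ_μ, φ_ν : ℝ → ℝ be normalized radial eigenfunctions on [0, ∞) with eigenvalues μ and ν respectively. Then φ_μ(r) ≠ φ_ν(r) for every r > 0. (Hence two such eigenfunctions agreeing at one positive radius are identical.) -/
open MeasureTheory Real Set Filter

lemma aux_sinh_le {t : ℝ} (ht : 0 ≤ t) : Real.sinh t ≤ t * Real.cosh t := by
  have h : MonotoneOn (fun x : ℝ => x * Real.cosh x - Real.sinh x) (Set.Ici 0) := by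
    apply monotoneOn_of_deriv_nonneg (convex_Ici 0)
    · exact ((continuous_id.mul Real.continuous_cosh).sub Real.continuous_sinh).continuousOn
    · intro x hx
      exact ((differentiableAt_id.mul Real.differentiable_cosh.differentiableAt).sub
        Real.differentiable_sinh.differentiableAt).differentiableWithinAt
    · intro x hx
      rw [interior_Ici, Set.mem_Ioi] at hx
      have hD : HasDerivAt (fun x : ℝ => x * Real.cosh x - Real.sinh x)
          (1 * Real.cosh x + x * Real.sinh x - Real.cosh x) x :=
        ((hasDerivAt_id x).mul (Real.hasDerivAt_cosh x)).sub (Real.hasDerivAt_sinh x)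
      rw [hD.deriv]
      have := Real.sinh_pos_iff.mpr hx
      nlinarith
  have h0 := h (Set.self_mem_Ici) ht ht
  simp at h0
  linarith

lemma aux_blowup (φ : ℝ → ℝ) (δ c₁ : ℝ) (hδ : 0 < δ) (hc₁ : 0 < c₁)
    (hcont : ContinuousWithinAt φ (Set.Ici 0) 0)
    (hd : ∀ r ∈ Set.Ioo (0:ℝ) δ, DifferentiableAt ℝ φ r)
    (hlow : ∀ r ∈ Set.Ioo (0:ℝ) δ, c₁ / r ≤ deriv φ r) : False := by
  set G : ℝ → ℝ := fun r => φ r - c₁ * Real.log r with hG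
  have hGd : ∀ r ∈ Set.Ioo (0:ℝ) δ, HasDerivAt G (deriv φ r - c₁ / r) r := by
    intro r hr
    exact ((hd r hr).hasDerivAt).sub
      (((Real.hasDerivAt_log hr.1.ne').const_mul c₁).congr_deriv (by field_simp))
  have hmono : MonotoneOn G (Set.Ioo 0 δ) := by
    apply monotoneOn_of_deriv_nonneg (convex_Ioo 0 δ)
    · intro r hr; exact (hGd r hr).differentiableAt.continuousAt.continuousWithinAt
    · intro r hr
      rw [interior_Ioo] at hr
      exact (hGd r hr).differentiableAt.differentiableWithinAt
    · intro r hr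
      rw [interior_Ioo] at hr
      rw [(hGd r hr).deriv]
      have := hlow r hr
      linarith
  -- for r in (0, δ/2], φ r ≤ G (δ/2) + c₁ * log r
  have hb : ∀ r ∈ Set.Ioo (0:ℝ) (δ/2), φ r ≤ G (δ/2) + c₁ * Real.log r := by
    intro r hr
    have h1 : G r ≤ G (δ/2) := hmono ⟨hr.1, by linarith [hr.2]⟩ ⟨by linarith, by linarith⟩
      (le_of_lt hr.2)
    simp only [hG] at h1 ⊢
    linarith
  have htend : Filter.Tendsto φ (nhdsWithin 0 (Set.Ioi 0)) (nhds (φ 0)) :=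
    hcont.tendsto.mono_left (nhdsWithin_mono _ (Set.Ioi_subset_Ici le_rfl))
  have hlog : Filter.Tendsto (fun r => G (δ/2) + c₁ * Real.log r)
      (nhdsWithin 0 (Set.Ioi 0)) Filter.atBot := by
    apply Filter.tendsto_atBot_add_const_left
    exact (Real.tendsto_log_nhdsGT_zero.const_mul_atBot hc₁)
  have h1 : ∀ᶠ r in nhdsWithin 0 (Set.Ioi 0), φ r ≤ G (δ/2) + c₁ * Real.log r := by
    filter_upwards [Ioo_mem_nhdsGT_of_mem ⟨le_rfl, half_pos hδ⟩] with r hr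
    exact hb r hr
  have h2 : ∀ᶠ r in nhdsWithin 0 (Set.Ioi 0), φ 0 - 1 < φ r :=
    htend.eventually (eventually_gt_nhds (by linarith))
  have h3 : ∀ᶠ r in nhdsWithin 0 (Set.Ioi 0), G (δ/2) + c₁ * Real.log r < φ 0 - 1 :=
    hlog.eventually_lt_atBot _
  obtain ⟨r, hr1, hr2, hr3⟩ := (h1.and (h2.and h3)).exists
  linarith

lemma aux_hasDerivAt_g (ρ : ℝ) (k : ℕ) (lam : ℝ) (φ : ℝ → ℝ) (hρ : 0 < ρ) (hk : 1 ≤ k)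
    (hd : ∀ r : ℝ, 0 < r → DifferentiableAt ℝ φ r ∧ DifferentiableAt ℝ (deriv φ) r)
    (heq : ∀ r : ℝ, 0 < r →
      deriv (deriv φ) r + ((k : ℝ) / ρ) * (Real.cosh (r / ρ) / Real.sinh (r / ρ)) * deriv φ r
        + lam * φ r = 0)
    (r : ℝ) (hr : 0 < r) :
    HasDerivAt (fun t => Real.sinh (t / ρ) ^ k * deriv φ t)
      (-(lam * (Real.sinh (r / ρ) ^ k * φ r))) r := by
  have hs : Real.sinh (r / ρ) > 0 := Real.sinh_pos_iff.mpr (div_pos hr hρ)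
  have hs1 : HasDerivAt (fun t : ℝ => Real.sinh (t / ρ)) (Real.cosh (r / ρ) * (1 / ρ)) r := by
    have := (Real.hasDerivAt_sinh (r / ρ)).comp r ((hasDerivAt_id r).div_const ρ)
    exact this
  have hsk : HasDerivAt (fun t : ℝ => Real.sinh (t / ρ) ^ k)
      ((k : ℝ) * Real.sinh (r / ρ) ^ (k - 1) * (Real.cosh (r / ρ) * (1 / ρ))) r := hs1.pow k
  have hφ' : HasDerivAt (deriv φ) (deriv (deriv φ) r) r := (hd r hr).2.hasDerivAt
  have := hsk.mul hφ'
  refine this.congr_deriv ?_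
  have h2 : deriv (deriv φ) r =
      -(((k : ℝ) / ρ) * (Real.cosh (r / ρ) / Real.sinh (r / ρ)) * deriv φ r) - lam * φ r := by
    have := heq r hr; linarith
  rw [h2]
  obtain ⟨j, rfl⟩ : ∃ j, k = j + 1 := ⟨k - 1, (Nat.succ_pred_eq_of_pos hk).symm⟩
  simp only [Nat.add_sub_cancel, pow_succ]
  field_simp
  ring

lemma aux_tendsto_g (ρ : ℝ) (k : ℕ) (lam : ℝ) (φ : ℝ → ℝ) (hρ : 0 < ρ) (hk : 1 ≤ k)
    (hcont : ContinuousOn φ (Set.Ici 0))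
    (hd : ∀ r : ℝ, 0 < r → DifferentiableAt ℝ φ r ∧ DifferentiableAt ℝ (deriv φ) r)
    (heq : ∀ r : ℝ, 0 < r →
      deriv (deriv φ) r + ((k : ℝ) / ρ) * (Real.cosh (r / ρ) / Real.sinh (r / ρ)) * deriv φ r
        + lam * φ r = 0) :
    Filter.Tendsto (fun r => Real.sinh (r / ρ) ^ k * deriv φ r)
      (nhdsWithin 0 (Set.Ioi 0)) (nhds 0) := by
  set g : ℝ → ℝ := fun r => Real.sinh (r / ρ) ^ k * deriv φ r with hgdef
  set f : ℝ → ℝ := fun t => lam * (Real.sinh (t / ρ) ^ k * φ t) with hfdef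
  -- continuity of f
  have hsc : Continuous fun t : ℝ => Real.sinh (t / ρ) ^ k :=
    (Real.continuous_sinh.comp (continuous_id.div_const ρ)).pow k
  have hfc : ContinuousOn f (Set.Ici 0) := (continuousOn_const.mul
    (hsc.continuousOn.mul hcont))
  have hfio : ContinuousOn f (Set.Ioi 0) := by
    intro x hx
    exact (continuousOn_const.mul (hsc.continuousOn.mul
      (fun y hy => ((hd y hy).1.continuousAt.continuousWithinAt)))) x hx
  set F : ℝ → ℝ := fun r => ∫ t in (0:ℝ)..r, f t with hFdef
  have hFd : ∀ r ∈ Set.Ioo (0:ℝ) 1, HasDerivAt F (f r) r := by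
    intro r hr
    apply intervalIntegral.integral_hasDerivAt_right
    · apply ContinuousOn.intervalIntegrable
      rw [Set.uIcc_of_le hr.1.le]
      exact hfc.mono (Set.Icc_subset_Ici_self)
    · exact hfio.stronglyMeasurableAtFilter isOpen_Ioi r hr.1
    · exact (hfio r hr.1).continuousAt (Ioi_mem_nhds hr.1)
  have hHd : ∀ r ∈ Set.Ioo (0:ℝ) 1, HasDerivAt (fun t => g t + F t) 0 r := by
    intro r hr
    have h1 := aux_hasDerivAt_g ρ k lam φ hρ hk hd heq r hr.1
    have := h1.add (hFd r hr)
    refine this.congr_deriv ?_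
    simp [hfdef]
  -- H is constant on Ioo 0 1
  have hcst : ∀ r ∈ Set.Ioo (0:ℝ) 1, g r + F r = g (1/2) + F (1/2) := by
    have hmono : MonotoneOn (fun t => g t + F t) (Set.Ioo (0:ℝ) 1) := by
      apply monotoneOn_of_deriv_nonneg (convex_Ioo 0 1)
      · intro r hr; exact (hHd r hr).differentiableAt.continuousAt.continuousWithinAt
      · intro r hr; rw [interior_Ioo] at hr
        exact (hHd r hr).differentiableAt.differentiableWithinAt
      · intro r hr; rw [interior_Ioo] at hr; rw [(hHd r hr).deriv]
    have hanti : AntitoneOn (fun t => g t + F t) (Set.Ioo (0:ℝ) 1) := by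
      apply antitoneOn_of_deriv_nonpos (convex_Ioo 0 1)
      · intro r hr; exact (hHd r hr).differentiableAt.continuousAt.continuousWithinAt
      · intro r hr; rw [interior_Ioo] at hr
        exact (hHd r hr).differentiableAt.differentiableWithinAt
      · intro r hr; rw [interior_Ioo] at hr; rw [(hHd r hr).deriv]
    intro r hr
    have hhalf : (1/2 : ℝ) ∈ Set.Ioo (0:ℝ) 1 := by norm_num
    rcases le_total r (1/2 : ℝ) with h | h
    · exact le_antisymm (hmono hr hhalf h) (hanti hr hhalf h)
    · exact le_antisymm (hanti hhalf hr h) (hmono hhalf hr h)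
  -- F tends to 0
  have hFcont : Filter.Tendsto F (nhdsWithin 0 (Set.Ioi 0)) (nhds 0) := by
    have h1 : ContinuousOn F (Set.uIcc 0 1) :=
      intervalIntegral.continuousOn_primitive_interval
        ((hfc.mono (by rw [Set.uIcc_of_le (zero_le_one)]; exact Set.Icc_subset_Ici_self)).integrableOn_compact
          (by rw [Set.uIcc_of_le (zero_le_one)]; exact isCompact_Icc))
    have h2 : F 0 = 0 := intervalIntegral.integral_same
    have h3 := (h1 0 (by rw [Set.uIcc_of_le (zero_le_one)]; exact Set.left_mem_Icc.mpr zero_le_one))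
    have h4 : Filter.Tendsto F (nhdsWithin 0 (Set.uIcc 0 1)) (nhds 0) := by
      simpa [h2] using h3.tendsto
    apply h4.mono_left
    apply nhdsWithin_le_of_mem
    apply Filter.mem_of_superset (Ioc_mem_nhdsGT_of_mem (Set.mem_Ico.mpr ⟨le_rfl, zero_lt_one⟩))
    rw [Set.uIcc_of_le (zero_le_one)]
    exact Set.Ioc_subset_Icc_self
  -- conclude: g tends to c := g (1/2) + F (1/2), now show c = 0
  set c : ℝ := g (1/2) + F (1/2) with hcdef
  clear_value c
  have hgt : Filter.Tendsto g (nhdsWithin 0 (Set.Ioi 0)) (nhds c) := by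
    have h5 : Filter.Tendsto (fun r => c - F r) (nhdsWithin 0 (Set.Ioi 0)) (nhds (c - 0)) :=
      tendsto_const_nhds.sub hFcont
    rw [sub_zero] at h5
    apply h5.congr'
    filter_upwards [Ioo_mem_nhdsGT_of_mem (Set.mem_Ico.mpr ⟨le_rfl, zero_lt_one⟩)] with r hr
    have := hcst r hr; linarith
  -- preparation for the blow-up argument
  have hB : ∀ δ : ℝ, 0 < δ → δ ≤ ρ → ∀ r ∈ Set.Ioo (0:ℝ) δ,
      Real.sinh (r / ρ) ^ k ≤ (Real.cosh 1 / ρ) ^ k * δ ^ (k - 1) * r := by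
    intro δ hδ hδρ r hr
    have hrρ : 0 < r / ρ := div_pos hr.1 hρ
    have h1 : Real.sinh (r / ρ) ≤ (Real.cosh 1 / ρ) * r := by
      have h2 : Real.sinh (r / ρ) ≤ (r / ρ) * Real.cosh (r / ρ) := aux_sinh_le hrρ.le
      have h3 : Real.cosh (r / ρ) ≤ Real.cosh 1 := by
        rw [Real.cosh_le_cosh]
        rw [abs_of_nonneg hrρ.le, abs_one]
        rw [div_le_one hρ]
        calc r ≤ δ := hr.2.le
        _ ≤ ρ := hδρ
      calc Real.sinh (r / ρ) ≤ (r / ρ) * Real.cosh (r / ρ) := h2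
        _ ≤ (r / ρ) * Real.cosh 1 := by
            apply mul_le_mul_of_nonneg_left h3 hrρ.le
        _ = (Real.cosh 1 / ρ) * r := by ring
    calc Real.sinh (r / ρ) ^ k ≤ ((Real.cosh 1 / ρ) * r) ^ k := by
          apply pow_le_pow_left₀ (Real.sinh_nonneg_iff.mpr hrρ.le) h1
      _ = (Real.cosh 1 / ρ) ^ k * (r ^ (k - 1) * r) := by
          rw [mul_pow]
          congr 1
          conv_lhs => rw [show k = (k - 1) + 1 from (Nat.succ_pred_eq_of_pos hk).symm]
          rw [pow_succ]
      _ ≤ (Real.cosh 1 / ρ) ^ k * (δ ^ (k - 1) * r) := by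
          apply mul_le_mul_of_nonneg_left _ (by positivity)
          apply mul_le_mul_of_nonneg_right _ hr.1.le
          exact pow_le_pow_left₀ hr.1.le hr.2.le _
      _ = (Real.cosh 1 / ρ) ^ k * δ ^ (k - 1) * r := by ring
  have hderiv_eq : ∀ r : ℝ, 0 < r → deriv φ r = g r / Real.sinh (r / ρ) ^ k := by
    intro r hr
    have hs : (0:ℝ) < Real.sinh (r / ρ) ^ k :=
      pow_pos (Real.sinh_pos_iff.mpr (div_pos hr hρ)) k
    rw [hgdef]
    field_simp
  rcases lt_trichotomy c 0 with hc | hc | hc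
  · exfalso
    have h1 : ∀ᶠ r in nhdsWithin 0 (Set.Ioi 0), g r < c/2 :=
      hgt.eventually (eventually_lt_nhds (show c < c/2 by linarith))
    obtain ⟨u, hu, husub⟩ := mem_nhdsGT_iff_exists_Ioo_subset.mp h1
    rw [Set.mem_Ioi] at hu
    set δ : ℝ := min u ρ with hδdef
    have hδpos : 0 < δ := lt_min hu hρ
    set B : ℝ := (Real.cosh 1 / ρ) ^ k * δ ^ (k - 1) with hBdef
    have hBpos : 0 < B := by positivity
    have hc₁pos : 0 < (-c/2) / B := div_pos (by linarith) hBpos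
    apply aux_blowup (fun r => -φ r) δ ((-c/2) / B) hδpos hc₁pos
      ((hcont 0 Set.self_mem_Ici).neg)
      (fun r hr => ((hd r hr.1).1.neg))
    intro r hr
    rw [deriv.fun_neg]
    have hgr : g r < c/2 := husub ⟨hr.1, lt_of_lt_of_le hr.2 (min_le_left _ _)⟩
    have hsB := hB δ hδpos (min_le_right _ _) r hr
    have hs : (0:ℝ) < Real.sinh (r / ρ) ^ k :=
      pow_pos (Real.sinh_pos_iff.mpr (div_pos hr.1 hρ)) k
    have hc₁B : (-c/2) / B * B = -c/2 := div_mul_cancel₀ _ hBpos.ne'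
    have key : (-c/2) / B / r ≤ (-(g r)) / Real.sinh (r / ρ) ^ k := by
      rw [div_le_div_iff₀ hr.1 hs]
      have f1 : (-c/2) / B * Real.sinh (r / ρ) ^ k ≤ (-c/2) / B * (B * r) := by
        apply mul_le_mul_of_nonneg_left _ hc₁pos.le
        calc Real.sinh (r / ρ) ^ k ≤ (Real.cosh 1 / ρ) ^ k * δ ^ (k - 1) * r := hsB
          _ = B * r := by rw [hBdef]
      have f2 : (-c/2) / B * (B * r) = (-c/2) * r := by rw [← mul_assoc, hc₁B]
      have f3 : g r * r < (c/2) * r := mul_lt_mul_of_pos_right hgr hr.1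
      nlinarith
    rw [hderiv_eq r hr.1]
    calc (-c/2) / B / r ≤ (-(g r)) / Real.sinh (r / ρ) ^ k := key
      _ = -(g r / Real.sinh (r / ρ) ^ k) := neg_div _ _
  · rwa [hc] at hgt
  · exfalso
    have h1 : ∀ᶠ r in nhdsWithin 0 (Set.Ioi 0), c/2 < g r :=
      hgt.eventually (eventually_gt_nhds (show c/2 < c by linarith))
    obtain ⟨u, hu, husub⟩ := mem_nhdsGT_iff_exists_Ioo_subset.mp h1
    rw [Set.mem_Ioi] at hu
    set δ : ℝ := min u ρ with hδdef
    have hδpos : 0 < δ := lt_min hu hρ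
    set B : ℝ := (Real.cosh 1 / ρ) ^ k * δ ^ (k - 1) with hBdef
    have hBpos : 0 < B := by positivity
    have hc₁pos : 0 < (c/2) / B := div_pos (by linarith) hBpos
    apply aux_blowup φ δ ((c/2) / B) hδpos hc₁pos
      (hcont 0 Set.self_mem_Ici)
      (fun r hr => (hd r hr.1).1)
    intro r hr
    have hgr : c/2 < g r := husub ⟨hr.1, lt_of_lt_of_le hr.2 (min_le_left _ _)⟩
    have hsB := hB δ hδpos (min_le_right _ _) r hr
    have hs : (0:ℝ) < Real.sinh (r / ρ) ^ k :=
      pow_pos (Real.sinh_pos_iff.mpr (div_pos hr.1 hρ)) k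
    have hc₁B : (c/2) / B * B = c/2 := div_mul_cancel₀ _ hBpos.ne'
    rw [hderiv_eq r hr.1, div_le_div_iff₀ hr.1 hs]
    have f1 : (c/2) / B * Real.sinh (r / ρ) ^ k ≤ (c/2) / B * (B * r) := by
      apply mul_le_mul_of_nonneg_left _ hc₁pos.le
      calc Real.sinh (r / ρ) ^ k ≤ (Real.cosh 1 / ρ) ^ k * δ ^ (k - 1) * r := hsB
        _ = B * r := by rw [hBdef]
    have f2 : (c/2) / B * (B * r) = (c/2) * r := by rw [← mul_assoc, hc₁B]
    have f3 : (c/2) * r < g r * r := mul_lt_mul_of_pos_right hgr hr.1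
    nlinarith

lemma aux_pos (ρ : ℝ) (k : ℕ) (lam : ℝ) (φ : ℝ → ℝ) (hρ : 0 < ρ) (hk : 1 ≤ k)
    (hlam : lam ≤ (k : ℝ) ^ 2 / (4 * ρ ^ 2))
    (hcont : ContinuousOn φ (Set.Ici 0)) (h0 : φ 0 = 1)
    (hd : ∀ r : ℝ, 0 < r → DifferentiableAt ℝ φ r ∧ DifferentiableAt ℝ (deriv φ) r)
    (heq : ∀ r : ℝ, 0 < r →
      deriv (deriv φ) r + ((k : ℝ) / ρ) * (Real.cosh (r / ρ) / Real.sinh (r / ρ)) * deriv φ r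
        + lam * φ r = 0) :
    ∀ r : ℝ, 0 ≤ r → 0 < φ r := by
  by_contra hcon
  push_neg at hcon
  obtain ⟨r₂, hr₂0, hr₂⟩ := hcon
  have hr₂pos : 0 < r₂ := by
    rcases lt_or_eq_of_le hr₂0 with h | h
    · exact h
    · exfalso; rw [← h, h0] at hr₂; linarith
  set Z : Set ℝ := Set.Icc 0 r₂ ∩ φ ⁻¹' (Set.Iic 0) with hZdef
  have hZc : IsClosed Z := by
    apply ContinuousOn.preimage_isClosed_of_isClosed
      (hcont.mono (Set.Icc_subset_Ici_self)) isClosed_Icc isClosed_Iic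
  have hZne : Z.Nonempty := ⟨r₂, ⟨Set.right_mem_Icc.mpr hr₂0, hr₂⟩⟩
  have hbdd : BddBelow Z := ⟨0, fun x hx => hx.1.1⟩
  set r₁ : ℝ := sInf Z with hr₁def
  have hr₁Z : r₁ ∈ Z := hZc.csInf_mem hZne hbdd
  have hφr₁ : φ r₁ ≤ 0 := hr₁Z.2
  have hr₁pos : 0 < r₁ := by
    rcases lt_or_eq_of_le hr₁Z.1.1 with h | h
    · exact h
    · exfalso; rw [← h, h0] at hφr₁; linarith
  have hpos : ∀ r : ℝ, 0 ≤ r → r < r₁ → 0 < φ r := by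
    intro r h0r hrr
    by_contra h; push_neg at h
    have hmem : r ∈ Z := ⟨⟨h0r, le_trans hrr.le hr₁Z.1.2⟩, h⟩
    have := csInf_le hbdd hmem
    linarith
  -- supersolution and Wronskian-type function
  set ψ : ℝ → ℝ := fun r => Real.exp (-((k : ℝ)/(2*ρ)) * r) with hψdef
  have hψpos : ∀ r : ℝ, 0 < ψ r := fun r => Real.exp_pos _
  have hψd : ∀ r : ℝ, HasDerivAt ψ (-((k : ℝ)/(2*ρ)) * ψ r) r := by
    intro r
    have h1 : HasDerivAt (fun t : ℝ => -((k : ℝ)/(2*ρ)) * t) (-((k : ℝ)/(2*ρ))) r := by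
      simpa using (hasDerivAt_id r).const_mul (-((k : ℝ)/(2*ρ)))
    have h2 := h1.exp
    simpa [hψdef, mul_comm] using h2
  set V : ℝ → ℝ := fun r => Real.sinh (r / ρ) ^ k * deriv φ r * ψ r
      + ((k : ℝ)/(2*ρ)) * (Real.sinh (r / ρ) ^ k * φ r * ψ r) with hVdef
  set D : ℝ → ℝ := fun r => ψ r * Real.sinh (r / ρ) ^ (k - 1) * φ r *
      (((k : ℝ)^2/(2*ρ^2)) * Real.cosh (r / ρ)
        - (lam + (k : ℝ)^2/(4*ρ^2)) * Real.sinh (r / ρ)) with hDdef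
  have hVd : ∀ r : ℝ, 0 < r → HasDerivAt V (D r) r := by
    intro r hr
    have hg := aux_hasDerivAt_g ρ k lam φ hρ hk hd heq r hr
    have hs1 : HasDerivAt (fun t : ℝ => Real.sinh (t / ρ)) (Real.cosh (r / ρ) * (1 / ρ)) r := by
      exact (Real.hasDerivAt_sinh (r / ρ)).comp r ((hasDerivAt_id r).div_const ρ)
    have hsk : HasDerivAt (fun t : ℝ => Real.sinh (t / ρ) ^ k)
        ((k : ℝ) * Real.sinh (r / ρ) ^ (k - 1) * (Real.cosh (r / ρ) * (1 / ρ))) r := hs1.pow k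
    have hφ : HasDerivAt φ (deriv φ r) r := (hd r hr).1.hasDerivAt
    have hVd' := (hg.mul (hψd r)).add ((((hsk.mul hφ).mul (hψd r))).const_mul ((k : ℝ)/(2*ρ)))
    refine hVd'.congr_deriv ?_
    have hs : Real.sinh (r / ρ) > 0 := Real.sinh_pos_iff.mpr (div_pos hr hρ)
    obtain ⟨j, rfl⟩ : ∃ j, k = j + 1 := ⟨k - 1, (Nat.succ_pred_eq_of_pos hk).symm⟩
    simp only [hDdef, Nat.add_sub_cancel, pow_succ, Nat.cast_add, Nat.cast_one, Pi.mul_apply]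
    field_simp
    ring
  have hDpos : ∀ r : ℝ, 0 < r → r < r₁ → 0 < D r := by
    intro r hr hrr
    have hφpos := hpos r hr.le hrr
    have hs : 0 < Real.sinh (r / ρ) := Real.sinh_pos_iff.mpr (div_pos hr hρ)
    have hsc : Real.sinh (r / ρ) < Real.cosh (r / ρ) := by
      have h1 : Real.cosh (r / ρ) - Real.sinh (r / ρ) = Real.exp (-(r / ρ)) :=
        Real.cosh_sub_sinh _
      have := Real.exp_pos (-(r / ρ))
      linarith
    have hkpos : (0:ℝ) < (k:ℝ) := by exact_mod_cast hk
    have hlast : 0 < ((k : ℝ)^2/(2*ρ^2)) * Real.cosh (r / ρ)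
        - (lam + (k : ℝ)^2/(4*ρ^2)) * Real.sinh (r / ρ) := by
      rcases le_or_gt (lam + (k : ℝ)^2/(4*ρ^2)) 0 with h | h
      · have hc := Real.cosh_pos (x := r / ρ)
        have f1 : 0 < (k : ℝ)^2/(2*ρ^2) * Real.cosh (r / ρ) :=
          mul_pos (by positivity) hc
        have f2 : 0 ≤ (-(lam + (k : ℝ)^2/(4*ρ^2))) * Real.sinh (r / ρ) :=
          mul_nonneg (by linarith) hs.le
        nlinarith
      · have h2 : lam + (k : ℝ)^2/(4*ρ^2) ≤ (k : ℝ)^2/(2*ρ^2) := by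
          have h3 : (k : ℝ)^2/(4*ρ^2) + (k : ℝ)^2/(4*ρ^2) = (k : ℝ)^2/(2*ρ^2) := by
            field_simp; ring
          linarith
        have f1 : (lam + (k : ℝ)^2/(4*ρ^2)) * Real.sinh (r / ρ)
            < (lam + (k : ℝ)^2/(4*ρ^2)) * Real.cosh (r / ρ) :=
          mul_lt_mul_of_pos_left hsc h
        have f2 : (lam + (k : ℝ)^2/(4*ρ^2)) * Real.cosh (r / ρ)
            ≤ (k : ℝ)^2/(2*ρ^2) * Real.cosh (r / ρ) :=
          mul_le_mul_of_nonneg_right h2 (lt_trans hs hsc).le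
        linarith
    have := hψpos r
    have hsp : 0 < Real.sinh (r / ρ) ^ (k - 1) := pow_pos hs _
    rw [hDdef]
    positivity
  -- V tends to 0 at 0+
  have hVt : Filter.Tendsto V (nhdsWithin 0 (Set.Ioi 0)) (nhds 0) := by
    have hgt := aux_tendsto_g ρ k lam φ hρ hk hcont hd heq
    have hψt : Filter.Tendsto ψ (nhdsWithin 0 (Set.Ioi 0)) (nhds 1) := by
      have : Continuous ψ := Real.continuous_exp.comp (continuous_const.mul continuous_id)
      have h1 := this.tendsto 0
      simp only [hψdef, mul_zero, Real.exp_zero] at h1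
      exact h1.mono_left nhdsWithin_le_nhds
    have hst : Filter.Tendsto (fun r : ℝ => Real.sinh (r / ρ) ^ k)
        (nhdsWithin 0 (Set.Ioi 0)) (nhds 0) := by
      have : Continuous (fun r : ℝ => Real.sinh (r / ρ) ^ k) :=
        (Real.continuous_sinh.comp (continuous_id.div_const ρ)).pow k
      have h1 := this.tendsto 0
      simp only [zero_div, Real.sinh_zero, zero_pow (by omega : k ≠ 0)] at h1
      exact h1.mono_left nhdsWithin_le_nhds
    have hφt : Filter.Tendsto φ (nhdsWithin 0 (Set.Ioi 0)) (nhds 1) := by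
      have h1 := (hcont 0 Set.self_mem_Ici).tendsto
      rw [h0] at h1
      exact h1.mono_left (nhdsWithin_mono _ (Set.Ioi_subset_Ici le_rfl))
    have h5 := (hgt.mul hψt).add (((hst.mul hφt).mul hψt).const_mul ((k : ℝ)/(2*ρ)))
    have hlim : (0:ℝ) * 1 + (k : ℝ)/(2*ρ) * (0 * 1 * 1) = 0 := by ring
    rw [hlim] at h5
    exact h5
  -- V is strictly monotone on (0, r₁]
  have hVmono : StrictMonoOn V (Set.Ioc 0 r₁) := by
    apply strictMonoOn_of_deriv_pos (convex_Ioc 0 r₁)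
    · intro r hr
      exact (hVd r hr.1).differentiableAt.continuousAt.continuousWithinAt
    · intro r hr
      rw [interior_Ioc] at hr
      rw [(hVd r hr.1).deriv]
      exact hDpos r hr.1 hr.2
  -- V (r₁/2) ≥ 0
  have hV2 : 0 ≤ V (r₁/2) := by
    apply le_of_tendsto hVt
    filter_upwards [Ioo_mem_nhdsGT_of_mem (Set.mem_Ico.mpr ⟨le_rfl, half_pos hr₁pos⟩)] with t ht
    exact (hVmono (Set.mem_Ioc.mpr ⟨ht.1, by linarith [ht.2]⟩)
      (Set.mem_Ioc.mpr ⟨half_pos hr₁pos, half_le_self hr₁pos.le⟩) ht.2).le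
  have hV1 : 0 < V r₁ := lt_of_le_of_lt hV2
    (hVmono (Set.mem_Ioc.mpr ⟨half_pos hr₁pos, half_le_self hr₁pos.le⟩)
      (Set.mem_Ioc.mpr ⟨hr₁pos, le_rfl⟩) (by linarith))
  -- but V r₁ ≤ 0
  have hderiv_nonpos : deriv φ r₁ ≤ 0 := by
    have hslope : Filter.Tendsto (slope φ r₁) (nhdsWithin r₁ (Set.Iio r₁)) (nhds (deriv φ r₁)) :=
      ((hasDerivAt_iff_tendsto_slope.mp (hd r₁ hr₁pos).1.hasDerivAt)).mono_left
        (nhdsWithin_mono _ (fun x hx => ne_of_lt hx))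
    apply le_of_tendsto hslope
    filter_upwards [Ioo_mem_nhdsLT_of_mem (Set.mem_Ioc.mpr ⟨hr₁pos, le_rfl⟩)] with t ht
    have hφt := hpos t ht.1.le ht.2
    rw [slope_def_field]
    apply div_nonpos_of_nonneg_of_nonpos
    · linarith
    · linarith [ht.2]
  have hV1' : V r₁ ≤ 0 := by
    rw [hVdef]
    have hs : 0 < Real.sinh (r₁ / ρ) ^ k := pow_pos (Real.sinh_pos_iff.mpr (div_pos hr₁pos hρ)) k
    have h1 : Real.sinh (r₁ / ρ) ^ k * deriv φ r₁ * ψ r₁ ≤ 0 :=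
      mul_nonpos_of_nonpos_of_nonneg (mul_nonpos_of_nonneg_of_nonpos hs.le hderiv_nonpos)
        (hψpos r₁).le
    have h2 : ((k : ℝ)/(2*ρ)) * (Real.sinh (r₁ / ρ) ^ k * φ r₁ * ψ r₁) ≤ 0 := by
      apply mul_nonpos_of_nonneg_of_nonpos (by positivity)
      apply mul_nonpos_of_nonpos_of_nonneg _ (hψpos r₁).le
      exact mul_nonpos_of_nonneg_of_nonpos hs.le hφr₁
    linarith
  linarith

lemma aux_main (ρ : ℝ) (hρ : 0 < ρ) (k : ℕ) (hk : 1 ≤ k)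
    (μ ν : ℝ) (hlt : μ < ν)
    (hμle : μ ≤ (k : ℝ) ^ 2 / (4 * ρ ^ 2)) (hνle : ν ≤ (k : ℝ) ^ 2 / (4 * ρ ^ 2))
    (φμ φν : ℝ → ℝ)
    (hcμ : ContinuousOn φμ (Set.Ici 0)) (h0μ : φμ 0 = 1)
    (hdμ : ∀ r : ℝ, 0 < r → DifferentiableAt ℝ φμ r ∧ DifferentiableAt ℝ (deriv φμ) r)
    (heqμ : ∀ r : ℝ, 0 < r →
      deriv (deriv φμ) r
        + ((k : ℝ) / ρ) * (Real.cosh (r / ρ) / Real.sinh (r / ρ)) * deriv φμ r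
        + μ * φμ r = 0)
    (hcν : ContinuousOn φν (Set.Ici 0)) (h0ν : φν 0 = 1)
    (hdν : ∀ r : ℝ, 0 < r → DifferentiableAt ℝ φν r ∧ DifferentiableAt ℝ (deriv φν) r)
    (heqν : ∀ r : ℝ, 0 < r →
      deriv (deriv φν) r
        + ((k : ℝ) / ρ) * (Real.cosh (r / ρ) / Real.sinh (r / ρ)) * deriv φν r
        + ν * φν r = 0) :
    ∀ r : ℝ, 0 < r → φν r < φμ r := by
  have hposμ := aux_pos ρ k μ φμ hρ hk hμle hcμ h0μ hdμ heqμ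
  have hposν := aux_pos ρ k ν φν hρ hk hνle hcν h0ν hdν heqν
  set W : ℝ → ℝ := fun t => Real.sinh (t / ρ) ^ k * deriv φμ t * φν t
      - Real.sinh (t / ρ) ^ k * deriv φν t * φμ t with hWdef
  have hWd : ∀ r : ℝ, 0 < r →
      HasDerivAt W ((ν - μ) * Real.sinh (r / ρ) ^ k * (φμ r * φν r)) r := by
    intro r hr
    have hgμ := aux_hasDerivAt_g ρ k μ φμ hρ hk hdμ heqμ r hr
    have hgν := aux_hasDerivAt_g ρ k ν φν hρ hk hdν heqν r hr
    have hφμ : HasDerivAt φμ (deriv φμ r) r := (hdμ r hr).1.hasDerivAt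
    have hφν : HasDerivAt φν (deriv φν r) r := (hdν r hr).1.hasDerivAt
    have h1 := (hgμ.mul hφν).sub (hgν.mul hφμ)
    refine h1.congr_deriv ?_
    ring
  have hφμt : Filter.Tendsto φμ (nhdsWithin 0 (Set.Ioi 0)) (nhds 1) := by
    have h1 := (hcμ 0 Set.self_mem_Ici).tendsto
    rw [h0μ] at h1
    exact h1.mono_left (nhdsWithin_mono _ (Set.Ioi_subset_Ici le_rfl))
  have hφνt : Filter.Tendsto φν (nhdsWithin 0 (Set.Ioi 0)) (nhds 1) := by
    have h1 := (hcν 0 Set.self_mem_Ici).tendsto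
    rw [h0ν] at h1
    exact h1.mono_left (nhdsWithin_mono _ (Set.Ioi_subset_Ici le_rfl))
  have hWt : Filter.Tendsto W (nhdsWithin 0 (Set.Ioi 0)) (nhds 0) := by
    have h1 := ((aux_tendsto_g ρ k μ φμ hρ hk hcμ hdμ heqμ).mul hφνt).sub
      ((aux_tendsto_g ρ k ν φν hρ hk hcν hdν heqν).mul hφμt)
    have hlim : (0:ℝ) * 1 - 0 * 1 = 0 := by ring
    rw [hlim] at h1
    exact h1
  have hWmono : StrictMonoOn W (Set.Ioi 0) := by
    apply strictMonoOn_of_deriv_pos (convex_Ioi 0)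
    · intro r hr
      exact (hWd r hr).differentiableAt.continuousAt.continuousWithinAt
    · intro r hr
      rw [interior_Ioi] at hr
      rw [(hWd r hr).deriv]
      have hs : 0 < Real.sinh (r / ρ) ^ k :=
        pow_pos (Real.sinh_pos_iff.mpr (div_pos hr hρ)) k
      have := hposμ r hr.le
      have := hposν r hr.le
      have : 0 < ν - μ := by linarith
      positivity
  have hWpos : ∀ r : ℝ, 0 < r → 0 < W r := by
    intro r hr
    have hhalf : r/2 ∈ Set.Ioi (0:ℝ) := half_pos hr
    have h2 : 0 ≤ W (r/2) := by
      apply le_of_tendsto hWt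
      filter_upwards [Ioo_mem_nhdsGT_of_mem (Set.mem_Ico.mpr ⟨le_rfl, half_pos hr⟩)] with t ht
      exact (hWmono ht.1 hhalf ht.2).le
    exact lt_of_le_of_lt h2 (hWmono hhalf (Set.mem_Ioi.mpr hr) (by linarith))
  -- quotient
  set q : ℝ → ℝ := fun t => φμ t / φν t with hqdef
  have hqd : ∀ r : ℝ, 0 < r → HasDerivAt q
      ((deriv φμ r * φν r - φμ r * deriv φν r) / (φν r) ^ 2) r := by
    intro r hr
    exact ((hdμ r hr).1.hasDerivAt).div ((hdν r hr).1.hasDerivAt) (ne_of_gt (hposν r hr.le))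
  have hqmono : StrictMonoOn q (Set.Ioi 0) := by
    apply strictMonoOn_of_deriv_pos (convex_Ioi 0)
    · intro r hr
      exact (hqd r hr).differentiableAt.continuousAt.continuousWithinAt
    · intro r hr
      rw [interior_Ioi] at hr
      rw [(hqd r hr).deriv]
      apply div_pos _ (pow_pos (hposν r hr.le) 2)
      have hs : 0 < Real.sinh (r / ρ) ^ k :=
        pow_pos (Real.sinh_pos_iff.mpr (div_pos hr hρ)) k
      have h1 : deriv φμ r * φν r - φμ r * deriv φν r = W r / Real.sinh (r / ρ) ^ k := by
        rw [hWdef]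
        field_simp
      rw [h1]
      exact div_pos (hWpos r hr) hs
  have hqt : Filter.Tendsto q (nhdsWithin 0 (Set.Ioi 0)) (nhds 1) := by
    have h1 := hφμt.div hφνt one_ne_zero
    rw [div_one] at h1; exact h1
  intro r hr
  have hq2 : 1 ≤ q (r/2) := by
    apply le_of_tendsto hqt
    filter_upwards [Ioo_mem_nhdsGT_of_mem (Set.mem_Ico.mpr ⟨le_rfl, half_pos hr⟩)] with t ht
    exact (hqmono ht.1 (Set.mem_Ioi.mpr (half_pos hr)) ht.2).le
  have hq1 : 1 < q r :=
    lt_of_le_of_lt hq2 (hqmono (Set.mem_Ioi.mpr (half_pos hr)) (Set.mem_Ioi.mpr hr) (by linarith))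
  have := (one_lt_div (hposν r hr.le)).mp hq1
  exact this

/-- One Radius Theorem, real case: if `μ ≠ ν` are real eigenvalues with
`μ, ν ≤ k²/(4ρ²)`, then the corresponding normalized radial eigenfunctions differ at
every positive radius. -/
theorem one_radius_theorem_real
    (ρ : ℝ) (hρ : 0 < ρ) (k : ℕ) (hk : 1 ≤ k)
    (μ ν : ℝ) (hμν : μ ≠ ν)
    (hμle : μ ≤ (k : ℝ) ^ 2 / (4 * ρ ^ 2)) (hνle : ν ≤ (k : ℝ) ^ 2 / (4 * ρ ^ 2))
    (φμ φν : ℝ → ℝ)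
    (hcμ : ContinuousOn φμ (Set.Ici 0)) (h0μ : φμ 0 = 1)
    (hdμ : ∀ r : ℝ, 0 < r → DifferentiableAt ℝ φμ r ∧ DifferentiableAt ℝ (deriv φμ) r)
    (heqμ : ∀ r : ℝ, 0 < r →
      deriv (deriv φμ) r
        + ((k : ℝ) / ρ) * (Real.cosh (r / ρ) / Real.sinh (r / ρ)) * deriv φμ r
        + μ * φμ r = 0)
    (hcν : ContinuousOn φν (Set.Ici 0)) (h0ν : φν 0 = 1)
    (hdν : ∀ r : ℝ, 0 < r → DifferentiableAt ℝ φν r ∧ DifferentiableAt ℝ (deriv φν) r)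
    (heqν : ∀ r : ℝ, 0 < r →
      deriv (deriv φν) r
        + ((k : ℝ) / ρ) * (Real.cosh (r / ρ) / Real.sinh (r / ρ)) * deriv φν r
        + ν * φν r = 0) :
    ∀ r : ℝ, 0 < r → φμ r ≠ φν r := by
  intro r hr
  rcases lt_or_gt_of_ne hμν with h | h
  · exact ne_of_gt
      (aux_main ρ hρ k hk μ ν h hμle hνle φμ φν hcμ h0μ hdμ heqμ hcν h0ν hdν heqν r hr)
  · exact ne_of_lt
      (aux_main ρ hρ k hk ν μ h hνle hμle φν φμ hcν h0ν hdν heqν hcμ h0μ hdμ heqμ r hr)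
end

section
/- (Explicit radial Dirichlet eigenfunctions in hyperbolic 3-space, k = 2.) Fix ρ > 0 and δ > 0. (i) For every positive integer j, set λ_j = 1/ρ² + (πj/δ)² and define φ_j : ℝ → ℝ by φ_j(r) = δ·sin(πjr/δ)/(πjρ·sinh(r/ρ)) for r ∈ (0, δ] and φ_j(0) = 1. Then φ_j is continuous on [0, δ], φ_j(δ) = 0, and φ_j''(r) + (2/ρ)·coth(r/ρ)·φ_j'(r) + λ_j·φ_j(r) = 0 for all r ∈ (0, δ). (ii) Conversely, if λ ∈ ℝ and φ : ℝ → ℝ is continuous on [0, δ], twice differentiable on (0, δ), satisfies φ(0) = 1, φ(δ) = 0, and φ''(r) + (2/ρ)·coth(r/ρ)·φ'(r) + λ·φ(r) = 0 on (0, δ), then λ = 1/ρ² + (πj/δ)² for some positive integer j. -/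
open MeasureTheory Real
open Set Filter Topology

private lemma constOn_of_hasDerivAt_zero {a b : ℝ} {f : ℝ → ℝ}
    (h : ∀ x ∈ Set.Ioo a b, HasDerivAt f 0 x) :
    ∀ x ∈ Set.Ioo a b, ∀ y ∈ Set.Ioo a b, f x = f y := by
  have key : ∀ x ∈ Set.Ioo a b, ∀ y ∈ Set.Ioo a b, x ≤ y → f y = f x := by
    intro x hx y hy hxy
    have hsub : Set.Icc x y ⊆ Set.Ioo a b := fun z hz =>
      ⟨lt_of_lt_of_le hx.1 hz.1, lt_of_le_of_lt hz.2 hy.2⟩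
    exact constant_of_has_deriv_right_zero
      (fun z hz => ((h z (hsub hz)).continuousAt).continuousWithinAt)
      (fun z hz => ((h z (hsub ⟨hz.1, hz.2.le⟩)).hasDerivWithinAt))
      y ⟨hxy, le_refl y⟩
  intro x hx y hy
  rcases le_total x y with hc | hc
  · exact (key x hx y hy hc).symm
  · exact key y hy x hx hc

private lemma ode_rigidity {δ : ℝ} (hδ : 0 < δ) {μ : ℝ} {u U1 : ℝ → ℝ}
    (hu : ∀ r ∈ Set.Ioo (0:ℝ) δ, HasDerivAt u (U1 r) r)
    (hU1 : ∀ r ∈ Set.Ioo (0:ℝ) δ, HasDerivAt U1 (-μ * u r) r)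
    (hcont : ContinuousOn u (Set.Icc 0 δ))
    (h0 : u 0 = 0) (hδ0 : u δ = 0)
    (hne : ∃ r ∈ Set.Ioo (0:ℝ) δ, u r ≠ 0) :
    ∃ j : ℕ, 0 < j ∧ μ = (π * j / δ) ^ 2 := by
  have hmem : δ/2 ∈ Set.Ioo (0:ℝ) δ := ⟨by linarith, by linarith⟩
  have hIsub : Set.Ioo (0:ℝ) δ ⊆ Set.Icc 0 δ := Set.Ioo_subset_Icc_self
  have hlim0 : Tendsto u (𝓝[Set.Ioo (0:ℝ) δ] 0) (𝓝 0) := by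
    have := (hcont 0 ⟨le_refl _, hδ.le⟩).mono hIsub
    rwa [ContinuousWithinAt, h0] at this
  have hlimδ : Tendsto u (𝓝[Set.Ioo (0:ℝ) δ] δ) (𝓝 0) := by
    have := (hcont δ ⟨hδ.le, le_refl _⟩).mono hIsub
    rwa [ContinuousWithinAt, hδ0] at this
  have hNB0 : (𝓝[Set.Ioo (0:ℝ) δ] (0:ℝ)).NeBot := left_nhdsWithin_Ioo_neBot hδ
  have hNBδ : (𝓝[Set.Ioo (0:ℝ) δ] δ).NeBot := right_nhdsWithin_Ioo_neBot hδ
  rcases lt_trichotomy μ 0 with hμ | hμ | hμ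
  · -- μ < 0 : contradiction
    exfalso
    set ν := Real.sqrt (-μ) with hν
    have hνpos : 0 < ν := Real.sqrt_pos.mpr (by linarith)
    have hνne : ν ≠ 0 := ne_of_gt hνpos
    have hν2 : ν ^ 2 = -μ := Real.sq_sqrt (by linarith)
    set v : ℝ → ℝ := fun r => u r * Real.cosh (ν*r) - ν⁻¹ * U1 r * Real.sinh (ν*r) with hvdef
    set w : ℝ → ℝ := fun r => ν⁻¹ * U1 r * Real.cosh (ν*r) - u r * Real.sinh (ν*r) with hwdef
    have hcoshD : ∀ r : ℝ, HasDerivAt (fun x => Real.cosh (ν*x)) (Real.sinh (ν*r) * ν) r :=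
      fun r => (Real.hasDerivAt_cosh (ν*r)).comp r ((hasDerivAt_id r).const_mul ν) |>.congr_deriv (by ring)
    have hsinhD : ∀ r : ℝ, HasDerivAt (fun x => Real.sinh (ν*x)) (Real.cosh (ν*r) * ν) r :=
      fun r => (Real.hasDerivAt_sinh (ν*r)).comp r ((hasDerivAt_id r).const_mul ν) |>.congr_deriv (by ring)
    have hv : ∀ r ∈ Set.Ioo (0:ℝ) δ, HasDerivAt v 0 r := by
      intro r hr
      have h1 := ((hu r hr).mul (hcoshD r)).sub
        ((((hU1 r hr).const_mul ν⁻¹)).mul (hsinhD r))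
      refine h1.congr_deriv ?_
      field_simp
      linear_combination (u r * Real.sinh (ν*r)) * hν2
    have hw : ∀ r ∈ Set.Ioo (0:ℝ) δ, HasDerivAt w 0 r := by
      intro r hr
      have h1 := ((((hU1 r hr).const_mul ν⁻¹)).mul (hcoshD r)).sub
        ((hu r hr).mul (hsinhD r))
      refine h1.congr_deriv ?_
      field_simp
      linear_combination (-(u r * Real.cosh (ν*r))) * hν2
    set b := v (δ/2) with hb
    set a := w (δ/2) with ha
    have hform : ∀ r ∈ Set.Ioo (0:ℝ) δ, u r = b * Real.cosh (ν*r) + a * Real.sinh (ν*r) := by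
      intro r hr
      have hvr : u r * Real.cosh (ν*r) - ν⁻¹ * U1 r * Real.sinh (ν*r) = b :=
        constOn_of_hasDerivAt_zero hv r hr (δ/2) hmem
      have hwr : ν⁻¹ * U1 r * Real.cosh (ν*r) - u r * Real.sinh (ν*r) = a :=
        constOn_of_hasDerivAt_zero hw r hr (δ/2) hmem
      have hcs := Real.cosh_sq_sub_sinh_sq (ν*r)
      linear_combination Real.cosh (ν*r) * hvr + Real.sinh (ν*r) * hwr - u r * hcs
    have hforma : ∀ x : ℝ, Tendsto (fun r => b * Real.cosh (ν*r) + a * Real.sinh (ν*r))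
        (𝓝[Set.Ioo (0:ℝ) δ] x) (𝓝 (b * Real.cosh (ν*x) + a * Real.sinh (ν*x))) := by
      intro x
      have hc : Continuous (fun r : ℝ => b * Real.cosh (ν*r) + a * Real.sinh (ν*r)) := by fun_prop
      exact (hc.tendsto x).mono_left nhdsWithin_le_nhds
    have hev0 : u =ᶠ[𝓝[Set.Ioo (0:ℝ) δ] (0:ℝ)] fun r => b * Real.cosh (ν*r) + a * Real.sinh (ν*r) :=
      eventually_mem_nhdsWithin.mono (fun x hx => hform x hx)
    have hevδ : u =ᶠ[𝓝[Set.Ioo (0:ℝ) δ] δ] fun r => b * Real.cosh (ν*r) + a * Real.sinh (ν*r) :=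
      eventually_mem_nhdsWithin.mono (fun x hx => hform x hx)
    have hb0 : b = 0 := by
      have h1 := tendsto_nhds_unique (hlim0.congr' hev0) (hforma 0)
      simpa using h1.symm
    have ha0 : a = 0 := by
      have h1 := tendsto_nhds_unique (hlimδ.congr' hevδ) (hforma δ)
      have hsδ : Real.sinh (ν*δ) ≠ 0 := by
        rw [Real.sinh_ne_zero]; positivity
      rw [hb0] at h1
      simp only [zero_mul, zero_add] at h1
      rcases mul_eq_zero.mp h1.symm with h | h
      · exact h
      · exact absurd h hsδ
    rcases hne with ⟨r, hr, hur⟩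
    exact hur (by rw [hform r hr, hb0, ha0]; ring)
  · -- μ = 0 : contradiction
    exfalso
    subst hμ
    have hU1' : ∀ r ∈ Set.Ioo (0:ℝ) δ, HasDerivAt U1 0 r := by
      intro r hr; simpa using hU1 r hr
    set c := U1 (δ/2) with hc
    have hU1c : ∀ r ∈ Set.Ioo (0:ℝ) δ, U1 r = c :=
      fun r hr => constOn_of_hasDerivAt_zero hU1' r hr (δ/2) hmem
    set g : ℝ → ℝ := fun r => u r - c * r with hgdef
    have hg : ∀ r ∈ Set.Ioo (0:ℝ) δ, HasDerivAt g 0 r := by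
      intro r hr
      have h1 := (hu r hr).sub ((hasDerivAt_id r).const_mul c)
      refine h1.congr_deriv ?_
      rw [hU1c r hr]; ring
    set d := g (δ/2) with hd
    have hform : ∀ r ∈ Set.Ioo (0:ℝ) δ, u r = c * r + d := by
      intro r hr
      have := constOn_of_hasDerivAt_zero hg r hr (δ/2) hmem
      have hd2 : d = u (δ/2) - c * (δ/2) := hd.trans rfl
      simp only [hgdef] at this
      linear_combination this - hd2
    have hforma : ∀ x : ℝ, Tendsto (fun r => c * r + d)
        (𝓝[Set.Ioo (0:ℝ) δ] x) (𝓝 (c * x + d)) :=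
      fun x => (((continuous_const.mul continuous_id).add continuous_const).tendsto x).mono_left
        nhdsWithin_le_nhds
    have hev0 : u =ᶠ[𝓝[Set.Ioo (0:ℝ) δ] (0:ℝ)] fun r => c * r + d :=
      eventually_mem_nhdsWithin.mono (fun x hx => hform x hx)
    have hevδ : u =ᶠ[𝓝[Set.Ioo (0:ℝ) δ] δ] fun r => c * r + d :=
      eventually_mem_nhdsWithin.mono (fun x hx => hform x hx)
    have hd0 : d = 0 := by
      have h1 := tendsto_nhds_unique (hlim0.congr' hev0) (hforma 0)
      simpa using h1.symm
    have hc0 : c = 0 := by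
      have h1 := tendsto_nhds_unique (hlimδ.congr' hevδ) (hforma δ)
      rw [hd0] at h1
      have : c * δ = 0 := by linarith [h1.symm]
      rcases mul_eq_zero.mp this with h | h
      · exact h
      · exact absurd h (ne_of_gt hδ)
    rcases hne with ⟨r, hr, hur⟩
    exact hur (by rw [hform r hr, hc0, hd0]; ring)
  · -- μ > 0
    set ω := Real.sqrt μ with hω
    have hωpos : 0 < ω := Real.sqrt_pos.mpr hμ
    have hωne : ω ≠ 0 := ne_of_gt hωpos
    have hω2 : ω ^ 2 = μ := Real.sq_sqrt hμ.le
    set v : ℝ → ℝ := fun r => u r * Real.cos (ω*r) - ω⁻¹ * U1 r * Real.sin (ω*r) with hvdef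
    set w : ℝ → ℝ := fun r => u r * Real.sin (ω*r) + ω⁻¹ * U1 r * Real.cos (ω*r) with hwdef
    have hcosD : ∀ r : ℝ, HasDerivAt (fun x => Real.cos (ω*x)) (-(Real.sin (ω*r)) * ω) r :=
      fun r => (Real.hasDerivAt_cos (ω*r)).comp r ((hasDerivAt_id r).const_mul ω) |>.congr_deriv (by ring)
    have hsinD : ∀ r : ℝ, HasDerivAt (fun x => Real.sin (ω*x)) (Real.cos (ω*r) * ω) r :=
      fun r => (Real.hasDerivAt_sin (ω*r)).comp r ((hasDerivAt_id r).const_mul ω) |>.congr_deriv (by ring)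
    have hv : ∀ r ∈ Set.Ioo (0:ℝ) δ, HasDerivAt v 0 r := by
      intro r hr
      have h1 := ((hu r hr).mul (hcosD r)).sub
        ((((hU1 r hr).const_mul ω⁻¹)).mul (hsinD r))
      refine h1.congr_deriv ?_
      field_simp
      linear_combination (-(u r * Real.sin (ω*r))) * hω2
    have hw : ∀ r ∈ Set.Ioo (0:ℝ) δ, HasDerivAt w 0 r := by
      intro r hr
      have h1 := ((hu r hr).mul (hsinD r)).add
        ((((hU1 r hr).const_mul ω⁻¹)).mul (hcosD r))
      refine h1.congr_deriv ?_
      field_simp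
      linear_combination (u r * Real.cos (ω*r)) * hω2
    set b := v (δ/2) with hb
    set a := w (δ/2) with ha
    have hform : ∀ r ∈ Set.Ioo (0:ℝ) δ, u r = a * Real.sin (ω*r) + b * Real.cos (ω*r) := by
      intro r hr
      have hvr : u r * Real.cos (ω*r) - ω⁻¹ * U1 r * Real.sin (ω*r) = b :=
        constOn_of_hasDerivAt_zero hv r hr (δ/2) hmem
      have hwr : u r * Real.sin (ω*r) + ω⁻¹ * U1 r * Real.cos (ω*r) = a :=
        constOn_of_hasDerivAt_zero hw r hr (δ/2) hmem
      have hsc := Real.sin_sq_add_cos_sq (ω*r)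
      linear_combination Real.cos (ω*r) * hvr + Real.sin (ω*r) * hwr - u r * hsc
    have hforma : ∀ x : ℝ, Tendsto (fun r => a * Real.sin (ω*r) + b * Real.cos (ω*r))
        (𝓝[Set.Ioo (0:ℝ) δ] x) (𝓝 (a * Real.sin (ω*x) + b * Real.cos (ω*x))) := by
      intro x
      have hc : Continuous (fun r : ℝ => a * Real.sin (ω*r) + b * Real.cos (ω*r)) := by fun_prop
      exact (hc.tendsto x).mono_left nhdsWithin_le_nhds
    have hev0 : u =ᶠ[𝓝[Set.Ioo (0:ℝ) δ] (0:ℝ)] fun r => a * Real.sin (ω*r) + b * Real.cos (ω*r) :=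
      eventually_mem_nhdsWithin.mono (fun x hx => hform x hx)
    have hevδ : u =ᶠ[𝓝[Set.Ioo (0:ℝ) δ] δ] fun r => a * Real.sin (ω*r) + b * Real.cos (ω*r) :=
      eventually_mem_nhdsWithin.mono (fun x hx => hform x hx)
    have hb0 : b = 0 := by
      have h1 := tendsto_nhds_unique (hlim0.congr' hev0) (hforma 0)
      simpa using h1.symm
    have haδ : a * Real.sin (ω*δ) = 0 := by
      have h1 := tendsto_nhds_unique (hlimδ.congr' hevδ) (hforma δ)
      rw [hb0] at h1
      simpa using h1.symm
    have hane : a ≠ 0 := by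
      intro h
      rcases hne with ⟨r, hr, hur⟩
      exact hur (by rw [hform r hr, h, hb0]; ring)
    have hsinδ : Real.sin (ω*δ) = 0 := by
      rcases mul_eq_zero.mp haδ with h | h
      · exact absurd h hane
      · exact h
    rcases Real.sin_eq_zero_iff.mp hsinδ with ⟨n, hn⟩
    have hnpos : 0 < n := by
      have h1 : (0:ℝ) < n * π := hn ▸ mul_pos hωpos hδ
      have h2 : (0:ℝ) < n := by nlinarith [Real.pi_pos]
      exact_mod_cast h2
    refine ⟨n.toNat, by omega, ?_⟩
    have hcast : ((n.toNat : ℕ) : ℝ) = (n : ℝ) := by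
      norm_cast
      omega
    have hωeq : ω = π * n / δ := by
      field_simp at hn ⊢
      linarith [hn]
    rw [← hω2, hωeq, hcast]


/-- Explicit radial Dirichlet eigenfunctions in hyperbolic 3-space (`k = 2`):
(i) for every positive integer `j`, `λ_j = 1/ρ² + (πj/δ)²` and
`φ_j(r) = δ sin(πjr/δ)/(πjρ sinh(r/ρ))` (with `φ_j(0) = 1`) is a continuous solution on
`[0, δ]` of the radial eigenvalue equation vanishing at `δ`;
(ii) conversely, every real eigenvalue of this radial Dirichlet problem is of this form. -/
theorem explicit_dirichlet_eigenfunctions_dim_three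
    (ρ δ : ℝ) (hρ : 0 < ρ) (hδ : 0 < δ) :
    (∀ j : ℕ, 0 < j →
      ContinuousOn
          (fun r : ℝ => if r = 0 then 1
            else δ * Real.sin (π * j * r / δ) / (π * j * ρ * Real.sinh (r / ρ)))
          (Set.Icc 0 δ)
        ∧ (fun r : ℝ => if r = 0 then 1
            else δ * Real.sin (π * j * r / δ) / (π * j * ρ * Real.sinh (r / ρ))) δ = 0
        ∧ ∀ r ∈ Set.Ioo (0 : ℝ) δ,
            deriv (deriv (fun r : ℝ => if r = 0 then 1
              else δ * Real.sin (π * j * r / δ) / (π * j * ρ * Real.sinh (r / ρ)))) r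
              + (2 / ρ) * (Real.cosh (r / ρ) / Real.sinh (r / ρ))
                * deriv (fun r : ℝ => if r = 0 then 1
                    else δ * Real.sin (π * j * r / δ) / (π * j * ρ * Real.sinh (r / ρ))) r
              + (1 / ρ ^ 2 + (π * j / δ) ^ 2)
                * (if r = 0 then 1
                    else δ * Real.sin (π * j * r / δ) / (π * j * ρ * Real.sinh (r / ρ))) = 0)
    ∧ (∀ (lam : ℝ) (φ : ℝ → ℝ),
        ContinuousOn φ (Set.Icc 0 δ) →
        (∀ r ∈ Set.Ioo (0 : ℝ) δ,
          DifferentiableAt ℝ φ r ∧ DifferentiableAt ℝ (deriv φ) r) →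
        φ 0 = 1 → φ δ = 0 →
        (∀ r ∈ Set.Ioo (0 : ℝ) δ,
          deriv (deriv φ) r
            + (2 / ρ) * (Real.cosh (r / ρ) / Real.sinh (r / ρ)) * deriv φ r
            + lam * φ r = 0) →
        ∃ j : ℕ, 0 < j ∧ lam = 1 / ρ ^ 2 + (π * j / δ) ^ 2) := by
  have hρne : ρ ≠ 0 := ne_of_gt hρ
  have hδne : δ ≠ 0 := ne_of_gt hδ
  constructor
  · intro j hj
    have hjR : (0:ℝ) < (j:ℝ) := by exact_mod_cast hj
    have hK : (0:ℝ) < π * j := mul_pos Real.pi_pos hjR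
    have hKne : π * (j:ℝ) ≠ 0 := ne_of_gt hK
    set Φ : ℝ → ℝ := fun r : ℝ => if r = 0 then 1
      else δ * Real.sin (π * j * r / δ) / (π * j * ρ * Real.sinh (r / ρ)) with hΦdef
    set F : ℝ → ℝ := fun r : ℝ =>
      δ * Real.sin (π * j * r / δ) / (π * j * ρ * Real.sinh (r / ρ)) with hFdef
    set F1 : ℝ → ℝ := fun x =>
      (π * j * Real.cos (π * j * x / δ) * Real.sinh (x / ρ)
        - δ / ρ * Real.sin (π * j * x / δ) * Real.cosh (x / ρ))
      / (π * j * ρ * Real.sinh (x / ρ) ^ 2) with hF1def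
    have hΦF : ∀ x : ℝ, x ≠ 0 → Φ x = F x := by
      intro x hx
      simp only [hΦdef, hFdef, if_neg hx]
    have hsne : ∀ x : ℝ, x ≠ 0 → Real.sinh (x / ρ) ≠ 0 := by
      intro x hx
      rw [Real.sinh_ne_zero]
      exact div_ne_zero hx hρne
    have hinnerδ : ∀ x : ℝ, HasDerivAt (fun r : ℝ => π * j * r / δ) (π * j / δ) x := by
      intro x
      exact (((hasDerivAt_id x).const_mul (π * (j:ℝ))).div_const δ).congr_deriv (by ring)
    have hinnerρ : ∀ x : ℝ, HasDerivAt (fun r : ℝ => r / ρ) (1 / ρ) x := by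
      intro x
      exact ((hasDerivAt_id x).div_const ρ).congr_deriv (by ring)
    -- derivative of F away from 0
    have hFD : ∀ x : ℝ, x ≠ 0 → HasDerivAt F (F1 x) x := by
      intro x hx
      have hN : HasDerivAt (fun r : ℝ => δ * Real.sin (π * j * r / δ))
          (δ * (Real.cos (π * j * x / δ) * (π * j / δ))) x := (hinnerδ x).sin.const_mul δ
      have hD : HasDerivAt (fun r : ℝ => π * j * ρ * Real.sinh (r / ρ))
          (π * j * ρ * (Real.cosh (x / ρ) * (1 / ρ))) x := (hinnerρ x).sinh.const_mul (π * j * ρ)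
      have hDne : π * j * ρ * Real.sinh (x / ρ) ≠ 0 :=
        mul_ne_zero (mul_ne_zero hKne hρne) (hsne x hx)
      refine (hN.div hD hDne).congr_deriv ?_
      rw [hF1def]
      field_simp
    have hd1 : ∀ x : ℝ, 0 < x → deriv Φ x = F1 x := by
      intro x hx
      have hev : Φ =ᶠ[𝓝 x] F := by
        filter_upwards [Ioi_mem_nhds hx] with y hy
        exact hΦF y (ne_of_gt hy)
      rw [hev.deriv_eq]
      exact (hFD x (ne_of_gt hx)).deriv
    refine ⟨?_, ?_, ?_⟩
    · -- continuity
      intro x hx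
      by_cases hx0 : x = 0
      · subst hx0
        rw [← continuousWithinAt_diff_self]
        have hΦ0 : Φ 0 = 1 := by simp [hΦdef]
        rw [ContinuousWithinAt, hΦ0]
        -- limit of F at 0 is 1
        have hs1 : Tendsto (fun y : ℝ => Real.sin (π * j * y / δ) / y) (𝓝[≠] (0:ℝ))
            (𝓝 (π * j / δ)) := by
          have h := (hinnerδ (0:ℝ)).sin
          have h' : HasDerivAt (fun r : ℝ => Real.sin (π * j * r / δ)) (π * j / δ) 0 :=
            h.congr_deriv (by simp)
          rw [hasDerivAt_iff_tendsto_slope] at h'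
          refine h'.congr' ?_
          filter_upwards [self_mem_nhdsWithin] with y hy
          have hy0 : y ≠ 0 := hy
          simp [slope_def_field, div_eq_div_iff]
        have hs2 : Tendsto (fun y : ℝ => Real.sinh (y / ρ) / y) (𝓝[≠] (0:ℝ))
            (𝓝 (1 / ρ)) := by
          have h' : HasDerivAt (fun r : ℝ => Real.sinh (r / ρ)) (1 / ρ) 0 :=
            (hinnerρ 0).sinh.congr_deriv (by simp)
          rw [hasDerivAt_iff_tendsto_slope] at h'
          refine h'.congr' ?_
          filter_upwards [self_mem_nhdsWithin] with y hy
          simp [slope_def_field]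
        have hlimF : Tendsto F (𝓝[≠] (0:ℝ)) (𝓝 1) := by
          have hnum : Tendsto (fun y : ℝ => δ * (Real.sin (π * j * y / δ) / y)) (𝓝[≠] (0:ℝ))
              (𝓝 (δ * (π * j / δ))) := hs1.const_mul δ
          have hden : Tendsto (fun y : ℝ => π * j * ρ * (Real.sinh (y / ρ) / y)) (𝓝[≠] (0:ℝ))
              (𝓝 (π * j * ρ * (1 / ρ))) := hs2.const_mul (π * j * ρ)
          have hdenne : π * j * ρ * (1 / ρ) ≠ 0 := by
            field_simp
            exact hKne
          have h := hnum.div hden hdenne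
          have hval : δ * (π * j / δ) / (π * j * ρ * (1 / ρ)) = 1 := by
            field_simp
          rw [hval] at h
          refine h.congr' ?_
          filter_upwards [self_mem_nhdsWithin] with y hy
          have hy0 : y ≠ 0 := hy
          have hsy := hsne y hy0
          simp only [Pi.div_apply, hFdef]
          field_simp
        have hmono : 𝓝[Set.Icc (0:ℝ) δ \ {0}] (0:ℝ) ≤ 𝓝[≠] (0:ℝ) :=
          nhdsWithin_mono _ (fun y hy => hy.2)
        refine (hlimF.mono_left hmono).congr' ?_
        filter_upwards [self_mem_nhdsWithin] with y hy
        exact (hΦF y (by simpa using hy.2)).symm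
      · -- x ≠ 0 : continuity at x
        have hxpos : 0 < x := lt_of_le_of_ne hx.1 (Ne.symm hx0)
        have hev : F =ᶠ[𝓝 x] Φ := by
          filter_upwards [Ioi_mem_nhds hxpos] with y hy
          exact (hΦF y (ne_of_gt hy)).symm
        have hFc : ContinuousAt F x := (hFD x hx0).continuousAt
        exact (hFc.congr hev).continuousWithinAt
    · -- boundary value
      have harg : π * (j:ℝ) * δ / δ = j * π := by
        field_simp
      simp only [hΦdef, if_neg hδne, harg, Real.sin_nat_mul_pi, mul_zero, zero_div]
    · -- ODE
      intro r hr
      have hrpos := hr.1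
      have hrne : r ≠ 0 := ne_of_gt hrpos
      have hsner := hsne r hrne
      -- second derivative
      have hG : HasDerivAt (fun x : ℝ => π * j * Real.cos (π * j * x / δ) * Real.sinh (x / ρ)
          - δ / ρ * Real.sin (π * j * x / δ) * Real.cosh (x / ρ))
          ((π * j * (-Real.sin (π * j * r / δ) * (π * j / δ))) * Real.sinh (r / ρ)
            + π * j * Real.cos (π * j * r / δ) * (Real.cosh (r / ρ) * (1 / ρ))
            - ((δ / ρ * (Real.cos (π * j * r / δ) * (π * j / δ))) * Real.cosh (r / ρ)
              + δ / ρ * Real.sin (π * j * r / δ) * (Real.sinh (r / ρ) * (1 / ρ)))) r := by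
        exact (((hinnerδ r).cos.const_mul (π * (j:ℝ))).mul (hinnerρ r).sinh).sub
          (((hinnerδ r).sin.const_mul (δ / ρ)).mul (hinnerρ r).cosh)
      have hH : HasDerivAt (fun x : ℝ => π * j * ρ * Real.sinh (x / ρ) ^ 2)
          (π * j * ρ * ((2 : ℕ) * Real.sinh (r / ρ) ^ 1 * (Real.cosh (r / ρ) * (1 / ρ)))) r := by
        exact ((hinnerρ r).sinh.pow 2).const_mul (π * j * ρ)
      have hHne : π * j * ρ * Real.sinh (r / ρ) ^ 2 ≠ 0 :=
        mul_ne_zero (mul_ne_zero hKne hρne) (pow_ne_zero 2 hsner)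
      have hF1D := hG.div hH hHne
      have hev2 : deriv Φ =ᶠ[𝓝 r] F1 := by
        filter_upwards [Ioi_mem_nhds hrpos] with y hy
        exact hd1 y hy
      have hd2 : deriv (deriv Φ) r = deriv F1 r := hev2.deriv_eq
      rw [hd2, (show deriv F1 r = _ from hF1D.deriv), hd1 r hrpos]
      simp only [if_neg hrne, hF1def]
      push_cast
      field_simp
      ring
  · intro lam φ hφcont hφdiff hφ0 hφδ hode
    set u : ℝ → ℝ := fun r => Real.sinh (r/ρ) * φ r with hudef
    set U1 : ℝ → ℝ := fun r => Real.cosh (r/ρ) * (1/ρ) * φ r + Real.sinh (r/ρ) * deriv φ r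
      with hU1def
    have hinner : ∀ r : ℝ, HasDerivAt (fun x : ℝ => x/ρ) (1/ρ) r := by
      intro r
      exact ((hasDerivAt_id r).div_const ρ).congr_deriv (by ring)
    have hsinhD : ∀ r : ℝ, HasDerivAt (fun x => Real.sinh (x/ρ)) (Real.cosh (r/ρ) * (1/ρ)) r :=
      fun r => (hinner r).sinh
    have hcoshD : ∀ r : ℝ, HasDerivAt (fun x => Real.cosh (x/ρ)) (Real.sinh (r/ρ) * (1/ρ)) r :=
      fun r => (hinner r).cosh
    have hu : ∀ r ∈ Set.Ioo (0:ℝ) δ, HasDerivAt u (U1 r) r := by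
      intro r hr
      exact (hsinhD r).mul (hφdiff r hr).1.hasDerivAt
    have hU1' : ∀ r ∈ Set.Ioo (0:ℝ) δ, HasDerivAt U1 (-(lam - 1/ρ^2) * u r) r := by
      intro r hr
      have hsne : Real.sinh (r/ρ) ≠ 0 := by
        rw [Real.sinh_ne_zero]
        exact ne_of_gt (div_pos hr.1 hρ)
      have h1 := (((hcoshD r).mul_const (1/ρ)).mul (hφdiff r hr).1.hasDerivAt)
      have h2 := (hsinhD r).mul (hφdiff r hr).2.hasDerivAt
      refine (h1.add h2).congr_deriv ?_
      have he := hode r hr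
      field_simp at he ⊢
      linear_combination ρ * he
    have hcontu : ContinuousOn u (Set.Icc 0 δ) :=
      (Continuous.continuousOn (by fun_prop)).mul hφcont
    have hu0 : u 0 = 0 := by simp [hudef]
    have huδ : u δ = 0 := by simp [hudef, hφδ]
    have hne : ∃ r ∈ Set.Ioo (0:ℝ) δ, u r ≠ 0 := by
      have h01 : Tendsto φ (𝓝[Set.Icc 0 δ] 0) (𝓝 1) := by
        have := hφcont 0 ⟨le_refl _, hδ.le⟩
        rwa [ContinuousWithinAt, hφ0] at this
      have hev : ∀ᶠ x in 𝓝[Set.Ioo (0:ℝ) δ] 0, 0 < φ x :=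
        (h01.mono_left (nhdsWithin_mono _ Set.Ioo_subset_Icc_self)).eventually
          (eventually_gt_nhds zero_lt_one)
      have hNB : (𝓝[Set.Ioo (0:ℝ) δ] (0:ℝ)).NeBot := left_nhdsWithin_Ioo_neBot hδ
      rcases (hev.and eventually_mem_nhdsWithin).exists with ⟨r, hφr, hr⟩
      refine ⟨r, hr, ne_of_gt ?_⟩
      have : 0 < Real.sinh (r/ρ) := by
        rw [Real.sinh_pos_iff]
        exact div_pos hr.1 hρ
      exact mul_pos this hφr
    obtain ⟨j, hj, hμ⟩ := ode_rigidity hδ hu hU1' hcontu hu0 huδ hne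
    exact ⟨j, hj, by linarith [hμ]⟩
end
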